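/- arXiv:2202.10078 — 8 statements merged into one kernel-verified Lean document; each statement's English description precedes it below -/
import Mathlib

section
/- Under Assumptions (A1), the normalizing random variable C_n converges in mean square to 1, i.e. E[|C_n − 1|²] → 0 as n → ∞. -/
open MeasureTheory ProbabilityTheory Filter Topology

/-- Chebyshev-type single-term bound for a discrete kernel. -/
lemma aux_cheb {Kf : ℝ → ℝ} {E V d : ℝ} (hK0 : ∀ z, 0 ≤ Kf z)
    (hV : HasSum (fun z => Kf z * (z - E) ^ 2) V) (z : ℝ) (hd : 0 < d)
    (hzd : d ≤ |z - E|) : Kf z ≤ V / d ^ 2 := by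
  have h1 : Kf z * (z - E) ^ 2 ≤ V :=
    le_hasSum hV z (fun j _ => mul_nonneg (hK0 j) (sq_nonneg _))
  have h2 : d ^ 2 ≤ (z - E) ^ 2 := by
    nlinarith [sq_abs (z - E), abs_nonneg (z - E)]
  rw [le_div_iff₀ (by positivity)]
  nlinarith [mul_le_mul_of_nonneg_left h2 (hK0 z)]

/-- Summing an inverse-square-decaying bound over an `α`-separated set. -/
lemma aux_sep_sum {T : Set ℝ} {α : ℝ} (hα : 0 < α)
    (hsep : ∀ y ∈ T, ∀ y' ∈ T, y ≠ y' → α ≤ |y - y'|)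
    (z : ℝ) (g : T → ℝ) (hg0 : ∀ y, 0 ≤ g y)
    (hgz : ∀ y : T, (y : ℝ) = z → g y = 0)
    (c : ℝ) (hc : 0 ≤ c)
    (hgb : ∀ y : T, (y : ℝ) ≠ z → g y ≤ c / (z - (y : ℝ)) ^ 2)
    (hfar : ∀ y : T, (y : ℝ) ≠ z → α ≤ |(y : ℝ) - z|) :
    Summable g ∧ ∑' y, g y ≤ 9 * c / (4 * α ^ 2) * ∑' k : ℤ, 1 / (k : ℝ) ^ 2 := by
  classical
  set W : ℤ → ℝ := fun k => 9 * c / (4 * α ^ 2) * (1 / (k : ℝ) ^ 2) with hWdef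
  have hWs : Summable W := (Real.summable_one_div_int_pow.2 one_lt_two).mul_left _
  have hW0 : ∀ k, 0 ≤ W k := fun k =>
    mul_nonneg (div_nonneg (by linarith) (by positivity)) (by positivity)
  have hφinj : Function.Injective (fun y : T => round (((y : ℝ) - z) / α)) := by
    intro y y' hyy'
    by_contra hne
    have hcoe : (y : ℝ) ≠ (y' : ℝ) := fun e => hne (Subtype.ext e)
    have hs := hsep _ y.2 _ y'.2 hcoe
    have hr : round (((y : ℝ) - z) / α) = round (((y' : ℝ) - z) / α) := hyy'
    set a := ((y : ℝ) - z) / α with ha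
    set b := ((y' : ℝ) - z) / α with hb
    have h1 : (round a : ℝ) ≤ a + 1 / 2 := by
      rw [round_eq]; exact_mod_cast Int.floor_le _
    have h1' : a + 1 / 2 < (round a : ℝ) + 1 := by
      rw [round_eq]; push_cast; exact Int.lt_floor_add_one _
    have h2 : (round b : ℝ) ≤ b + 1 / 2 := by
      rw [round_eq]; exact_mod_cast Int.floor_le _
    have h2' : b + 1 / 2 < (round b : ℝ) + 1 := by
      rw [round_eq]; push_cast; exact Int.lt_floor_add_one _
    have hreq : (round a : ℝ) = (round b : ℝ) := by exact_mod_cast hr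
    have hab : |a - b| < 1 := by
      rw [abs_sub_lt_iff]; constructor <;> linarith
    rw [ha, hb, div_sub_div_same, sub_sub_sub_cancel_right, abs_div, abs_of_pos hα,
      div_lt_one hα] at hab
    linarith
  have hterm : ∀ y : T, g y ≤ W ((fun y : T => round (((y : ℝ) - z) / α)) y) := by
    intro y
    by_cases hy : (y : ℝ) = z
    · rw [hgz y hy]; exact hW0 _
    · simp only
      set a := ((y : ℝ) - z) / α with ha
      have haα : 1 ≤ |a| := by
        rw [ha, abs_div, abs_of_pos hα, le_div_iff₀ hα, one_mul]
        exact hfar y hy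
      have hk : |a - round a| ≤ 1 / 2 := abs_sub_round a
      have hk1 : 1 / 2 ≤ |(round a : ℝ)| := by
        have := abs_sub_abs_le_abs_sub a (round a : ℝ)
        linarith
      have hk2' : |(round a : ℝ)| ≤ 3 / 2 * |a| := by
        have h := abs_sub_abs_le_abs_sub (round a : ℝ) a
        rw [abs_sub_comm] at h
        linarith
      have hk2 : ((round a : ℝ)) ^ 2 ≤ 9 / 4 * a ^ 2 := by
        nlinarith [sq_abs a, sq_abs ((round a : ℝ)), abs_nonneg a,
          abs_nonneg ((round a : ℝ))]
      have hkpos : 0 < ((round a : ℝ)) ^ 2 := by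
        nlinarith [sq_abs ((round a : ℝ))]
      have ha2pos : 0 < a ^ 2 := by nlinarith [sq_abs a]
      have hzy : (z - (y : ℝ)) ^ 2 = α ^ 2 * a ^ 2 := by
        rw [ha]; field_simp; ring
      calc g y ≤ c / (z - (y : ℝ)) ^ 2 := hgb y hy
        _ = c / (α ^ 2 * a ^ 2) := by rw [hzy]
        _ ≤ 9 * c / (4 * α ^ 2) * (1 / ((round a : ℝ)) ^ 2) := by
            rw [show 9 * c / (4 * α ^ 2) * (1 / ((round a : ℝ)) ^ 2)
                = 9 * c / (4 * α ^ 2 * ((round a : ℝ)) ^ 2) by ring]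
            rw [div_le_div_iff₀ (by positivity) (by positivity)]
            nlinarith [mul_le_mul_of_nonneg_left hk2
              (mul_nonneg (mul_nonneg (by norm_num : (0:ℝ) ≤ 4) (sq_nonneg α)) hc)]
        _ = W (round a) := rfl
  have hgsum : Summable g :=
    Summable.of_nonneg_of_le hg0 hterm (hWs.comp_injective hφinj)
  refine ⟨hgsum, ?_⟩
  calc ∑' y, g y ≤ ∑' k, W k :=
        Summable.tsum_le_tsum_of_inj _ hφinj (fun k _ => hW0 k) hterm hgsum hWs
    _ = 9 * c / (4 * α ^ 2) * ∑' k : ℤ, 1 / (k : ℝ) ^ 2 := tsum_mul_left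
/-- The key deterministic bound: the total kernel mass at a point `z ∈ T`,
summed over centers `y ∈ T`, is uniformly close to `1`. -/
lemma aux_key {T : Set ℝ} {S : ℝ → Set ℝ} {K : ℝ → ℝ → ℝ} {E V : ℝ → ℝ} {α ε : ℝ}
    (hα : 0 < α) (hε : 0 ≤ ε)
    (hK0 : ∀ x ∈ T, ∀ z, 0 ≤ K x z)
    (hKS : ∀ x ∈ T, ∀ z ∉ S x, K x z = 0)
    (hK1 : ∀ x ∈ T, HasSum (K x) 1)
    (hsep : ∀ x ∈ T, ∀ z ∈ (T ∪ S x) \ {x}, α ≤ |z - x|)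
    (hV : ∀ x ∈ T, HasSum (fun z => K x z * (z - E x) ^ 2) (V x))
    (hE : ∀ x ∈ T, |E x - x| ≤ α / 2)
    (hVb : ∀ x ∈ T, V x ≤ ε)
    {z : ℝ} (hzT : z ∈ T) :
    Summable (fun y : T => K (y : ℝ) z) ∧
      |(∑' y : T, K (y : ℝ) z) - 1| ≤
        (4 / α ^ 2 + 9 / α ^ 2 * ∑' k : ℤ, 1 / (k : ℝ) ^ 2) * ε := by
  classical
  have hsep2 : ∀ y ∈ T, ∀ y' ∈ T, y ≠ y' → α ≤ |y - y'| := by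
    intro y hy y' hy' hne
    exact hsep y' hy' y ⟨Or.inl hy, hne⟩
  -- off-diagonal part
  set g : T → ℝ := fun y => if (y : ℝ) = z then 0 else K (y : ℝ) z with hgdef
  have hg0 : ∀ y, 0 ≤ g y := by
    intro y; by_cases hy : (y : ℝ) = z <;> simp [hgdef, hy, hK0 _ y.2 z]
  have hgz : ∀ y : T, (y : ℝ) = z → g y = 0 := by
    intro y hy; simp [hgdef, hy]
  have hfar : ∀ y : T, (y : ℝ) ≠ z → α ≤ |(y : ℝ) - z| := by
    intro y hy
    exact hsep z hzT (y : ℝ) ⟨Or.inl y.2, hy⟩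
  have hgb : ∀ y : T, (y : ℝ) ≠ z → g y ≤ 4 * ε / (z - (y : ℝ)) ^ 2 := by
    intro y hy
    have hyz : α ≤ |z - (y : ℝ)| := by rw [abs_sub_comm]; exact hfar y hy
    have hd : 0 < |z - (y : ℝ)| / 2 := by linarith
    have hdE : |z - (y : ℝ)| / 2 ≤ |z - E (y : ℝ)| := by
      have h := abs_add_le (z - E (y : ℝ)) (E (y : ℝ) - (y : ℝ))
      have he : z - E (y : ℝ) + (E (y : ℝ) - (y : ℝ)) = z - (y : ℝ) := by ring
      rw [he] at h
      linarith [hE (y : ℝ) y.2]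
    have hcb := aux_cheb (hK0 (y : ℝ) y.2) (hV (y : ℝ) y.2) z hd hdE
    have hzy2 : 0 < (z - (y : ℝ)) ^ 2 := by nlinarith [sq_abs (z - (y : ℝ))]
    have hgy : g y = K (y : ℝ) z := by simp [hgdef, hy]
    rw [hgy]
    calc K (y : ℝ) z ≤ V (y : ℝ) / (|z - (y : ℝ)| / 2) ^ 2 := hcb
      _ = 4 * V (y : ℝ) / (z - (y : ℝ)) ^ 2 := by
          rw [div_pow, sq_abs, div_div_eq_mul_div]
          ring_nf
      _ ≤ 4 * ε / (z - (y : ℝ)) ^ 2 := by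
          gcongr
          exact hVb _ y.2
  obtain ⟨hgsum, hgle⟩ := aux_sep_sum hα hsep2 z g hg0 hgz (4 * ε) (by linarith) hgb hfar
  have hgtsum0 : 0 ≤ ∑' y, g y := tsum_nonneg hg0
  -- diagonal part
  have hVz := hV z hzT
  have hVz0 : 0 ≤ V z := hasSum_le (fun w => mul_nonneg (hK0 z hzT w) (sq_nonneg _))
    hasSum_zero hVz
  set t : ℝ → ℝ := fun w => if w = z then 0 else K z w with htdef
  set u : ℝ → ℝ := fun w => 4 / α ^ 2 * (K z w * (w - E z) ^ 2) with hudef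
  have hu0 : ∀ w, 0 ≤ u w := fun w =>
    mul_nonneg (by positivity) (mul_nonneg (hK0 z hzT w) (sq_nonneg _))
  have ht0 : ∀ w, 0 ≤ t w := by
    intro w; by_cases hw : w = z <;> simp [htdef, hw, hK0 z hzT]
  have htu : ∀ w, t w ≤ u w := by
    intro w
    by_cases hw : w = z
    · simp only [htdef, hudef, if_pos hw]; exact hu0 w
    · by_cases hwS : w ∈ S z
      · have hwz : α ≤ |w - z| := hsep z hzT w ⟨Or.inr hwS, hw⟩
        have hwE : α / 2 ≤ |w - E z| := by
          have h := abs_add_le (w - E z) (E z - z)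
          have he : w - E z + (E z - z) = w - z := by ring
          rw [he] at h
          linarith [hE z hzT]
        have hsq : α ^ 2 / 4 ≤ (w - E z) ^ 2 := by
          nlinarith [sq_abs (w - E z), abs_nonneg (w - E z)]
        have hKw := hK0 z hzT w
        simp only [htdef, hudef, if_neg hw]
        rw [div_mul_eq_mul_div, le_div_iff₀ (by positivity : (0:ℝ) < α ^ 2)]
        nlinarith [mul_le_mul_of_nonneg_left hsq hKw]
      · simp only [htdef, hudef, if_neg hw, hKS z hzT w hwS]
        positivity
  have husum : Summable u := (hVz.summable).mul_left _
  have htsum : Summable t := Summable.of_nonneg_of_le ht0 htu husum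
  have htle : ∑' w, t w ≤ 4 / α ^ 2 * ε := by
    calc ∑' w, t w ≤ ∑' w, u w := Summable.tsum_le_tsum htu htsum husum
      _ = 4 / α ^ 2 * V z := by rw [hudef, tsum_mul_left, hVz.tsum_eq]
      _ ≤ 4 / α ^ 2 * ε := by
          have := hVb z hzT
          gcongr
  have ht0' : 0 ≤ ∑' w, t w := tsum_nonneg ht0
  have hKz1 : (1:ℝ) = K z z + ∑' w, t w := by
    have h := Summable.tsum_eq_add_tsum_ite (hK1 z hzT).summable z
    rw [(hK1 z hzT).tsum_eq] at h
    exact h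
  -- combine
  set e : T → ℝ := fun y => if (y : ℝ) = z then K z z else 0 with hedef
  have hesum : HasSum e (K z z) := by
    have : e ⟨z, hzT⟩ = K z z := by simp [hedef]
    rw [← this]
    apply hasSum_single
    intro y hy
    have : (y : ℝ) ≠ z := fun hc => hy (Subtype.ext hc)
    simp [hedef, this]
  have hfe : (fun y : T => K (y : ℝ) z) = fun y => g y + e y := by
    funext y
    by_cases hy : (y : ℝ) = z <;> simp [hgdef, hedef, hy]
  have hKsum : Summable (fun y : T => K (y : ℝ) z) := by
    rw [hfe]; exact hgsum.add hesum.summable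
  have hKtsum : (∑' y : T, K (y : ℝ) z) = (∑' y, g y) + K z z := by
    rw [hfe, Summable.tsum_add hgsum hesum.summable, hesum.tsum_eq]
  refine ⟨hKsum, ?_⟩
  rw [hKtsum]
  have habs : |(∑' y, g y) + K z z - 1| ≤ (∑' y, g y) + |K z z - 1| := by
    have h := abs_add_le (∑' y, g y) (K z z - 1)
    have he : (∑' y, g y) + (K z z - 1) = (∑' y, g y) + K z z - 1 := by ring
    rw [he] at h
    calc |(∑' y, g y) + K z z - 1| ≤ |∑' y, g y| + |K z z - 1| := h
      _ = (∑' y, g y) + |K z z - 1| := by rw [abs_of_nonneg hgtsum0]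
  have hKzz : |K z z - 1| ≤ 4 / α ^ 2 * ε := by
    have : K z z - 1 = -(∑' w, t w) := by linarith
    rw [this, abs_neg, abs_of_nonneg ht0']
    exact htle
  have hC0 : 0 ≤ ∑' k : ℤ, 1 / (k : ℝ) ^ 2 := tsum_nonneg (fun k => by positivity)
  have harith : 9 * (4 * ε) / (4 * α ^ 2) * (∑' k : ℤ, 1 / (k : ℝ) ^ 2)
      = 9 / α ^ 2 * (∑' k : ℤ, 1 / (k : ℝ) ^ 2) * ε := by
    field_simp
  have h1 := hgle
  rw [harith] at h1
  calc |(∑' y, g y) + K z z - 1| ≤ (∑' y, g y) + |K z z - 1| := habs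
    _ ≤ 9 / α ^ 2 * (∑' k : ℤ, 1 / (k : ℝ) ^ 2) * ε + 4 / α ^ 2 * ε := by
        linarith
    _ = (4 / α ^ 2 + 9 / α ^ 2 * ∑' k : ℤ, 1 / (k : ℝ) ^ 2) * ε := by ring

theorem normalizing_constant_L2_to_one
    {Ω : Type*} [MeasurableSpace Ω] (P : Measure Ω) [IsProbabilityMeasure P]
    (T : Set ℝ) (hTc : T.Countable)
    (f : ℝ → ℝ) (hf0 : ∀ x, 0 ≤ f x) (hfT : ∀ x ∉ T, f x = 0) (hf1 : HasSum f 1)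
    (S : ℝ → Set ℝ) (hSc : ∀ x ∈ T, (S x).Countable)
    (K : ℝ → ℝ → ℝ → ℝ)
    (hK0 : ∀ x ∈ T, ∀ h > (0:ℝ), ∀ z, 0 ≤ K x h z)
    (hKS : ∀ x ∈ T, ∀ h > (0:ℝ), ∀ z ∉ S x, K x h z = 0)
    (hK1 : ∀ x ∈ T, ∀ h > (0:ℝ), HasSum (K x h) 1)
    (hKm : ∀ x h, Measurable (K x h))
    (hxS : ∀ x ∈ T, x ∈ S x)
    (α : ℝ) (hα : 0 < α)
    (hsep : ∀ x ∈ T, ∀ z ∈ (T ∪ S x) \ {x}, α ≤ |z - x|)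
    (H : ℕ → ℝ) (hH : ∀ n, 0 < H n) (hH0 : Tendsto H atTop (𝓝 0))
    (X : ℕ → Ω → ℝ) (hXm : ∀ i, Measurable (X i))
    (hXind : iIndepFun X P)
    (hXd : ∀ i, ∀ x : ℝ, P (X i ⁻¹' {x}) = ENNReal.ofReal (f x))
    (EZ VZ : ℝ → ℝ → ℝ)
    (hEZ : ∀ x ∈ T, ∀ h > (0:ℝ), HasSum (fun z : ℝ => K x h z * z) (EZ x h))
    (hVZ : ∀ x ∈ T, ∀ h > (0:ℝ), HasSum (fun z : ℝ => K x h z * (z - EZ x h) ^ 2) (VZ x h))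
    (hA1E : ∀ ε > (0:ℝ), ∃ N : ℕ, ∀ n ≥ N, ∀ x ∈ T, |EZ x (H n) - x| ≤ ε)
    (hA1V : ∀ ε > (0:ℝ), ∃ N : ℕ, ∀ n ≥ N, ∀ x ∈ T, VZ x (H n) ≤ ε)
    :
    Tendsto
      (fun n : ℕ =>
        ∫ ω, (((∑' y : T, (n:ℝ)⁻¹ * ∑ i ∈ Finset.range n, K (y:ℝ) (H n) (X i ω))) - 1) ^ 2 ∂P)
      atTop (𝓝 0) := by
  classical
  have hTsub : Countable ↥T := hTc.to_subtype
  set C0 : ℝ := ∑' k : ℤ, 1 / (k : ℝ) ^ 2 with hC0def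
  have hC0 : 0 ≤ C0 := tsum_nonneg (fun k => by positivity)
  set D : ℝ := 4 / α ^ 2 + 9 / α ^ 2 * C0 with hDdef
  have hD : 0 < D :=
    add_pos_of_pos_of_nonneg (by positivity) (mul_nonneg (by positivity) hC0)
  -- a.e. every observation lands in T
  have hae : ∀ᵐ ω ∂P, ∀ i, X i ω ∈ T := by
    rw [ae_all_iff]
    intro i
    have hTm : MeasurableSet T := hTc.measurableSet
    have hU : X i ⁻¹' T = ⋃ x : T, X i ⁻¹' {(x : ℝ)} := by
      ext ω
      simp only [Set.mem_preimage, Set.mem_iUnion, Set.mem_singleton_iff]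
      exact ⟨fun h => ⟨⟨_, h⟩, rfl⟩, fun ⟨x, hx⟩ => hx ▸ x.2⟩
    have hdis : Pairwise (Function.onFun Disjoint fun x : T => X i ⁻¹' {(x : ℝ)}) := by
      intro x y hxy
      apply Set.disjoint_left.2
      intro ω h1 h2
      simp only [Set.mem_preimage, Set.mem_singleton_iff] at h1 h2
      exact hxy (Subtype.ext (h1.symm.trans h2))
    have hμT : P (X i ⁻¹' T) = 1 := by
      rw [hU, measure_iUnion hdis (fun x => hXm i (measurableSet_singleton _))]
      have h1 : ∀ x : T, P (X i ⁻¹' {(x : ℝ)}) = ENNReal.ofReal (f (x : ℝ)) :=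
        fun x => hXd i x
      rw [tsum_congr h1,
        ← ENNReal.ofReal_tsum_of_nonneg (f := fun x : T => f (x : ℝ)) (fun x => hf0 _) (hf1.summable.subtype T)]
      have h2 : (∑' x : T, f (x : ℝ)) = 1 := by
        have hsupp : Function.support f ⊆ T := by
          intro x hx
          by_contra hxT
          exact hx (hfT x hxT)
        rw [tsum_subtype_eq_of_support_subset hsupp, hf1.tsum_eq]
      rw [h2, ENNReal.ofReal_one]
    have hmeas : MeasurableSet (X i ⁻¹' T) := hXm i hTm
    have hcompl := measure_compl hmeas (measure_ne_top P _)
    rw [hμT, measure_univ, tsub_self] at hcompl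
    have hceq : {ω | ¬ X i ω ∈ T} = (X i ⁻¹' T)ᶜ := rfl
    rw [ae_iff, hceq, hcompl]
  rw [Metric.tendsto_atTop]
  intro ε' hε'
  have hsq : 0 < Real.sqrt ε' := Real.sqrt_pos.2 hε'
  set ε : ℝ := min (α / 2) (Real.sqrt ε' / (2 * D)) with hεdef
  have hεpos : 0 < ε := lt_min (by linarith) (by positivity)
  obtain ⟨N1, hN1⟩ := hA1E (α / 2) (by linarith)
  obtain ⟨N2, hN2⟩ := hA1V ε hεpos
  refine ⟨max (max N1 N2) 1, fun n hn => ?_⟩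
  have hn1 : 1 ≤ n := le_trans (le_max_right _ _) hn
  have hnN1 : N1 ≤ n := le_trans (le_trans (le_max_left _ _) (le_max_left _ _)) hn
  have hnN2 : N2 ≤ n := le_trans (le_trans (le_max_right _ _) (le_max_left _ _)) hn
  have hh := hH n
  have hkey : ∀ z ∈ T, Summable (fun y : T => K (y:ℝ) (H n) z) ∧
      |(∑' y : T, K (y:ℝ) (H n) z) - 1| ≤ D * ε := by
    intro z hz
    have hk := aux_key (S := S) (K := fun x => K x (H n)) (E := fun x => EZ x (H n))
      (V := fun x => VZ x (H n)) hα hεpos.le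
      (fun x hx => hK0 x hx (H n) hh)
      (fun x hx => hKS x hx (H n) hh)
      (fun x hx => hK1 x hx (H n) hh)
      hsep
      (fun x hx => hVZ x hx (H n) hh)
      (fun x hx => hN1 n hnN1 x hx)
      (fun x hx => hN2 n hnN2 x hx)
      hz
    refine ⟨hk.1, ?_⟩
    rw [hDdef, hC0def]
    exact hk.2
  have hdelta : D * ε ≤ Real.sqrt ε' / 2 := by
    have h1 : ε ≤ Real.sqrt ε' / (2 * D) := min_le_right _ _
    calc D * ε ≤ D * (Real.sqrt ε' / (2 * D)) := by
          have := hD.le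
          gcongr
      _ = Real.sqrt ε' / 2 := by
          field_simp
  have hδ2 : (D * ε) ^ 2 < ε' := by
    have h0 : 0 ≤ D * ε := (mul_pos hD hεpos).le
    have h1 : (D * ε) ^ 2 ≤ (Real.sqrt ε' / 2) ^ 2 := by
      apply pow_le_pow_left₀ h0 hdelta
    have h2 : (Real.sqrt ε' / 2) ^ 2 = ε' / 4 := by
      rw [div_pow, Real.sq_sqrt hε'.le]
      norm_num
    rw [h2] at h1
    exact lt_of_le_of_lt h1 (by linarith)
  have hb : ∀ᵐ ω ∂P,
      ‖(((∑' y : T, (n:ℝ)⁻¹ * ∑ i ∈ Finset.range n, K (y:ℝ) (H n) (X i ω))) - 1) ^ 2‖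
        ≤ (D * ε) ^ 2 := by
    filter_upwards [hae] with ω hω
    have hsum_i : ∀ i, Summable (fun y : T => K (y:ℝ) (H n) (X i ω)) :=
      fun i => (hkey _ (hω i)).1
    have hswap : (∑' y : T, (n:ℝ)⁻¹ * ∑ i ∈ Finset.range n, K (y:ℝ) (H n) (X i ω))
        = (n:ℝ)⁻¹ * ∑ i ∈ Finset.range n, ∑' y : T, K (y:ℝ) (H n) (X i ω) := by
      rw [tsum_mul_left, Summable.tsum_finsetSum (fun i _ => hsum_i i)]
    have hne : ((n:ℝ)) ≠ 0 := Nat.cast_ne_zero.2 (by omega)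
    set c : ℕ → ℝ := fun i => ∑' y : T, K (y:ℝ) (H n) (X i ω) with hcdef
    have hci : ∀ i, |c i - 1| ≤ D * ε := fun i => (hkey _ (hω i)).2
    have hmain : |(∑' y : T, (n:ℝ)⁻¹ * ∑ i ∈ Finset.range n, K (y:ℝ) (H n) (X i ω)) - 1|
        ≤ D * ε := by
      rw [hswap]
      have hrw : (n:ℝ)⁻¹ * (∑ i ∈ Finset.range n, c i) - 1
          = (n:ℝ)⁻¹ * ∑ i ∈ Finset.range n, (c i - 1) := by
        rw [Finset.sum_sub_distrib, mul_sub, Finset.sum_const, Finset.card_range,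
          nsmul_eq_mul, mul_one, inv_mul_cancel₀ hne]
      rw [hrw]
      calc |(n:ℝ)⁻¹ * ∑ i ∈ Finset.range n, (c i - 1)|
          = (n:ℝ)⁻¹ * |∑ i ∈ Finset.range n, (c i - 1)| := by
            rw [abs_mul, abs_of_nonneg (by positivity : (0:ℝ) ≤ (n:ℝ)⁻¹)]
        _ ≤ (n:ℝ)⁻¹ * ∑ i ∈ Finset.range n, |c i - 1| := by
            gcongr
            exact Finset.abs_sum_le_sum_abs _ _
        _ ≤ (n:ℝ)⁻¹ * ∑ i ∈ Finset.range n, (D * ε) := by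
            gcongr with i hi
            exact hci i
        _ = D * ε := by
            rw [Finset.sum_const, Finset.card_range, nsmul_eq_mul]
            field_simp
    rw [Real.norm_eq_abs, abs_of_nonneg (sq_nonneg _), ← sq_abs]
    exact pow_le_pow_left₀ (abs_nonneg _) hmain 2
  have hint := norm_integral_le_of_norm_le_const (μ := P) hb
  rw [probReal_univ, mul_one] at hint
  rw [Real.dist_eq, sub_zero]
  calc |∫ ω, (((∑' y : T, (n:ℝ)⁻¹ * ∑ i ∈ Finset.range n, K (y:ℝ) (H n) (X i ω))) - 1) ^ 2 ∂P|
      ≤ (D * ε) ^ 2 := by rw [← Real.norm_eq_abs]; exact hint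
    _ < ε' := hδ2
end

section
/- Under Assumptions (A1), for every x ∈ T the normalized estimator f̂_n(x) = f̃_n(x)/C_n converges in probability to f(x) as n → ∞. -/
open MeasureTheory ProbabilityTheory Filter Topology

lemma kernel_tail_hasSum {κ : ℝ → ℝ} {y c : ℝ} (hκ1 : HasSum κ c) :
    HasSum (fun z => if z = y then 0 else κ z) (c - κ y) := by
  have h := hκ1.sub (hasSum_ite_eq y (κ y))
  have hfun : (fun z => if z = y then 0 else κ z) = (fun b => κ b - if b = y then κ y else 0) := by
    funext z
    by_cases hz : z = y <;> simp [hz]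
  rw [hfun]; exact h

lemma kernel_tail_le {κ : ℝ → ℝ} {y EZ VZ α e : ℝ} (hκ0 : ∀ z, 0 ≤ κ z)
    (hκ1 : HasSum κ 1) (hV : HasSum (fun z => κ z * (z - EZ) ^ 2) VZ)
    (hα : 0 < α) (hsupp : ∀ z, z ≠ y → κ z ≠ 0 → α ≤ |z - y|)
    (he : |EZ - y| ≤ e) :
    1 - κ y ≤ (2 * VZ + 2 * e ^ 2) / α ^ 2 := by
  have he0 : 0 ≤ e := le_trans (abs_nonneg _) he
  have h1 : HasSum (fun z => (if z = y then 0 else κ z) * α ^ 2) ((1 - κ y) * α ^ 2) :=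
    (kernel_tail_hasSum hκ1).mul_right _
  have h2 : HasSum (fun z => 2 * (κ z * (z - EZ) ^ 2) + 2 * (κ z * e ^ 2))
      (2 * VZ + 2 * (1 * e ^ 2)) :=
    (hV.mul_left 2).add ((hκ1.mul_right (e ^ 2)).mul_left 2)
  have hle : (1 - κ y) * α ^ 2 ≤ 2 * VZ + 2 * (1 * e ^ 2) := by
    refine hasSum_le (fun z => ?_) h1 h2
    by_cases hz : z = y
    · subst hz
      simp only [if_true, eq_self_iff_true, zero_mul]
      have := hκ0 z
      nlinarith [sq_nonneg (z - EZ), sq_nonneg e, mul_nonneg this (sq_nonneg (z - EZ)), mul_nonneg this (sq_nonneg e)]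
    · simp only [if_neg hz]
      by_cases hκz : κ z = 0
      · rw [hκz]; nlinarith [sq_nonneg α]
      · have hzy := hsupp z hz hκz
        have habs : α ≤ |z - EZ| + e := by
          have : |z - y| ≤ |z - EZ| + |EZ - y| := by
            calc |z - y| = |(z - EZ) + (EZ - y)| := by ring_nf
            _ ≤ |z - EZ| + |EZ - y| := abs_add_le _ _
          linarith
        have hsq : α ^ 2 ≤ 2 * (z - EZ) ^ 2 + 2 * e ^ 2 := by
          have h3 : α ^ 2 ≤ (|z - EZ| + e) ^ 2 := by
            apply sq_le_sq' <;> nlinarith [abs_nonneg (z - EZ)]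
          have h4 : |z - EZ| ^ 2 = (z - EZ) ^ 2 := sq_abs _
          nlinarith [sq_nonneg (|z - EZ| - e)]
        have := hκ0 z
        nlinarith
  rw [le_div_iff₀ (by positivity)]
  linarith

open MeasureTheory ProbabilityTheory Filter Topology

lemma packing_sum {T : Set ℝ} (hTc : T.Countable) {t α v : ℝ} (hα : 0 < α)
    (hsep : ∀ y ∈ T, ∀ z ∈ T, y ≠ z → α ≤ |y - z|) (ht : t ∈ T)
    (w : ℝ → ℝ) (hw0 : ∀ y ∈ T, 0 ≤ w y) (hv : 0 ≤ v)
    (hb : ∀ y ∈ T, y ≠ t → (|y - t| - α / 4) ^ 2 * w y ≤ v) :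
    Summable (fun y : T => if (y : ℝ) = t then 0 else w y) ∧
      (∑' y : T, if (y : ℝ) = t then 0 else w y) ≤
        64 * v / α ^ 2 * ∑' m : ℤ, 1 / (m : ℝ) ^ 2 := by
  have := hTc.to_subtype
  -- key facts about the floor index
  have key : ∀ y : T, (y : ℝ) ≠ t →
      2 ≤ |⌊2 * ((y : ℝ) - t) / α⌋| ∧ (|⌊2 * ((y : ℝ) - t) / α⌋| : ℝ) * (α / 4) ≤ |(y : ℝ) - t| := by
    intro y hy
    have hyt : α ≤ |(y : ℝ) - t| := hsep y y.2 t ht hy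
    set u : ℝ := 2 * ((y : ℝ) - t) / α with hu
    have hfl : (⌊u⌋ : ℝ) ≤ u := Int.floor_le u
    have hfl2 : u < ⌊u⌋ + 1 := Int.lt_floor_add_one u
    rcases abs_cases ((y : ℝ) - t) with ⟨he, hs⟩ | ⟨he, hs⟩
    · -- y - t ≥ 0, so y - t ≥ α, u ≥ 2
      have hu2 : 2 ≤ u := by
        rw [hu, le_div_iff₀ hα]; nlinarith
      have hm2 : 2 ≤ ⌊u⌋ := by exact_mod_cast Int.le_floor.2 (by exact_mod_cast hu2)
      constructor
      · rw [abs_of_nonneg (by linarith : (0:ℤ) ≤ ⌊u⌋)]; exact hm2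
      · rw [abs_of_nonneg (by exact_mod_cast (by linarith : (0:ℤ) ≤ ⌊u⌋) : (0:ℝ) ≤ (⌊u⌋:ℝ))]
        rw [he]
        have : (⌊u⌋ : ℝ) * α ≤ u * α := by nlinarith
        rw [hu] at this
        have hα' : α ≠ 0 := ne_of_gt hα
        have h9 : 2 * ((y : ℝ) - t) / α * α = 2 * ((y : ℝ) - t) := by field_simp
        rw [h9] at this
        have h10 : (⌊u⌋ : ℝ) * (α / 4) = (⌊u⌋ : ℝ) * α / 4 := by ring
        rw [h10]
        linarith
    · -- y - t < 0 (≤ 0 and |y-t| = -(y-t) ≥ α so y - t ≤ -α), u ≤ -2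
      have hu2 : u ≤ -2 := by
        rw [hu, div_le_iff₀ hα]; nlinarith
      have hm2 : ⌊u⌋ ≤ -2 := by exact_mod_cast hfl.trans hu2
      constructor
      · rw [abs_of_nonpos (by linarith : ⌊u⌋ ≤ 0)]; linarith
      · rw [abs_of_nonpos (by exact_mod_cast (by linarith : ⌊u⌋ ≤ (0:ℤ)) : (⌊u⌋:ℝ) ≤ 0)]
        rw [he]
        -- u < ⌊u⌋ + 1 gives y - t < (⌊u⌋+1) α/2
        have hα0 : α ≠ 0 := ne_of_gt hα
        have h5 : 2 * ((y : ℝ) - t) < ((⌊u⌋ : ℝ) + 1) * α := by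
          have := mul_lt_mul_of_pos_right hfl2 hα
          rw [hu] at this
          calc 2 * ((y : ℝ) - t) = 2 * ((y : ℝ) - t) / α * α := by field_simp
          _ < ((⌊u⌋ : ℝ) + 1) * α := this
        have hm2' : (⌊u⌋ : ℝ) ≤ -2 := by exact_mod_cast hm2
        nlinarith [mul_le_mul_of_nonneg_right hm2' hα.le]
  -- the injection into ℤ
  set ι : T → ℤ := fun y => if (y : ℝ) = t then 0 else ⌊2 * ((y : ℝ) - t) / α⌋ with hι
  have hinj : Function.Injective ι := by
    intro y₁ y₂ h12
    by_cases h1 : (y₁ : ℝ) = t <;> by_cases h2 : (y₂ : ℝ) = t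
    · exact Subtype.ext (h1.trans h2.symm)
    · exfalso
      have hk := (key y₂ h2).1
      rw [hι] at h12; simp only [if_pos h1, if_neg h2] at h12
      rw [← h12] at hk; norm_num at hk
    · exfalso
      have hk := (key y₁ h1).1
      rw [hι] at h12; simp only [if_neg h1, if_pos h2] at h12
      rw [h12] at hk; norm_num at hk
    · rw [hι] at h12; simp only [if_neg h1, if_neg h2] at h12
      by_contra hne
      have hne' : (y₁ : ℝ) ≠ (y₂ : ℝ) := fun h => hne (Subtype.ext h)
      have hsep' : α ≤ |(y₁ : ℝ) - (y₂ : ℝ)| := hsep y₁ y₁.2 y₂ y₂.2 hne'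
      set u₁ : ℝ := 2 * ((y₁ : ℝ) - t) / α
      set u₂ : ℝ := 2 * ((y₂ : ℝ) - t) / α
      have e1 : (⌊u₁⌋ : ℝ) ≤ u₁ := Int.floor_le u₁
      have e2 : u₁ < ⌊u₁⌋ + 1 := Int.lt_floor_add_one u₁
      have e3 : (⌊u₂⌋ : ℝ) ≤ u₂ := Int.floor_le u₂
      have e4 : u₂ < ⌊u₂⌋ + 1 := Int.lt_floor_add_one u₂
      have e5 : (⌊u₁⌋ : ℝ) = (⌊u₂⌋ : ℝ) := by exact_mod_cast h12
      have h6 : |u₁ - u₂| < 1 := by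
        rw [abs_sub_lt_iff]; constructor <;> nlinarith
      have hα0 : α ≠ 0 := ne_of_gt hα
      have h7 : u₁ - u₂ = 2 * ((y₁ : ℝ) - y₂) / α := by
        show 2 * ((y₁ : ℝ) - t) / α - 2 * ((y₂ : ℝ) - t) / α = 2 * ((y₁ : ℝ) - y₂) / α
        field_simp
        ring
      rw [h7] at h6
      rw [abs_div, abs_of_pos hα] at h6
      have h8 : |2 * ((y₁ : ℝ) - y₂)| = 2 * |(y₁ : ℝ) - y₂| := by
        rw [abs_mul]; norm_num
      rw [h8] at h6
      have := (div_lt_one hα).mp h6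
      linarith
  -- the dominating function on ℤ
  set g : ℤ → ℝ := fun m => 64 * v / α ^ 2 * (1 / (m : ℝ) ^ 2) with hg
  have hg0 : ∀ m, 0 ≤ g m := by
    intro m; rw [hg]; positivity
  have hgsum : Summable g := (Real.summable_one_div_int_pow.2 (by norm_num)).mul_left _
  have hdom : ∀ y : T, (if (y : ℝ) = t then 0 else w y) ≤ g (ι y) := by
    intro y
    by_cases hy : (y : ℝ) = t
    · simp only [if_pos hy]; exact hg0 _
    · simp only [if_neg hy, hι, hg]
      obtain ⟨hm2, hml⟩ := key y hy
      set m := ⌊2 * ((y : ℝ) - t) / α⌋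
      have hm2' : (2 : ℝ) ≤ |(m : ℝ)| := by
        rw [← Int.cast_abs]; exact_mod_cast hm2
      have hb' := hb y y.2 hy
      have hlb : (|(m : ℝ)| * (α / 8)) ^ 2 ≤ (|(y : ℝ) - t| - α / 4) ^ 2 := by
        have h1 : |(m : ℝ)| * (α / 8) ≤ |(y : ℝ) - t| - α / 4 := by nlinarith
        have h2 : 0 ≤ |(m : ℝ)| * (α / 8) := by positivity
        nlinarith
    -- from hb' and hlb: w y ≤ v / ((|m| α/8)^2) = 64 v/(α² m²)
      have hpos : 0 < (|(m : ℝ)| * (α / 8)) ^ 2 := by positivity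
      have hw : w y ≤ v / (|(m : ℝ)| * (α / 8)) ^ 2 := by
        rw [le_div_iff₀ hpos]
        calc w y * (|(m : ℝ)| * (α / 8)) ^ 2 ≤ w y * (|(y : ℝ) - t| - α / 4) ^ 2 :=
          mul_le_mul_of_nonneg_left hlb (hw0 y y.2)
        _ ≤ v := by rw [mul_comm]; exact hb'
      calc w y ≤ v / (|(m : ℝ)| * (α / 8)) ^ 2 := hw
      _ = 64 * v / α ^ 2 * (1 / (m : ℝ) ^ 2) := by
          rw [mul_pow, sq_abs]
          field_simp
          ring
  have hsum : Summable (fun y : T => if (y : ℝ) = t then 0 else w y) := by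
    refine Summable.of_nonneg_of_le (fun y => ?_) hdom (hgsum.comp_injective hinj)
    by_cases hy : (y : ℝ) = t
    · simp [hy]
    · simp only [if_neg hy]; exact hw0 y y.2
  refine ⟨hsum, ?_⟩
  calc (∑' y : T, if (y : ℝ) = t then 0 else w y) ≤ ∑' m : ℤ, g m :=
    Summable.tsum_le_tsum_of_inj ι hinj (fun m _ => hg0 m) hdom hsum hgsum
  _ = 64 * v / α ^ 2 * ∑' m : ℤ, 1 / (m : ℝ) ^ 2 := tsum_mul_left

open MeasureTheory ProbabilityTheory Filter Topology

lemma preimage_compl_null {Ω : Type*} [MeasurableSpace Ω] (P : Measure Ω) [IsProbabilityMeasure P]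
    (T : Set ℝ) (hTc : T.Countable) (f : ℝ → ℝ) (hf0 : ∀ z, 0 ≤ f z) (hf1 : HasSum f 1)
    (hfT : ∀ z ∉ T, f z = 0)
    (X : Ω → ℝ) (hXm : Measurable X) (hXd : ∀ z : ℝ, P (X ⁻¹' {z}) = ENNReal.ofReal (f z)) :
    P (X ⁻¹' Tᶜ) = 0 := by
  have := hTc.to_subtype
  have hTm : MeasurableSet T := hTc.measurableSet
  have hone : P (X ⁻¹' T) = 1 := by
    have hU : X ⁻¹' T = ⋃ t : T, X ⁻¹' {(t : ℝ)} := by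
      ext ω; simp
    rw [hU, measure_iUnion]
    · have h2 : ∀ t : T, P (X ⁻¹' {(t : ℝ)}) = ENNReal.ofReal (f t) := fun t => hXd t
      simp_rw [h2]
      rw [← ENNReal.ofReal_tsum_of_nonneg (fun t => hf0 _) (hf1.summable.subtype _)]
      have h3 : ∑' t : T, f t = 1 := by
        rw [tsum_subtype_eq_of_support_subset (fun z hz => by
          by_contra hzT; exact hz (hfT z hzT))]
        exact hf1.tsum_eq
      rw [h3, ENNReal.ofReal_one]
    · intro t s hts
      refine Set.disjoint_left.2 fun ω h1 h2 => hts ?_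
      exact Subtype.ext ((Set.mem_preimage.1 h1).symm.trans (Set.mem_preimage.1 h2) : (t : ℝ) = s)
    · exact fun t => hXm (measurableSet_singleton _)
  have hc : P (X ⁻¹' Tᶜ) = P Set.univ - P (X ⁻¹' T) := by
    rw [Set.preimage_compl, measure_compl (hXm hTm) (measure_ne_top _ _)]
  rw [hc, hone]
  simp

lemma expectation_eq {Ω : Type*} [MeasurableSpace Ω] (P : Measure Ω) [IsProbabilityMeasure P]
    (T : Set ℝ) (hTc : T.Countable) (f : ℝ → ℝ) (hf0 : ∀ z, 0 ≤ f z) (hf1 : HasSum f 1)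
    (hfT : ∀ z ∉ T, f z = 0)
    (X : Ω → ℝ) (hXm : Measurable X) (hXd : ∀ z : ℝ, P (X ⁻¹' {z}) = ENNReal.ofReal (f z))
    (φ : ℝ → ℝ) (hφm : Measurable φ) (hφ0 : ∀ z, 0 ≤ φ z) (hφ1 : ∀ z, φ z ≤ 1) :
    ∫ ω, φ (X ω) ∂P = ∑' t : T, f t * φ t := by
  have := hTc.to_subtype
  have hTm : MeasurableSet T := hTc.measurableSet
  set μ' : Measure ℝ := Measure.map X P with hμ'
  have hμP : IsProbabilityMeasure μ' := Measure.isProbabilityMeasure_map hXm.aemeasurable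
  have hint : Integrable φ μ' :=
    (memLp_of_bounded (ae_of_all _ fun z => ⟨hφ0 z, hφ1 z⟩) hφm.aestronglyMeasurable 1).integrable
      le_rfl
  have hcompl : μ' Tᶜ = 0 := by
    rw [hμ', Measure.map_apply hXm hTm.compl]
    exact preimage_compl_null P T hTc f hf0 hf1 hfT X hXm hXd
  have h1 : ∫ ω, φ (X ω) ∂P = ∫ z, φ z ∂μ' := (integral_map hXm.aemeasurable
    hφm.aestronglyMeasurable).symm
  have hae : ∀ᵐ z ∂μ', z ∈ T := by
    rw [Filter.eventually_iff, mem_ae_iff]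
    simpa using hcompl
  have h2 : ∫ z, φ z ∂μ' = ∫ z in T, φ z ∂μ' := by
    conv_lhs => rw [← Measure.restrict_eq_self_of_ae_mem hae]
  have h3 : ∫ z in T, φ z ∂μ' = ∑' t : T, (μ' {(t : ℝ)}).toReal • φ t :=
    setIntegral_countable φ hTc hint.integrableOn
  rw [h1, h2, h3]
  congr 1
  funext t
  rw [hμ', Measure.map_apply hXm (measurableSet_singleton _), hXd,
    ENNReal.toReal_ofReal (hf0 _), smul_eq_mul]

open MeasureTheory ProbabilityTheory Filter Topology

set_option maxHeartbeats 1000000 in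
theorem normalized_estimator_consistency
    {Ω : Type*} [MeasurableSpace Ω] (P : Measure Ω) [IsProbabilityMeasure P]
    (T : Set ℝ) (hTc : T.Countable)
    (f : ℝ → ℝ) (hf0 : ∀ x, 0 ≤ f x) (hfT : ∀ x ∉ T, f x = 0) (hf1 : HasSum f 1)
    (S : ℝ → Set ℝ) (hSc : ∀ x ∈ T, (S x).Countable)
    (K : ℝ → ℝ → ℝ → ℝ)
    (hK0 : ∀ x ∈ T, ∀ h > (0:ℝ), ∀ z, 0 ≤ K x h z)
    (hKS : ∀ x ∈ T, ∀ h > (0:ℝ), ∀ z ∉ S x, K x h z = 0)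
    (hK1 : ∀ x ∈ T, ∀ h > (0:ℝ), HasSum (K x h) 1)
    (hKm : ∀ x h, Measurable (K x h))
    (hxS : ∀ x ∈ T, x ∈ S x)
    (α : ℝ) (hα : 0 < α)
    (hsep : ∀ x ∈ T, ∀ z ∈ (T ∪ S x) \ {x}, α ≤ |z - x|)
    (H : ℕ → ℝ) (hH : ∀ n, 0 < H n) (hH0 : Tendsto H atTop (𝓝 0))
    (X : ℕ → Ω → ℝ) (hXm : ∀ i, Measurable (X i))
    (hXind : iIndepFun X P)
    (hXd : ∀ i, ∀ x : ℝ, P (X i ⁻¹' {x}) = ENNReal.ofReal (f x))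
    (EZ VZ : ℝ → ℝ → ℝ)
    (hEZ : ∀ x ∈ T, ∀ h > (0:ℝ), HasSum (fun z : ℝ => K x h z * z) (EZ x h))
    (hVZ : ∀ x ∈ T, ∀ h > (0:ℝ), HasSum (fun z : ℝ => K x h z * (z - EZ x h) ^ 2) (VZ x h))
    (hA1E : ∀ ε > (0:ℝ), ∃ N : ℕ, ∀ n ≥ N, ∀ x ∈ T, |EZ x (H n) - x| ≤ ε)
    (hA1V : ∀ ε > (0:ℝ), ∃ N : ℕ, ∀ n ≥ N, ∀ x ∈ T, VZ x (H n) ≤ ε)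
    (x : ℝ) (hx : x ∈ T) :
    TendstoInMeasure P
      (fun (n : ℕ) (ω : Ω) =>
        ((n:ℝ)⁻¹ * ∑ i ∈ Finset.range n, K x (H n) (X i ω)) / (∑' y : T, (n:ℝ)⁻¹ * ∑ i ∈ Finset.range n, K (y:ℝ) (H n) (X i ω)))
      atTop (fun _ => f x) := by
  classical
  have hTsub := hTc.to_subtype
  rw [tendstoInMeasure_iff_dist]
  intro ε hε
  -- constants
  set B : ℝ := ∑' m : ℤ, 1 / (m : ℝ) ^ 2 with hB
  have hB0 : 0 ≤ B := tsum_nonneg fun m => by positivity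
  have hα2 : (0:ℝ) < α ^ 2 := by positivity
  set c₁ : ℝ := 4 / α ^ 2 with hc₁
  set c₂ : ℝ := 64 * B / α ^ 2 with hc₂
  have hc₁0 : 0 ≤ c₁ := by positivity
  have hc₂0 : 0 ≤ c₂ := by rw [hc₂]; positivity
  set η : ℝ := min (ε / 8) (1 / 2) with hη
  have hη0 : 0 < η := lt_min (by linarith) (by norm_num)
  have hηε : η ≤ ε / 8 := min_le_left _ _
  have hηhalf : η ≤ 1 / 2 := min_le_right _ _
  set θ : ℝ := min (min 1 (α / 4)) (η / (2 * c₁ + c₂ + 1)) with hθ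
  have hden : (0:ℝ) < 2 * c₁ + c₂ + 1 := by linarith
  have hθ0 : 0 < θ := lt_min (lt_min one_pos (by linarith)) (div_pos hη0 hden)
  have hθ1 : θ ≤ 1 := le_trans (min_le_left _ _) (min_le_left _ _)
  have hθα : θ ≤ α / 4 := le_trans (min_le_left _ _) (min_le_right _ _)
  have hθη : (2 * c₁ + c₂ + 1) * θ ≤ η := by
    have h1 : θ ≤ η / (2 * c₁ + c₂ + 1) := min_le_right _ _
    calc (2 * c₁ + c₂ + 1) * θ ≤ (2 * c₁ + c₂ + 1) * (η / (2 * c₁ + c₂ + 1)) :=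
      mul_le_mul_of_nonneg_left h1 hden.le
    _ = η := by field_simp
  have hc₁θ : c₁ * θ ≤ η := by nlinarith
  have h2c₁θ : 2 * (c₁ * θ) ≤ η := by nlinarith
  have hc₂θ : c₂ * θ ≤ η := by nlinarith
  obtain ⟨N₁, hN₁⟩ := hA1E θ hθ0
  obtain ⟨N₂, hN₂⟩ := hA1V θ hθ0
  set N : ℕ := max (max N₁ N₂) 1 with hNdef
  have hfx1 : f x ≤ 1 := le_hasSum hf1 x fun b _ => hf0 b
  have hfx0 : 0 ≤ f x := hf0 x
  have key : ∀ n : ℕ, N ≤ n →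
      P {ω : Ω | ε ≤ dist (((n:ℝ)⁻¹ * ∑ i ∈ Finset.range n, K x (H n) (X i ω)) /
          (∑' y : T, (n:ℝ)⁻¹ * ∑ i ∈ Finset.range n, K (y:ℝ) (H n) (X i ω))) (f x)}
        ≤ ENNReal.ofReal (16 / (n * ε ^ 2)) := by
    intro n hn
    have hn1 : 1 ≤ n := le_trans (le_max_right _ _) hn
    have hnR : (0:ℝ) < n := by exact_mod_cast hn1
    have hnne : (n:ℝ) ≠ 0 := ne_of_gt hnR
    set h : ℝ := H n with hhdef
    have hh : 0 < h := hH n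
    have hEb : ∀ y ∈ T, |EZ y h - y| ≤ θ :=
      fun y hy => hN₁ n (le_trans (le_trans (le_max_left _ _) (le_max_left _ _)) hn) y hy
    have hVb : ∀ y ∈ T, VZ y h ≤ θ :=
      fun y hy => hN₂ n (le_trans (le_trans (le_max_right _ _) (le_max_left _ _)) hn) y hy
    have hK0' : ∀ y ∈ T, ∀ z, 0 ≤ K y h z := fun y hy z => hK0 y hy h hh z
    have hKle1 : ∀ y ∈ T, ∀ z, K y h z ≤ 1 :=
      fun y hy z => le_hasSum (hK1 y hy h hh) z fun b _ => hK0' y hy b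
    have hsupp : ∀ y ∈ T, ∀ z, z ≠ y → K y h z ≠ 0 → α ≤ |z - y| := by
      intro y hy z hz hKz
      refine hsep y hy z ⟨?_, hz⟩
      right
      by_contra hzS
      exact hKz (hKS y hy h hh z hzS)
    -- center bound
    have hcenter : ∀ y ∈ T, 1 - K y h y ≤ c₁ * θ := by
      intro y hy
      have h1 := kernel_tail_le (hK0' y hy) (hK1 y hy h hh) (hVZ y hy h hh) hα
        (hsupp y hy) (hEb y hy)
      have hV0 : 0 ≤ VZ y h :=
        hasSum_le (fun z => mul_nonneg (hK0' y hy z) (sq_nonneg _)) hasSum_zero (hVZ y hy h hh)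
      calc 1 - K y h y ≤ (2 * VZ y h + 2 * θ ^ 2) / α ^ 2 := h1
      _ ≤ (4 * θ) / α ^ 2 := by
              have h4 : 2 * VZ y h + 2 * θ ^ 2 ≤ 4 * θ := by nlinarith [hVb y hy]
              gcongr
      _ = c₁ * θ := by rw [hc₁]; ring
    -- per-pair packing bound
    have hpackb : ∀ t ∈ T, ∀ y ∈ T, y ≠ t → (|y - t| - α / 4) ^ 2 * K y h t ≤ θ := by
      intro t ht y hy hyt
      by_cases hK0t : K y h t = 0
      · rw [hK0t, mul_zero]; exact hθ0.le
      have hsingle : K y h t * (t - EZ y h) ^ 2 ≤ VZ y h :=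
        le_hasSum (hVZ y hy h hh) t fun b _ => mul_nonneg (hK0' y hy b) (sq_nonneg _)
      have hty : α ≤ |t - y| := hsupp y hy t (fun e => hyt e.symm) hK0t
      have htri : |t - y| ≤ |t - EZ y h| + |EZ y h - y| := by
        calc |t - y| = |(t - EZ y h) + (EZ y h - y)| := by ring_nf
        _ ≤ |t - EZ y h| + |EZ y h - y| := abs_add_le _ _
      have habs : |y - t| - α / 4 ≤ |t - EZ y h| := by
        rw [abs_sub_comm y t]
        have := hEb y hy
        linarith
      have h0 : 0 ≤ |y - t| - α / 4 := by
        rw [abs_sub_comm y t]; linarith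
      have hsq : (|y - t| - α / 4) ^ 2 ≤ (t - EZ y h) ^ 2 := by
        rw [← sq_abs (t - EZ y h)]
        exact pow_le_pow_left₀ h0 habs 2
      calc (|y - t| - α / 4) ^ 2 * K y h t ≤ (t - EZ y h) ^ 2 * K y h t :=
        mul_le_mul_of_nonneg_right hsq (hK0' y hy t)
      _ = K y h t * (t - EZ y h) ^ 2 := mul_comm _ _
      _ ≤ VZ y h := hsingle
      _ ≤ θ := hVb y hy
    -- packing sums
    have hsepT : ∀ y ∈ T, ∀ z ∈ T, y ≠ z → α ≤ |y - z| := by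
      intro y hy z hz hyz
      rw [abs_sub_comm]
      exact hsep y hy z ⟨Or.inl hz, fun e => hyz (Eq.symm e)⟩
    have hpack : ∀ t ∈ T, Summable (fun y : T => if (y:ℝ) = t then 0 else K (y:ℝ) h t) ∧
        (∑' y : T, if (y:ℝ) = t then 0 else K (y:ℝ) h t) ≤ c₂ * θ := by
      intro t ht
      have hp := packing_sum hTc hα hsepT ht (fun y => K y h t)
        (fun y hy => hK0' y hy t) hθ0.le (hpackb t ht)
      refine ⟨hp.1, hp.2.trans ?_⟩
      rw [← hB, hc₂]
      calc 64 * θ / α ^ 2 * B = 64 * B / α ^ 2 * θ := by ring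
      _ ≤ 64 * B / α ^ 2 * θ := le_refl _
    -- g sums and bounds
    have hgdecomp : ∀ t : ℝ, ∀ ht : t ∈ T, (fun y : T => K (y:ℝ) h t) =
        (fun y : T => (if y = (⟨t, ht⟩ : T) then K t h t else 0) +
          (if (y:ℝ) = t then 0 else K (y:ℝ) h t)) := by
      intro t ht
      funext y
      by_cases hy : (y:ℝ) = t
      · have hy' : y = (⟨t, ht⟩ : T) := Subtype.ext hy
        simp [hy', hy]
      · have hy' : y ≠ (⟨t, ht⟩ : T) := fun e => hy (by rw [e])
        simp [hy', hy]
    have hgsum : ∀ t : ℝ, t ∈ T → Summable (fun y : T => K (y:ℝ) h t) := by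
      intro t ht
      rw [hgdecomp t ht]
      exact ((hasSum_ite_eq (⟨t, ht⟩ : T) (K t h t)).summable).add (hpack t ht).1
    have hgsplit : ∀ t : ℝ, ∀ ht : t ∈ T, (∑' y : T, K (y:ℝ) h t) =
        K t h t + ∑' y : T, (if (y:ℝ) = t then 0 else K (y:ℝ) h t) := by
      intro t ht
      conv_lhs => rw [hgdecomp t ht]
      rw [Summable.tsum_add (hasSum_ite_eq _ _).summable (hpack t ht).1, (hasSum_ite_eq _ _).tsum_eq]
    have hglb : ∀ t ∈ T, 1 - η ≤ ∑' y : T, K (y:ℝ) h t := by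
      intro t ht
      rw [hgsplit t ht]
      have h1 : 0 ≤ ∑' y : T, (if (y:ℝ) = t then 0 else K (y:ℝ) h t) :=
        tsum_nonneg fun y => by
          by_cases hy : (y:ℝ) = t
          · simp [hy]
          · simp only [if_neg hy]; exact hK0' y y.2 t
      have h2 := hcenter t ht
      have := hc₁θ
      linarith
    have hgub : ∀ t ∈ T, (∑' y : T, K (y:ℝ) h t) ≤ 1 + η := by
      intro t ht
      rw [hgsplit t ht]
      have h1 := (hpack t ht).2
      have h2 := hKle1 t ht t
      linarith [hc₂θ]
    -- the mean μn
    set μn : ℝ := ∑' t : T, f t * K x h t with hμn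
    have hf1' : ∀ z : ℝ, f z ≤ 1 := fun z => le_hasSum hf1 z fun b _ => hf0 b
    have hKxsum : Summable (fun t : T => K x h (t:ℝ)) := (hK1 x hx h hh).summable.subtype _
    have hμsum : Summable (fun t : T => f t * K x h t) :=
      Summable.of_nonneg_of_le (fun t => mul_nonneg (hf0 _) (hK0' x hx _))
        (fun t => mul_le_of_le_one_left (hK0' x hx _) (hf1' _)) hKxsum
    have hμtailsum : Summable (fun t : T => if t = (⟨x, hx⟩ : T) then 0 else f t * K x h t) :=
      Summable.of_nonneg_of_le
        (fun t => by by_cases hy : t = (⟨x, hx⟩ : T) <;>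
          simp [hy, mul_nonneg (hf0 _) (hK0' x hx _)])
        (fun t => by by_cases hy : t = (⟨x, hx⟩ : T)
                     · rw [if_pos hy]; exact hK0' x hx _
                     · rw [if_neg hy]
                       exact mul_le_of_le_one_left (hK0' x hx _) (hf1' _)) hKxsum
    have hsplitμ : μn = f x * K x h x +
        ∑' t : T, (if t = (⟨x, hx⟩ : T) then 0 else f t * K x h t) := by
      rw [hμn, Summable.tsum_eq_add_tsum_ite hμsum (⟨x, hx⟩ : T)]
    have hRtail : HasSum (fun z : ℝ => if z = x then 0 else K x h z) (1 - K x h x) :=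
      kernel_tail_hasSum (hK1 x hx h hh)
    have htail0 : 0 ≤ ∑' t : T, (if t = (⟨x, hx⟩ : T) then 0 else f t * K x h t) :=
      tsum_nonneg fun t => by
        by_cases hy : t = (⟨x, hx⟩ : T)
        · simp [hy]
        · simp only [if_neg hy]; exact mul_nonneg (hf0 _) (hK0' x hx _)
    have htailub : (∑' t : T, (if t = (⟨x, hx⟩ : T) then 0 else f t * K x h t)) ≤ c₁ * θ := by
      have hle : (∑' t : T, (if t = (⟨x, hx⟩ : T) then 0 else f t * K x h t)) ≤
          ∑' z : ℝ, (if z = x then 0 else K x h z) := by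
        apply Summable.tsum_le_tsum_of_inj (Subtype.val) Subtype.coe_injective
        · intro c hc
          by_cases hcx : c = x
          · simp [hcx]
          · simp only [if_neg hcx]; exact hK0' x hx c
        · intro t
          by_cases hy : t = (⟨x, hx⟩ : T)
          · have : (t : ℝ) = x := by rw [hy]
            simp [hy, this]
          · have hne : (t : ℝ) ≠ x := fun e => hy (Subtype.ext e)
            simp only [if_neg hy, if_neg hne]
            exact mul_le_of_le_one_left (hK0' x hx _) (hf1' _)
        · exact hμtailsum
        · exact hRtail.summable
      rw [hRtail.tsum_eq] at hle
      exact hle.trans (hcenter x hx)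
    have hμclose : |μn - f x| ≤ ε / 8 := by
      have heq : μn - f x = f x * (K x h x - 1) +
          ∑' t : T, (if t = (⟨x, hx⟩ : T) then 0 else f t * K x h t) := by
        rw [hsplitμ]; ring
      have hKxx1 : K x h x ≤ 1 := hKle1 x hx x
      have hKxxc : 1 - K x h x ≤ c₁ * θ := hcenter x hx
      have habs1 : |f x * (K x h x - 1)| ≤ c₁ * θ := by
        rw [abs_mul, abs_of_nonneg hfx0, abs_of_nonpos (by linarith : K x h x - 1 ≤ 0)]
        calc f x * -(K x h x - 1) ≤ 1 * -(K x h x - 1) :=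
          mul_le_mul_of_nonneg_right hfx1 (by linarith)
        _ = 1 - K x h x := by ring
        _ ≤ c₁ * θ := hKxxc
      calc |μn - f x| ≤ |f x * (K x h x - 1)| +
          |∑' t : T, (if t = (⟨x, hx⟩ : T) then 0 else f t * K x h t)| := by
              rw [heq]; exact abs_add_le _ _
      _ ≤ c₁ * θ + (c₁ * θ) := by
              rw [abs_of_nonneg htail0] at *
              exact add_le_add habs1 htailub
      _ ≤ η := by linarith
      _ ≤ ε / 8 := hηε
    -- probability part
    set Y : ℕ → Ω → ℝ := fun i ω => K x h (X i ω) with hYdef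
    have hYm : ∀ i, Measurable (Y i) := fun i => (hKm x h).comp (hXm i)
    have hYbd : ∀ i, ∀ᵐ ω ∂P, Y i ω ∈ Set.Icc (0:ℝ) 1 :=
      fun i => ae_of_all _ fun ω => ⟨hK0' x hx _, hKle1 x hx _⟩
    have hYL2 : ∀ i, MemLp (Y i) 2 P :=
      fun i => memLp_of_bounded (hYbd i) (hYm i).aestronglyMeasurable 2
    have hYint : ∀ i, Integrable (Y i) P := fun i => (hYL2 i).integrable one_le_two
    have hYE : ∀ i, ∫ ω, Y i ω ∂P = μn := fun i =>
      expectation_eq P T hTc f hf0 hf1 hfT (X i) (hXm i) (hXd i) (K x h) (hKm x h)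
        (hK0' x hx) (hKle1 x hx)
    set Sn : Ω → ℝ := fun ω => ∑ i ∈ Finset.range n, Y i ω with hSndef
    have hSnsum : Sn = ∑ i ∈ Finset.range n, Y i := by
      funext ω; rw [Finset.sum_apply]
    have hSnL2 : MemLp Sn 2 P := by
      rw [hSnsum]; exact memLp_finset_sum' _ fun i _ => hYL2 i
    have hESn : ∫ ω, Sn ω ∂P = n * μn := by
      rw [hSndef]
      rw [integral_finset_sum _ fun i _ => hYint i]
      simp only [hYE, Finset.sum_const, Finset.card_range, nsmul_eq_mul]
    have hpair : (↑(Finset.range n) : Set ℕ).Pairwise fun i j => IndepFun (Y i) (Y j) P :=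
      fun i _ j _ hij => (hXind.indepFun hij).comp (hKm x h) (hKm x h)
    have hvar_each : ∀ i, variance (Y i) P ≤ 1 / 4 := by
      intro i
      have := variance_le_sq_of_bounded (hYbd i) (hYm i).aemeasurable
      calc variance (Y i) P ≤ ((1 - 0) / 2) ^ 2 := this
      _ = 1 / 4 := by norm_num
    have hvar : variance Sn P ≤ (n:ℝ) / 4 := by
      rw [hSnsum, IndepFun.variance_sum (fun i _ => hYL2 i) hpair]
      calc ∑ i ∈ Finset.range n, variance (Y i) P ≤ ∑ _i ∈ Finset.range n, (1/4:ℝ) :=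
        Finset.sum_le_sum fun i _ => hvar_each i
      _ = (n:ℝ) / 4 := by simp [Finset.sum_const, Finset.card_range]; ring
    have hc8 : (0:ℝ) < n * ε / 8 := by positivity
    have hcheb := meas_ge_le_variance_div_sq (μ := P) hSnL2 hc8
    have hchebbd : ENNReal.ofReal (variance Sn P / (n * ε / 8) ^ 2) ≤
        ENNReal.ofReal (16 / (n * ε ^ 2)) := by
      apply ENNReal.ofReal_le_ofReal
      have hdenpos : (0:ℝ) < (n * ε / 8) ^ 2 := by positivity
      have hεne : ε ≠ 0 := ne_of_gt hε
      calc variance Sn P / (n * ε / 8) ^ 2 ≤ ((n:ℝ) / 4) / (n * ε / 8) ^ 2 := by gcongr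
      _ = 16 / (n * ε ^ 2) := by field_simp; ring
    -- bad set
    set Bad : Set Ω := ⋃ i, X i ⁻¹' Tᶜ with hBaddef
    have hBad0 : P Bad = 0 := measure_iUnion_null fun i =>
      preimage_compl_null P T hTc f hf0 hf1 hfT (X i) (hXm i) (hXd i)
    -- inclusion
    have hincl : {ω : Ω | ε ≤ dist (((n:ℝ)⁻¹ * ∑ i ∈ Finset.range n, K x h (X i ω)) /
          (∑' y : T, (n:ℝ)⁻¹ * ∑ i ∈ Finset.range n, K (y:ℝ) h (X i ω))) (f x)} ⊆
        Bad ∪ {ω : Ω | n * ε / 8 ≤ |Sn ω - ∫ ω', Sn ω' ∂P|} := by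
      intro ω hω
      by_contra hcon
      simp only [Set.mem_union, Set.mem_setOf_eq, not_or, not_le] at hcon
      obtain ⟨hgood, hdev⟩ := hcon
      have hXT : ∀ i, X i ω ∈ T := by
        intro i
        by_contra hiT
        exact hgood (Set.mem_iUnion.2 ⟨i, hiT⟩)
      rw [Set.mem_setOf_eq, Real.dist_eq] at hω
      -- the numerator
      have hSnω : ∑ i ∈ Finset.range n, K x h (X i ω) = Sn ω := rfl
      set A : ℝ := (n:ℝ)⁻¹ * ∑ i ∈ Finset.range n, K x h (X i ω) with hAdef
      have hAμ : |A - μn| ≤ ε / 8 := by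
        have heq : A - μn = (n:ℝ)⁻¹ * (Sn ω - ∫ ω', Sn ω' ∂P) := by
          rw [hAdef, hSnω, hESn]
          field_simp
        rw [heq, abs_mul, abs_inv, abs_of_pos hnR]
        calc (n:ℝ)⁻¹ * |Sn ω - ∫ ω', Sn ω' ∂P| ≤ (n:ℝ)⁻¹ * (n * ε / 8) := by
                apply mul_le_mul_of_nonneg_left hdev.le (by positivity)
        _ = ε / 8 := by field_simp
      have hAfx : |A - f x| ≤ ε / 4 := by
        calc |A - f x| = |(A - μn) + (μn - f x)| := by rw [sub_add_sub_cancel]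
        _ ≤ |A - μn| + |μn - f x| := abs_add_le _ _
        _ ≤ ε / 8 + ε / 8 := add_le_add hAμ hμclose
        _ = ε / 4 := by ring
      -- the denominator
      set C : ℝ := ∑' y : T, (n:ℝ)⁻¹ * ∑ i ∈ Finset.range n, K (y:ℝ) h (X i ω) with hCdef
      have hCeq : C = (n:ℝ)⁻¹ * ∑ i ∈ Finset.range n, (∑' y : T, K (y:ℝ) h (X i ω)) := by
        rw [hCdef, tsum_mul_left]
        congr 1
        exact Summable.tsum_finsetSum fun i _ => hgsum _ (hXT i)
      have hsumlb : (n:ℝ) * (1 - η) ≤ ∑ i ∈ Finset.range n, (∑' y : T, K (y:ℝ) h (X i ω)) := by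
        calc (n:ℝ) * (1 - η) = ∑ _i ∈ Finset.range n, (1 - η) := by
                simp [Finset.sum_const, Finset.card_range]; ring
        _ ≤ ∑ i ∈ Finset.range n, (∑' y : T, K (y:ℝ) h (X i ω)) :=
          Finset.sum_le_sum fun i _ => hglb _ (hXT i)
      have hsumub : (∑ i ∈ Finset.range n, (∑' y : T, K (y:ℝ) h (X i ω))) ≤ (n:ℝ) * (1 + η) := by
        calc (∑ i ∈ Finset.range n, (∑' y : T, K (y:ℝ) h (X i ω))) ≤
            ∑ _i ∈ Finset.range n, (1 + η) := Finset.sum_le_sum fun i _ => hgub _ (hXT i)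
        _ = (n:ℝ) * (1 + η) := by simp [Finset.sum_const, Finset.card_range]; ring
      have hClb : 1 - η ≤ C := by
        rw [hCeq]
        calc (1:ℝ) - η = (n:ℝ)⁻¹ * ((n:ℝ) * (1 - η)) := by field_simp
        _ ≤ (n:ℝ)⁻¹ * ∑ i ∈ Finset.range n, (∑' y : T, K (y:ℝ) h (X i ω)) :=
          mul_le_mul_of_nonneg_left hsumlb (by positivity)
      have hCub : C ≤ 1 + η := by
        rw [hCeq]
        calc (n:ℝ)⁻¹ * ∑ i ∈ Finset.range n, (∑' y : T, K (y:ℝ) h (X i ω)) ≤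
            (n:ℝ)⁻¹ * ((n:ℝ) * (1 + η)) := mul_le_mul_of_nonneg_left hsumub (by positivity)
        _ = 1 + η := by field_simp
      have hC0 : 0 < C := by linarith
      have hfinal : |A / C - f x| ≤ (ε / 4 + η) / C := by
        have hq : A / C - f x = (A - f x * C) / C := by field_simp
        rw [hq, abs_div, abs_of_pos hC0]
        apply div_le_div_of_nonneg_right ?_ hC0.le
        have heq2 : A - f x * C = (A - f x) + f x * (1 - C) := by ring
        rw [heq2]
        calc |(A - f x) + f x * (1 - C)| ≤ |A - f x| + |f x * (1 - C)| := abs_add_le _ _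
        _ ≤ ε / 4 + 1 * η := by
                apply add_le_add hAfx
                rw [abs_mul]
                apply mul_le_mul (by rwa [abs_of_nonneg hfx0]) ?_ (abs_nonneg _) zero_le_one
                rw [abs_le]
                constructor <;> linarith
        _ = ε / 4 + η := by ring
      have hdivbd : (ε / 4 + η) / C ≤ (ε / 4 + η) / (1/2) := by
        apply div_le_div_of_nonneg_left (by linarith) (by norm_num) (by linarith)
      have : |A / C - f x| ≤ 2 * (ε / 4 + η) := by
        calc |A / C - f x| ≤ (ε / 4 + η) / C := hfinal
        _ ≤ (ε / 4 + η) / (1/2) := hdivbd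
        _ = 2 * (ε / 4 + η) := by ring
      have hcontr : |A / C - f x| < ε := by
        calc |A / C - f x| ≤ 2 * (ε / 4 + η) := this
        _ ≤ 2 * (ε / 4 + ε / 8) := by linarith
        _ = 3 * ε / 4 := by ring
        _ < ε := by linarith
      exact absurd hω (not_le.2 hcontr)
    calc P {ω : Ω | ε ≤ dist (((n:ℝ)⁻¹ * ∑ i ∈ Finset.range n, K x h (X i ω)) /
          (∑' y : T, (n:ℝ)⁻¹ * ∑ i ∈ Finset.range n, K (y:ℝ) h (X i ω))) (f x)}
        ≤ P (Bad ∪ {ω : Ω | n * ε / 8 ≤ |Sn ω - ∫ ω', Sn ω' ∂P|}) := measure_mono hincl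
    _ ≤ P Bad + P {ω : Ω | n * ε / 8 ≤ |Sn ω - ∫ ω', Sn ω' ∂P|} := measure_union_le _ _
    _ = P {ω : Ω | n * ε / 8 ≤ |Sn ω - ∫ ω', Sn ω' ∂P|} := by rw [hBad0, zero_add]
    _ ≤ ENNReal.ofReal (variance Sn P / (n * ε / 8) ^ 2) := hcheb
    _ ≤ ENNReal.ofReal (16 / (n * ε ^ 2)) := hchebbd
  -- conclude by squeezing
  have hupper : Tendsto (fun n : ℕ => ENNReal.ofReal (16 / (n * ε ^ 2))) atTop (𝓝 0) := by
    have h1 : Tendsto (fun n : ℕ => 16 / ((n:ℝ) * ε ^ 2)) atTop (𝓝 0) :=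
      Tendsto.div_atTop tendsto_const_nhds
        (Tendsto.atTop_mul_const (by positivity) tendsto_natCast_atTop_atTop)
    have h2 := ENNReal.tendsto_ofReal h1
    simpa using h2
  show Tendsto (fun n : ℕ => P {ω : Ω | ε ≤ dist (((n:ℝ)⁻¹ * ∑ i ∈ Finset.range n, K x (H n) (X i ω)) /
      (∑' y : T, (n:ℝ)⁻¹ * ∑ i ∈ Finset.range n, K (y:ℝ) (H n) (X i ω))) (f x)}) atTop (𝓝 0)
  refine tendsto_of_tendsto_of_tendsto_of_le_of_le' tendsto_const_nhds hupper ?_ ?_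
  · exact Filter.Eventually.of_forall fun n => zero_le
  · exact Filter.eventually_atTop.2 ⟨N, key⟩
end

section
/- Suppose T is finite and that for every x ∈ T one has E(Z_{x,h}) → x and Var(Z_{x,h}) → 0 as h → 0. Then sup_{x∈T} |f̂_n(x) − f(x)| converges in probability to 0 as n → ∞. -/
open MeasureTheory ProbabilityTheory Filter Topology

lemma expectation_atomic {Ω : Type*} [MeasurableSpace Ω] (P : Measure Ω) [IsProbabilityMeasure P]
    {T : Set ℝ} (hTfin : T.Finite)
    {f : ℝ → ℝ} (hf0 : ∀ x, 0 ≤ f x) (hfT : ∀ x ∉ T, f x = 0) (hf1 : HasSum f 1)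
    {Y : Ω → ℝ} (hYm : Measurable Y) (hYd : ∀ x : ℝ, P (Y ⁻¹' {x}) = ENNReal.ofReal (f x))
    {φ : ℝ → ℝ} (hφm : Measurable φ) (hφ0 : ∀ z, 0 ≤ φ z) (hφ1 : ∀ z, φ z ≤ 1) :
    ∫ ω, φ (Y ω) ∂P = ∑ t ∈ hTfin.toFinset, f t * φ t := by
  classical
  set μ := P.map Y with hμ
  haveI : IsProbabilityMeasure μ := Measure.isProbabilityMeasure_map hYm.aemeasurable
  have hμs : ∀ x : ℝ, μ {x} = ENNReal.ofReal (f x) := by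
    intro x
    rw [hμ, Measure.map_apply hYm (measurableSet_singleton x)]
    exact hYd x
  have hsum : ∑ t ∈ hTfin.toFinset, f t = 1 := by
    have := hf1.tsum_eq
    rw [← this]
    exact (tsum_eq_sum (fun b hb => hfT b (by simpa using hb))).symm
  have hμT : μ T = 1 := by
    have : T = ⋃ t ∈ hTfin.toFinset, {t} := by simp
    rw [this, measure_biUnion_finset ?_ (fun t _ => measurableSet_singleton t)]
    · rw [Finset.sum_congr rfl (fun t _ => hμs t),
        ← ENNReal.ofReal_sum_of_nonneg (fun t _ => hf0 t), hsum, ENNReal.ofReal_one]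
    · intro a _ b _ hab
      simp [Function.onFun, Set.disjoint_singleton_left, hab]
  have hμTc : μ Tᶜ = 0 := by
    have := measure_compl (hTfin.measurableSet) (by simp : μ T ≠ ⊤)
    rw [hμT] at this; simp [this]
  have hφint : Integrable φ μ := by
    refine (memLp_top_of_bound hφm.aestronglyMeasurable 1 ?_).integrable le_top
    filter_upwards with z
    rw [Real.norm_eq_abs, abs_of_nonneg (hφ0 z)]; exact hφ1 z
  have h1 : ∫ ω, φ (Y ω) ∂P = ∫ z, φ z ∂μ :=
    (integral_map hYm.aemeasurable hφm.aestronglyMeasurable).symm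
  have h2 : ∫ z, φ z ∂μ = ∫ z in T, φ z ∂μ := by
    rw [← integral_add_compl hTfin.measurableSet hφint]
    rw [Measure.restrict_eq_zero.mpr hμTc]
    simp
  have h3 : ∫ z in T, φ z ∂μ = ∑ t ∈ hTfin.toFinset, f t * φ t := by
    have : ∫ z in T, φ z ∂μ = ∫ z in (hTfin.toFinset : Set ℝ), φ z ∂μ := by
      rw [hTfin.coe_toFinset]
    rw [this, integral_finset _ _]
    refine Finset.sum_congr rfl (fun t _ => ?_)
    rw [measureReal_def, hμs t, ENNReal.toReal_ofReal (hf0 t), smul_eq_mul]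
    exact hφint.integrableOn
  rw [h1, h2, h3]

lemma avg_chebyshev {Ω : Type*} [MeasurableSpace Ω] (P : Measure Ω) [IsProbabilityMeasure P]
    {T : Set ℝ} (hTfin : T.Finite)
    {f : ℝ → ℝ} (hf0 : ∀ x, 0 ≤ f x) (hfT : ∀ x ∉ T, f x = 0) (hf1 : HasSum f 1)
    {X : ℕ → Ω → ℝ} (hXm : ∀ i, Measurable (X i))
    (hXind : iIndepFun X P)
    (hXd : ∀ i, ∀ x : ℝ, P (X i ⁻¹' {x}) = ENNReal.ofReal (f x))
    {φ : ℝ → ℝ} (hφm : Measurable φ) (hφ0 : ∀ z, 0 ≤ φ z) (hφ1 : ∀ z, φ z ≤ 1)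
    {n : ℕ} (hn : 0 < n) {ε : ℝ} (hε : 0 < ε) :
    P {ω | ε ≤ |(n:ℝ)⁻¹ * ∑ i ∈ Finset.range n, φ (X i ω) - ∑ t ∈ hTfin.toFinset, f t * φ t|}
      ≤ ENNReal.ofReal ((n:ℝ)⁻¹ / ε ^ 2) := by
  classical
  set W : ℕ → Ω → ℝ := fun i ω => φ (X i ω) with hW
  have hWm : ∀ i, Measurable (W i) := fun i => hφm.comp (hXm i)
  have hWL2 : ∀ i, MemLp (W i) 2 P := by
    intro i
    refine (memLp_top_of_bound (hWm i).aestronglyMeasurable 1 ?_).mono_exponent le_top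
    filter_upwards with ω
    rw [Real.norm_eq_abs, abs_of_nonneg (hφ0 _)]; exact hφ1 _
  have hWmean : ∀ i, ∫ ω, W i ω ∂P = ∑ t ∈ hTfin.toFinset, f t * φ t := fun i =>
    expectation_atomic P hTfin hf0 hfT hf1 (hXm i) (hXd i) hφm hφ0 hφ1
  have hWvar : ∀ i, variance (W i) P ≤ 1 := by
    intro i
    refine le_trans (variance_le_expectation_sq (hWm i).aestronglyMeasurable) ?_
    have : ∫ ω, (W i ω) ^ 2 ∂P ≤ ∫ _ω, (1:ℝ) ∂P := by
      refine integral_mono (hWL2 i).integrable_sq (integrable_const 1) (fun ω => ?_)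
      have h0 := hφ0 (X i ω); have h1 := hφ1 (X i ω)
      nlinarith [sq_nonneg (W i ω)]
    simpa using this
  set Avg : Ω → ℝ := (n:ℝ)⁻¹ • ∑ i ∈ Finset.range n, W i with hAvg
  have hAvgL2 : MemLp Avg 2 P := (memLp_finset_sum' _ (fun i _ => hWL2 i)).const_smul _
  have hindep : Set.Pairwise ↑(Finset.range n) fun i j => IndepFun (W i) (W j) P := by
    intro i _ j _ hij
    exact (hXind.comp (fun _ => φ) (fun _ => hφm)).indepFun hij
  have hVarSum : variance (∑ i ∈ Finset.range n, W i) P ≤ n := by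
    rw [IndepFun.variance_sum (fun i _ => hWL2 i) hindep]
    calc ∑ i ∈ Finset.range n, variance (W i) P ≤ ∑ _i ∈ Finset.range n, (1:ℝ) :=
          Finset.sum_le_sum (fun i _ => hWvar i)
      _ = n := by simp
  have hVarAvg : variance Avg P ≤ (n:ℝ)⁻¹ := by
    rw [hAvg, variance_smul]
    have hn' : (0:ℝ) < n := by exact_mod_cast hn
    calc ((n:ℝ)⁻¹) ^ 2 * variance (∑ i ∈ Finset.range n, W i) P
        ≤ ((n:ℝ)⁻¹) ^ 2 * n := by
          refine mul_le_mul_of_nonneg_left hVarSum (by positivity)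
      _ = (n:ℝ)⁻¹ := by field_simp
  have hAvgMean : ∫ ω, Avg ω ∂P = ∑ t ∈ hTfin.toFinset, f t * φ t := by
    rw [hAvg]
    have : ∫ ω, ((n:ℝ)⁻¹ • ∑ i ∈ Finset.range n, W i) ω ∂P
        = (n:ℝ)⁻¹ • ∫ ω, (∑ i ∈ Finset.range n, W i) ω ∂P := by
      simp_rw [Pi.smul_apply]
      exact integral_smul _ _
    rw [this]
    have : ∫ ω, (∑ i ∈ Finset.range n, W i) ω ∂P = ∑ i ∈ Finset.range n, ∫ ω, W i ω ∂P := by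
      simp_rw [Finset.sum_apply]
      exact integral_finset_sum _ (fun i _ => ((hWL2 i).integrable one_le_two))
    rw [this, Finset.sum_congr rfl (fun i _ => hWmean i), Finset.sum_const, Finset.card_range]
    rw [smul_eq_mul, nsmul_eq_mul, ← mul_assoc, inv_mul_cancel₀ (by exact_mod_cast hn.ne'), one_mul]
  have cheb := meas_ge_le_variance_div_sq (μ := P) hAvgL2 hε
  have hsetEq : {ω | ε ≤ |(n:ℝ)⁻¹ * ∑ i ∈ Finset.range n, φ (X i ω) - ∑ t ∈ hTfin.toFinset, f t * φ t|}
      = {ω | ε ≤ |Avg ω - ∫ ω', Avg ω' ∂P|} := by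
    ext ω
    simp only [Set.mem_setOf_eq]
    rw [hAvgMean]
    simp [hAvg, Finset.sum_apply, hW]
  rw [hsetEq]
  refine le_trans cheb (ENNReal.ofReal_le_ofReal ?_)
  exact div_le_div_of_nonneg_right hVarAvg (by positivity) |>.trans_eq rfl

theorem normalized_estimator_uniform_consistency
    {Ω : Type*} [MeasurableSpace Ω] (P : Measure Ω) [IsProbabilityMeasure P]
    (T : Set ℝ) (hTc : T.Countable)
    (f : ℝ → ℝ) (hf0 : ∀ x, 0 ≤ f x) (hfT : ∀ x ∉ T, f x = 0) (hf1 : HasSum f 1)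
    (S : ℝ → Set ℝ) (hSc : ∀ x ∈ T, (S x).Countable)
    (K : ℝ → ℝ → ℝ → ℝ)
    (hK0 : ∀ x ∈ T, ∀ h > (0:ℝ), ∀ z, 0 ≤ K x h z)
    (hKS : ∀ x ∈ T, ∀ h > (0:ℝ), ∀ z ∉ S x, K x h z = 0)
    (hK1 : ∀ x ∈ T, ∀ h > (0:ℝ), HasSum (K x h) 1)
    (hKm : ∀ x h, Measurable (K x h))
    (hxS : ∀ x ∈ T, x ∈ S x)
    (α : ℝ) (hα : 0 < α)
    (hsep : ∀ x ∈ T, ∀ z ∈ (T ∪ S x) \ {x}, α ≤ |z - x|)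
    (H : ℕ → ℝ) (hH : ∀ n, 0 < H n) (hH0 : Tendsto H atTop (𝓝 0))
    (X : ℕ → Ω → ℝ) (hXm : ∀ i, Measurable (X i))
    (hXind : iIndepFun X P)
    (hXd : ∀ i, ∀ x : ℝ, P (X i ⁻¹' {x}) = ENNReal.ofReal (f x))
    (hTfin : T.Finite)
    (EZ VZ : ℝ → ℝ → ℝ)
    (hEZ : ∀ x ∈ T, ∀ h > (0:ℝ), HasSum (fun z : ℝ => K x h z * z) (EZ x h))
    (hVZ : ∀ x ∈ T, ∀ h > (0:ℝ), HasSum (fun z : ℝ => K x h z * (z - EZ x h) ^ 2) (VZ x h))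
    (hEx : ∀ x ∈ T, Tendsto (fun h => EZ x h) (𝓝[>] (0:ℝ)) (𝓝 x))
    (hVx : ∀ x ∈ T, Tendsto (fun h => VZ x h) (𝓝[>] (0:ℝ)) (𝓝 0)) :
    TendstoInMeasure P
      (fun (n : ℕ) (ω : Ω) =>
        ⨆ x : T, |((n:ℝ)⁻¹ * ∑ i ∈ Finset.range n, K (x:ℝ) (H n) (X i ω)) / (∑' y : T, (n:ℝ)⁻¹ * ∑ i ∈ Finset.range n, K (y:ℝ) (H n) (X i ω)) - f x|)
      atTop (fun _ => (0:ℝ)) := by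
  classical
  set Tfin := hTfin.toFinset with hTfinDef
  have hfle1 : ∀ t, f t ≤ 1 := fun t => le_hasSum hf1 t (fun b _ => hf0 b)
  have hKle1 : ∀ x ∈ T, ∀ h > (0:ℝ), ∀ z, K x h z ≤ 1 := fun x hx h hh z =>
    le_hasSum (hK1 x hx h hh) z (fun b _ => hK0 x hx h hh b)
  have hsumf : ∑ t ∈ Tfin, f t = 1 := by
    rw [← hf1.tsum_eq]
    exact (tsum_eq_sum (fun b hb => hfT b (by simpa [hTfinDef] using hb))).symm
  have hTne : Tfin.Nonempty := by
    rcases Finset.eq_empty_or_nonempty Tfin with h | h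
    · rw [h] at hsumf; simp at hsumf
    · exact h
  have hmemT : ∀ t ∈ Tfin, t ∈ T := fun t ht => hTfin.mem_toFinset.mp ht
  haveI : Fintype T := hTfin.fintype
  haveI : Nonempty T := by
    obtain ⟨t, ht⟩ := hTne; exact ⟨⟨t, hmemT t ht⟩⟩
  set g : ℕ → ℝ → Ω → ℝ := fun n x ω => (n:ℝ)⁻¹ * ∑ i ∈ Finset.range n, K x (H n) (X i ω)
    with hgdef
  set m : ℝ → ℕ → ℝ := fun x n => ∑ t ∈ Tfin, f t * K x (H n) t with hmdef
  set C : ℕ → Ω → ℝ := fun n ω => ∑ t ∈ Tfin, g n t ω with hCdef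
  have htsum : ∀ (n : ℕ) (ω : Ω),
      (∑' y : T, (n:ℝ)⁻¹ * ∑ i ∈ Finset.range n, K (y:ℝ) (H n) (X i ω)) = C n ω := by
    intro n ω
    rw [tsum_fintype]
    exact (Finset.sum_subtype Tfin (fun x => hTfin.mem_toFinset) (fun t => g n t ω)).symm
  have hH' : Tendsto H atTop (𝓝[>] (0:ℝ)) :=
    tendsto_nhdsWithin_iff.mpr ⟨hH0, Eventually.of_forall hH⟩
  -- Step 1: kernel concentration at the point
  have hKxx : ∀ x ∈ T, Tendsto (fun n => K x (H n) x) atTop (𝓝 1) := by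
    intro x hx
    have hEx' : ∀ᶠ h in 𝓝[>] (0:ℝ), |EZ x h - x| < α / 2 := by
      have hball : ∀ᶠ y in 𝓝 x, |y - x| < α / 2 := by
        have : Metric.ball x (α / 2) ∈ 𝓝 x := Metric.ball_mem_nhds x (by positivity)
        filter_upwards [this] with y hy
        simpa [Real.dist_eq] using hy
      exact (hEx x hx).eventually hball
    have hlow : ∀ᶠ n in atTop, 1 - VZ x (H n) / (α / 2) ^ 2 ≤ K x (H n) x := by
      filter_upwards [hH'.eventually hEx'] with n hEn
      have hh : 0 < H n := hH n
      set h := H n with hhdef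
      have hsumK := hK1 x hx h hh
      have hVsum := hVZ x hx h hh
      have hRsummable : Summable (fun z => if z = x then 0 else K x h z) := by
        refine Summable.of_nonneg_of_le (fun z => ?_) (fun z => ?_) hsumK.summable
        · split_ifs with hz
          exacts [le_rfl, hK0 x hx h hh z]
        · split_ifs with hz
          exacts [hK0 x hx h hh z, le_rfl]
      have hterm : ∀ z, (if z = x then 0 else K x h z) ≤ K x h z * (z - EZ x h) ^ 2 / (α / 2) ^ 2 := by
        intro z
        by_cases hz : z = x
        · simp only [hz, if_pos rfl]
          have := hK0 x hx h hh x
          positivity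
        · simp only [if_neg hz]
          by_cases hKz : K x h z = 0
          · simp [hKz]
          · have hzS : z ∈ S x := by
              by_contra hzs; exact hKz (hKS x hx h hh z hzs)
            have hsep' : α ≤ |z - x| := by
              refine hsep x hx z ⟨Or.inr hzS, ?_⟩
              simp [hz]
            have h1 : α / 2 ≤ |z - EZ x h| := by
              have habs : |z - x| - |EZ x h - x| ≤ |z - EZ x h| := by
                have := abs_sub_abs_le_abs_sub (z - x) (EZ x h - x)
                simpa [sub_sub_sub_cancel_right] using this
              linarith [hEn]
            have h2 : (α / 2) ^ 2 ≤ (z - EZ x h) ^ 2 := by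
              rw [← sq_abs (z - EZ x h)]
              exact pow_le_pow_left₀ (by positivity) h1 2
            rw [le_div_iff₀ (by positivity)]
            exact mul_le_mul_of_nonneg_left h2 (hK0 x hx h hh z)
      have htail : (∑' z, if z = x then 0 else K x h z) ≤ VZ x h / (α / 2) ^ 2 := by
        have hle := Summable.tsum_le_tsum hterm hRsummable (hVsum.summable.div_const _)
        have heq : (∑' z, K x h z * (z - EZ x h) ^ 2 / (α / 2) ^ 2) = VZ x h / (α / 2) ^ 2 := by
          rw [tsum_div_const, hVsum.tsum_eq]
        rw [heq] at hle
        exact hle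
      have hdecomp : (1:ℝ) = K x h x + ∑' z, if z = x then 0 else K x h z := by
        rw [← hsumK.tsum_eq]
        exact Summable.tsum_eq_add_tsum_ite hsumK.summable x
      linarith
    have hup : ∀ n, K x (H n) x ≤ 1 := fun n => hKle1 x hx (H n) (hH n) x
    have hVn : Tendsto (fun n => VZ x (H n)) atTop (𝓝 0) := (hVx x hx).comp hH'
    have hlowlim : Tendsto (fun n => 1 - VZ x (H n) / (α / 2) ^ 2) atTop (𝓝 1) := by
      have := hVn.div_const ((α / 2) ^ 2)
      simpa using (tendsto_const_nhds (x := (1:ℝ))).sub this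
    exact tendsto_of_tendsto_of_tendsto_of_le_of_le' hlowlim tendsto_const_nhds hlow
      (Eventually.of_forall hup)
  -- Step 2: mean convergence
  have hmx : ∀ x ∈ T, Tendsto (fun n => m x n) atTop (𝓝 (f x)) := by
    intro x hx
    have hxTfin : x ∈ Tfin := hTfin.mem_toFinset.mpr hx
    have hbound : ∀ n, |m x n - f x| ≤ 2 * (1 - K x (H n) x) := by
      intro n
      have hκ0 : 0 ≤ K x (H n) x := hK0 x hx (H n) (hH n) x
      have hκ1 : K x (H n) x ≤ 1 := hKle1 x hx (H n) (hH n) x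
      have hsplit : m x n = f x * K x (H n) x + ∑ t ∈ Tfin.erase x, f t * K x (H n) t :=
        (Finset.add_sum_erase Tfin (fun t => f t * K x (H n) t) hxTfin).symm
      have hS2nonneg : 0 ≤ ∑ t ∈ Tfin.erase x, f t * K x (H n) t :=
        Finset.sum_nonneg fun t _ => mul_nonneg (hf0 t) (hK0 x hx (H n) (hH n) t)
      have hS2le : ∑ t ∈ Tfin.erase x, f t * K x (H n) t ≤ 1 - K x (H n) x := by
        have h1 : ∑ t ∈ Tfin.erase x, f t * K x (H n) t ≤ ∑ t ∈ Tfin.erase x, K x (H n) t :=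
          Finset.sum_le_sum fun t _ =>
            mul_le_of_le_one_left (hK0 x hx (H n) (hH n) t) (hfle1 t)
        have h2 : K x (H n) x + ∑ t ∈ Tfin.erase x, K x (H n) t ≤ 1 := by
          rw [Finset.add_sum_erase Tfin (fun t => K x (H n) t) hxTfin]
          exact sum_le_hasSum Tfin (fun t _ => hK0 x hx (H n) (hH n) t) (hK1 x hx (H n) (hH n))
        linarith
      have hfx1 := hfle1 x
      have hfx0 := hf0 x
      rw [hsplit, abs_le]
      constructor <;> nlinarith
    have hlim2 : Tendsto (fun n => 2 * (1 - K x (H n) x)) atTop (𝓝 0) := by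
      have := (tendsto_const_nhds (x := (1:ℝ))).sub (hKxx x hx)
      simpa using this.const_mul 2
    have h0 : Tendsto (fun n => m x n - f x) atTop (𝓝 0) :=
      squeeze_zero_norm (fun n => by simpa [Real.norm_eq_abs] using hbound n) hlim2
    simpa using h0.add_const (f x)
  -- Step 3: per-point convergence in probability
  have hgx : ∀ x ∈ T, ∀ δ : ℝ, 0 < δ →
      Tendsto (fun n => P {ω | δ ≤ |g n x ω - f x|}) atTop (𝓝 0) := by
    intro x hx δ hδ
    have hev : ∀ᶠ n in atTop,
        P {ω | δ ≤ |g n x ω - f x|} ≤ ENNReal.ofReal ((n:ℝ)⁻¹ / (δ / 2) ^ 2) := by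
      have h1 : ∀ᶠ n in atTop, |m x n - f x| < δ / 2 := by
        have := Metric.tendsto_nhds.mp (hmx x hx) (δ / 2) (by positivity)
        filter_upwards [this] with n hn
        simpa [Real.dist_eq] using hn
      filter_upwards [h1, eventually_gt_atTop 0] with n hn1 hn2
      have hsub : {ω | δ ≤ |g n x ω - f x|} ⊆ {ω | δ / 2 ≤ |g n x ω - m x n|} := by
        intro ω hω
        simp only [Set.mem_setOf_eq] at *
        have h3 : |g n x ω - f x| ≤ |g n x ω - m x n| + |m x n - f x| :=
          abs_sub_le (g n x ω) (m x n) (f x)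
        linarith
      refine le_trans (measure_mono hsub) ?_
      exact avg_chebyshev P hTfin hf0 hfT hf1 hXm hXind hXd (hKm x (H n))
        (hK0 x hx (H n) (hH n)) (hKle1 x hx (H n) (hH n)) hn2 (by positivity)
    have hlim : Tendsto (fun n : ℕ => ENNReal.ofReal ((n:ℝ)⁻¹ / (δ / 2) ^ 2)) atTop (𝓝 0) := by
      rw [← ENNReal.ofReal_zero]
      apply ENNReal.tendsto_ofReal
      have := tendsto_inv_atTop_nhds_zero_nat.div_const ((δ / 2) ^ 2)
      simpa using this
    exact tendsto_of_tendsto_of_tendsto_of_le_of_le' tendsto_const_nhds hlim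
      (Eventually.of_forall fun n => zero_le) hev
  -- Step 4: convergence of the normalizer
  have hC1 : ∀ δ : ℝ, 0 < δ → Tendsto (fun n => P {ω | δ ≤ |C n ω - 1|}) atTop (𝓝 0) := by
    intro δ hδ
    have hNpos : (0:ℝ) < Tfin.card := by
      exact_mod_cast Finset.card_pos.mpr hTne
    have hsub : ∀ n, {ω | δ ≤ |C n ω - 1|} ⊆
        ⋃ t ∈ Tfin, {ω | δ / Tfin.card ≤ |g n t ω - f t|} := by
      intro n ω hω
      by_contra hnot
      simp only [Set.mem_iUnion, Set.mem_setOf_eq, not_exists, not_le] at hnot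
      simp only [Set.mem_setOf_eq] at hω
      have hlt : |C n ω - 1| < δ := by
        have h1 : C n ω - 1 = ∑ t ∈ Tfin, (g n t ω - f t) := by
          rw [hCdef]
          simp only [Finset.sum_sub_distrib, hsumf]
        rw [h1]
        calc |∑ t ∈ Tfin, (g n t ω - f t)| ≤ ∑ t ∈ Tfin, |g n t ω - f t| :=
              Finset.abs_sum_le_sum_abs _ _
          _ < ∑ _t ∈ Tfin, δ / Tfin.card :=
              Finset.sum_lt_sum_of_nonempty hTne (fun t ht => hnot t ht)
          _ = δ := by
              rw [Finset.sum_const, nsmul_eq_mul]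
              field_simp
      exact absurd hω (not_le.mpr hlt)
    have hsumlim : Tendsto
        (fun n => ∑ t ∈ Tfin, P {ω | δ / Tfin.card ≤ |g n t ω - f t|}) atTop (𝓝 0) := by
      have := tendsto_finset_sum Tfin
        (fun t ht => hgx t (hmemT t ht) (δ / Tfin.card) (by positivity))
      simpa using this
    refine tendsto_of_tendsto_of_tendsto_of_le_of_le' tendsto_const_nhds hsumlim
      (Eventually.of_forall fun n => zero_le) (Eventually.of_forall fun n => ?_)
    exact le_trans (measure_mono (hsub n)) (measure_biUnion_finset_le _ _)
  -- Step 5: conclusion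
  have hFeq : (fun (n : ℕ) (ω : Ω) =>
        ⨆ x : T, |((n:ℝ)⁻¹ * ∑ i ∈ Finset.range n, K (x:ℝ) (H n) (X i ω)) / (∑' y : T, (n:ℝ)⁻¹ * ∑ i ∈ Finset.range n, K (y:ℝ) (H n) (X i ω)) - f x|)
      = fun (n : ℕ) (ω : Ω) => ⨆ x : T, |g n (x:ℝ) ω / C n ω - f x| := by
    funext n ω
    refine iSup_congr fun x => ?_
    rw [htsum n ω]
  rw [hFeq, tendstoInMeasure_iff_dist]
  intro ε hε
  have hm₀pos : 0 < min ε 1 := lt_min hε one_pos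
  set m₀ := min ε 1 with hm₀def
  have hm₀le1 : m₀ ≤ 1 := min_le_right _ _
  have hm₀leε : m₀ ≤ ε := min_le_left _ _
  set δ := m₀ / 4 with hδdef
  have hδpos : 0 < δ := by positivity
  have hsub : ∀ n, {ω | ε ≤ dist (⨆ x : T, |g n (x:ℝ) ω / C n ω - f x|) ((fun _ => (0:ℝ)) ω)} ⊆
      {ω | δ ≤ |C n ω - 1|} ∪ ⋃ t ∈ Tfin, {ω | δ ≤ |g n t ω - f t|} := by
    intro n ω hω
    by_contra hnot
    simp only [Set.mem_union, Set.mem_iUnion, Set.mem_setOf_eq, not_or, not_exists, not_le]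
      at hnot
    obtain ⟨hCω, hgω⟩ := hnot
    simp only [Set.mem_setOf_eq] at hω
    have hδ14 : δ ≤ 1 / 4 := by
      rw [hδdef]; linarith
    have hCge : 3 / 4 ≤ C n ω := by
      have := abs_lt.mp hCω
      linarith [this.1]
    have hterm : ∀ x : T, |g n (x:ℝ) ω / C n ω - f x| ≤ 2 / 3 * m₀ := by
      intro x
      have hxT : (x:ℝ) ∈ Tfin := hTfin.mem_toFinset.mpr x.2
      have h1 : |g n (x:ℝ) ω - f x| < δ := hgω x hxT
      have hfx0 := hf0 (x:ℝ)
      have hfx1 := hfle1 (x:ℝ)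
      have hC0 : (0:ℝ) < C n ω := by linarith
      have heq : g n (x:ℝ) ω / C n ω - f x = (g n (x:ℝ) ω - f x * C n ω) / C n ω := by
        field_simp
      rw [heq, abs_div, abs_of_pos hC0]
      have hnum : |g n (x:ℝ) ω - f x * C n ω| ≤ m₀ / 2 := by
        have hrw : g n (x:ℝ) ω - f x * C n ω = (g n (x:ℝ) ω - f x) + f x * (1 - C n ω) := by
          ring
        rw [hrw]
        have h3 : |1 - C n ω| < δ := by rw [abs_sub_comm]; exact hCω
        have h4 : |f (x:ℝ) * (1 - C n ω)| ≤ |1 - C n ω| := by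
          rw [abs_mul, abs_of_nonneg hfx0]
          exact mul_le_of_le_one_left (abs_nonneg _) hfx1
        calc |(g n (x:ℝ) ω - f x) + f x * (1 - C n ω)|
            ≤ |g n (x:ℝ) ω - f x| + |f (x:ℝ) * (1 - C n ω)| := abs_add_le _ _
          _ ≤ δ + δ := by linarith
          _ = m₀ / 2 := by rw [hδdef]; ring
      calc |g n (x:ℝ) ω - f x * C n ω| / C n ω ≤ (m₀ / 2) / (3 / 4) :=
            div_le_div₀ (by positivity) hnum (by norm_num) hCge
        _ = 2 / 3 * m₀ := by ring
    have hS0 : 0 ≤ ⨆ x : T, |g n (x:ℝ) ω / C n ω - f x| :=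
      le_ciSup_of_le (Finite.bddAbove_range _) (Classical.arbitrary T) (abs_nonneg _)
    have hSle : (⨆ x : T, |g n (x:ℝ) ω / C n ω - f x|) ≤ 2 / 3 * m₀ := ciSup_le hterm
    have hlt : dist (⨆ x : T, |g n (x:ℝ) ω / C n ω - f x|) ((fun _ => (0:ℝ)) ω) < ε := by
      rw [Real.dist_eq, sub_zero, abs_of_nonneg hS0]
      have : 2 / 3 * m₀ < m₀ := by linarith
      linarith
    exact absurd hω (not_le.mpr hlt)
  have hbound : ∀ n, P {ω | ε ≤ dist (⨆ x : T, |g n (x:ℝ) ω / C n ω - f x|) ((fun _ => (0:ℝ)) ω)}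
      ≤ P {ω | δ ≤ |C n ω - 1|} + ∑ t ∈ Tfin, P {ω | δ ≤ |g n t ω - f t|} := fun n =>
    le_trans (measure_mono (hsub n))
      (le_trans (measure_union_le _ _)
        (add_le_add_right (measure_biUnion_finset_le _ _) _))
  have hlim : Tendsto (fun n => P {ω | δ ≤ |C n ω - 1|} +
      ∑ t ∈ Tfin, P {ω | δ ≤ |g n t ω - f t|}) atTop (𝓝 0) := by
    have h1 := hC1 δ hδpos
    have h2 := tendsto_finset_sum Tfin (fun t ht => hgx t (hmemT t ht) δ hδpos)
    have h2' : Tendsto (fun n => ∑ t ∈ Tfin, P {ω | δ ≤ |g n t ω - f t|}) atTop (𝓝 0) := by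
      simpa using h2
    simpa using h1.add h2'
  exact tendsto_of_tendsto_of_tendsto_of_le_of_le' tendsto_const_nhds hlim
    (Eventually.of_forall fun n => zero_le) (Eventually.of_forall hbound)
end

section
/- Fix x ∈ T and suppose that E(Z_{x,h}) → x and Var(Z_{x,h}) → 0 as h → 0. Then the non-normalized estimator f̃_n(x) converges in mean square to f(x) as n → ∞, i.e. E[|f̃_n(x) − f(x)|²] → 0. -/
open MeasureTheory ProbabilityTheory Filter Topology

theorem nonnormalized_estimator_L2_consistency
    {Ω : Type*} [MeasurableSpace Ω] (P : Measure Ω) [IsProbabilityMeasure P]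
    (T : Set ℝ) (hTc : T.Countable)
    (f : ℝ → ℝ) (hf0 : ∀ x, 0 ≤ f x) (hfT : ∀ x ∉ T, f x = 0) (hf1 : HasSum f 1)
    (S : ℝ → Set ℝ) (hSc : ∀ x ∈ T, (S x).Countable)
    (K : ℝ → ℝ → ℝ → ℝ)
    (hK0 : ∀ x ∈ T, ∀ h > (0:ℝ), ∀ z, 0 ≤ K x h z)
    (hKS : ∀ x ∈ T, ∀ h > (0:ℝ), ∀ z ∉ S x, K x h z = 0)
    (hK1 : ∀ x ∈ T, ∀ h > (0:ℝ), HasSum (K x h) 1)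
    (hKm : ∀ x h, Measurable (K x h))
    (hxS : ∀ x ∈ T, x ∈ S x)
    (α : ℝ) (hα : 0 < α)
    (hsep : ∀ x ∈ T, ∀ z ∈ (T ∪ S x) \ {x}, α ≤ |z - x|)
    (H : ℕ → ℝ) (hH : ∀ n, 0 < H n) (hH0 : Tendsto H atTop (𝓝 0))
    (X : ℕ → Ω → ℝ) (hXm : ∀ i, Measurable (X i))
    (hXind : iIndepFun X P)
    (hXd : ∀ i, ∀ x : ℝ, P (X i ⁻¹' {x}) = ENNReal.ofReal (f x))
    (x : ℝ) (hx : x ∈ T)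
    (EZ VZ : ℝ → ℝ)
    (hEZ : ∀ h > (0:ℝ), HasSum (fun z : ℝ => K x h z * z) (EZ h))
    (hVZ : ∀ h > (0:ℝ), HasSum (fun z : ℝ => K x h z * (z - EZ h) ^ 2) (VZ h))
    (hEx : Tendsto EZ (𝓝[>] (0:ℝ)) (𝓝 x))
    (hVx : Tendsto VZ (𝓝[>] (0:ℝ)) (𝓝 0))
    :
    Tendsto
      (fun n : ℕ => ∫ ω, (((n:ℝ)⁻¹ * ∑ i ∈ Finset.range n, K x (H n) (X i ω)) - f x) ^ 2 ∂P)
      atTop (𝓝 0) := by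
  have hfx0 : 0 ≤ f x := hf0 x
  have hfx1 : f x ≤ 1 := le_hasSum hf1 x fun j _ => hf0 j
  set c : ℝ → ℝ := fun h => VZ h + (EZ h - x) ^ 2 with hcdef
  -- second moment about x
  have hcsum : ∀ h > (0:ℝ), HasSum (fun z : ℝ => K x h z * (z - x) ^ 2) (c h) := by
    intro h hh
    have h1 : HasSum
        (fun z : ℝ => K x h z * (z - EZ h) ^ 2
          + ((2 * (EZ h - x)) * (K x h z * z - EZ h * K x h z)
            + (EZ h - x) ^ 2 * K x h z))
        (VZ h + ((2 * (EZ h - x)) * (EZ h - EZ h * 1) + (EZ h - x) ^ 2 * 1)) :=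
      (hVZ h hh).add ((((hEZ h hh).sub ((hK1 x hx h hh).mul_left (EZ h))).mul_left
        (2 * (EZ h - x))).add ((hK1 x hx h hh).mul_left ((EZ h - x) ^ 2)))
    convert h1 using 1
    · funext z; ring
    · show VZ h + (EZ h - x) ^ 2 = _; ring
  have hc0 : ∀ h > (0:ℝ), 0 ≤ c h := by
    intro h hh
    exact hasSum_le (fun z => mul_nonneg (hK0 x hx h hh z) (sq_nonneg _)) hasSum_zero
      (hcsum h hh)
  have hKle1 : ∀ h > (0:ℝ), ∀ z, K x h z ≤ 1 := fun h hh z =>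
    le_hasSum (hK1 x hx h hh) z fun j _ => hK0 x hx h hh j
  have hsep' : ∀ h > (0:ℝ), ∀ z, z ≠ x → K x h z * α ^ 2 ≤ K x h z * (z - x) ^ 2 := by
    intro h hh z hz
    rcases eq_or_lt_of_le (hK0 x hx h hh z) with h0 | h0
    · rw [← h0]; simp
    · have hzS : z ∈ S x := by
        by_contra hzS; exact absurd (hKS x hx h hh z hzS) h0.ne'
      have h1 : α ≤ |z - x| := hsep x hx z ⟨Or.inr hzS, hz⟩
      have h2 : α ^ 2 ≤ (z - x) ^ 2 := by
        rw [← sq_abs (z - x)]; exact pow_le_pow_left₀ hα.le h1 2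
      exact mul_le_mul_of_nonneg_left h2 h0.le
  have htail : ∀ h > (0:ℝ), ∀ z, z ≠ x → K x h z * α ^ 2 ≤ c h := by
    intro h hh z hz
    exact (hsep' h hh z hz).trans (le_hasSum (hcsum h hh) z fun j _ =>
      mul_nonneg (hK0 x hx h hh j) (sq_nonneg _))
  have hKxlow : ∀ h > (0:ℝ), (1 - K x h x) * α ^ 2 ≤ c h := by
    intro h hh
    have hg : HasSum (fun z : ℝ => (K x h z - if z = x then K x h x else 0) * α ^ 2)
        ((1 - K x h x) * α ^ 2) :=
      ((hK1 x hx h hh).sub (hasSum_ite_eq x (K x h x))).mul_right _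
    refine hasSum_le (fun z => ?_) hg (hcsum h hh)
    by_cases hz : z = x
    · subst hz; simp
    · simp only [hz, if_false, sub_zero]
      exact hsep' h hh z hz
  -- a.e. membership in T
  have hT1 : ∀ i, ∀ᵐ ω ∂P, X i ω ∈ T := by
    intro i
    have hTm : MeasurableSet T := hTc.measurableSet
    have hsupp : Function.support f ⊆ T := fun z hz => by_contra fun h => hz (hfT z h)
    have hsub : HasSum (fun z : T => f z) 1 :=
      (hasSum_subtype_iff_of_support_subset hsupp).2 hf1
    have hmap : P (X i ⁻¹' T) = 1 := by
      have hU : X i ⁻¹' T = ⋃ z ∈ T, X i ⁻¹' {z} := by ext ω; simp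
      rw [hU, measure_biUnion hTc
        (fun z _ w _ hzw => (Set.disjoint_singleton.mpr hzw).preimage _)
        (fun z _ => hXm i (measurableSet_singleton z))]
      calc ∑' z : T, P (X i ⁻¹' {(z : ℝ)}) = ∑' z : T, ENNReal.ofReal (f z) := by
            simp [hXd i]
        _ = ENNReal.ofReal (∑' z : T, f z) :=
            (ENNReal.ofReal_tsum_of_nonneg (fun z : T => hf0 z) hsub.summable).symm
        _ = 1 := by rw [hsub.tsum_eq]; simp
    have hcomp : P (X i ⁻¹' T)ᶜ = 0 := by
      rw [measure_compl (hXm i hTm) (measure_ne_top _ _), hmap, measure_univ, tsub_self]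
    rw [MeasureTheory.ae_iff]
    exact hcomp
  -- mean bounds
  have hmean : ∀ h > (0:ℝ), ∀ i, |(∫ ω, K x h (X i ω) ∂P) - f x| ≤ c h / α ^ 2 := by
    intro h hh i
    have hcd0 : 0 ≤ c h / α ^ 2 := div_nonneg (hc0 h hh) (sq_nonneg _)
    have hYm : Measurable fun ω => K x h (X i ω) := (hKm x h).comp (hXm i)
    have hYint : Integrable (fun ω => K x h (X i ω)) P :=
      (memLp_of_bounded (ae_of_all _ fun ω => ⟨hK0 x hx h hh _, hKle1 h hh _⟩)
        hYm.aestronglyMeasurable 1).integrable le_rfl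
    have hxm : MeasurableSet (X i ⁻¹' {x}) := hXm i (measurableSet_singleton x)
    have hPx : P.real (X i ⁻¹' {x}) = f x := by
      rw [measureReal_def, hXd i x, ENNReal.toReal_ofReal (hf0 x)]
    have hIind : Integrable ((X i ⁻¹' {x}).indicator fun _ => (1:ℝ)) P :=
      (integrable_const (1:ℝ)).indicator hxm
    -- lower bound
    have hlow : K x h x * f x ≤ ∫ ω, K x h (X i ω) ∂P := by
      have hle : ∀ ω, (X i ⁻¹' {x}).indicator (fun _ => K x h x) ω ≤ K x h (X i ω) := by
        intro ω
        by_cases hω : X i ω = x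
        · rw [Set.indicator_of_mem (show ω ∈ X i ⁻¹' {x} from hω), hω]
        · rw [Set.indicator_of_notMem (show ω ∉ X i ⁻¹' {x} from hω)]
          exact hK0 x hx h hh _
      have := integral_mono ((integrable_const (K x h x)).indicator hxm) hYint hle
      rwa [integral_indicator_const _ hxm, hPx, smul_eq_mul, mul_comm] at this
    -- upper bound
    have hup : (∫ ω, K x h (X i ω) ∂P) ≤ f x + c h / α ^ 2 := by
      have hae : ∀ᵐ ω ∂P, K x h (X i ω) ≤
          (X i ⁻¹' {x}).indicator (fun _ => (1:ℝ)) ω + c h / α ^ 2 := by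
        filter_upwards [hT1 i] with ω hω
        by_cases hωx : X i ω = x
        · rw [Set.indicator_of_mem (show ω ∈ X i ⁻¹' {x} from hωx), hωx]
          linarith [hKle1 h hh x]
        · rw [Set.indicator_of_notMem (show ω ∉ X i ⁻¹' {x} from hωx), zero_add,
            le_div_iff₀ (by positivity)]
          exact htail h hh (X i ω) hωx
      calc (∫ ω, K x h (X i ω) ∂P)
          ≤ ∫ ω, ((X i ⁻¹' {x}).indicator (fun _ => (1:ℝ)) ω + c h / α ^ 2) ∂P :=
            integral_mono_ae hYint (hIind.add (integrable_const _)) hae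
        _ = f x + c h / α ^ 2 := by
            rw [integral_add hIind (integrable_const _), integral_indicator_const (1:ℝ) hxm,
              integral_const, hPx]
            simp
    have hKx' : 1 - K x h x ≤ c h / α ^ 2 := by
      rw [le_div_iff₀ (by positivity : (0:ℝ) < α ^ 2)]
      exact hKxlow h hh
    rw [abs_le]
    constructor
    · have h2 : f x - c h / α ^ 2 ≤ K x h x * f x := by
        nlinarith [mul_le_mul_of_nonneg_right hKx' (hf0 x),
          mul_le_of_le_one_right hcd0 hfx1]
      linarith
    · linarith
  -- main bound for n ≥ 1
  have hbound : ∀ n : ℕ, 1 ≤ n →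
      (∫ ω, (((n:ℝ)⁻¹ * ∑ i ∈ Finset.range n, K x (H n) (X i ω)) - f x) ^ 2 ∂P)
        ≤ (n:ℝ)⁻¹ + (c (H n) / α ^ 2) ^ 2 := by
    intro n hn
    have hn0 : (0:ℝ) < (n:ℝ) := by exact_mod_cast hn
    set h := H n with hhdef
    have hh : 0 < h := hH n
    have hcd0 : 0 ≤ c h / α ^ 2 := div_nonneg (hc0 h hh) (sq_nonneg _)
    set Y : ℕ → Ω → ℝ := fun i ω => K x h (X i ω) with hYdef
    have hYm : ∀ i, Measurable (Y i) := fun i => (hKm x h).comp (hXm i)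
    have hYmem : ∀ i, MemLp (Y i) 2 P := fun i =>
      memLp_of_bounded (ae_of_all _ fun ω => ⟨hK0 x hx h hh _, hKle1 h hh _⟩)
        (hYm i).aestronglyMeasurable 2
    have hYint : ∀ i, Integrable (Y i) P := fun i => (hYmem i).integrable one_le_two
    set A : Ω → ℝ := fun ω => (n:ℝ)⁻¹ * ∑ i ∈ Finset.range n, Y i ω with hAdef
    have hSmem : MemLp (∑ i ∈ Finset.range n, Y i) 2 P :=
      memLp_finset_sum' _ fun i _ => hYmem i
    have hAeq : A = fun ω => (n:ℝ)⁻¹ * (∑ i ∈ Finset.range n, Y i) ω := by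
      funext ω; simp [hAdef]
    have hAmem : MemLp A 2 P := by
      rw [hAeq]
      exact hSmem.const_mul _
    have hAint : Integrable A P := hAmem.integrable one_le_two
    set μn : ℝ := ∫ ω, A ω ∂P with hμndef
    -- variance bound
    have hvarY : ∀ i, variance (Y i) P ≤ 1 := by
      intro i
      refine (variance_le_expectation_sq (hYm i).aestronglyMeasurable).trans ?_
      calc (∫ ω, ((Y i) ^ 2) ω ∂P) ≤ ∫ _, (1:ℝ) ∂P := by
            refine integral_mono (hYmem i).integrable_sq (integrable_const 1) fun ω => ?_
            have h1 := hK0 x hx h hh (X i ω)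
            have h2 := hKle1 h hh (X i ω)
            simp only [Pi.pow_apply]
            nlinarith
        _ = 1 := by simp
    have hindep : Set.Pairwise ((Finset.range n : Finset ℕ) : Set ℕ)
        fun i j => IndepFun (Y i) (Y j) P := by
      intro i _ j _ hij
      exact (hXind.comp (fun _ => K x h) fun _ => hKm x h).indepFun hij
    have hvarA : variance A P ≤ (n:ℝ)⁻¹ := by
      have h1 : variance A P = ((n:ℝ)⁻¹) ^ 2 * variance (∑ i ∈ Finset.range n, Y i) P := by
        rw [hAeq]; exact variance_const_mul _ _ _
      rw [h1, IndepFun.variance_sum (fun i _ => hYmem i) hindep]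
      have h2 : (∑ i ∈ Finset.range n, variance (Y i) P) ≤ (n:ℝ) := by
        calc (∑ i ∈ Finset.range n, variance (Y i) P) ≤ ∑ _i ∈ Finset.range n, (1:ℝ) :=
              Finset.sum_le_sum fun i _ => hvarY i
          _ = (n:ℝ) := by simp
      calc ((n:ℝ)⁻¹) ^ 2 * (∑ i ∈ Finset.range n, variance (Y i) P)
          ≤ ((n:ℝ)⁻¹) ^ 2 * (n:ℝ) := by
            refine mul_le_mul_of_nonneg_left h2 (by positivity)
        _ = (n:ℝ)⁻¹ := by field_simp
    -- mean of A
    have hμnb : |μn - f x| ≤ c h / α ^ 2 := by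
      have hμn : μn = (n:ℝ)⁻¹ * ∑ i ∈ Finset.range n, ∫ ω, Y i ω ∂P := by
        rw [hμndef, hAeq, integral_const_mul]
        simp only [Finset.sum_apply]
        rw [integral_finset_sum _ fun i _ => hYint i]
      have hsplit : μn - f x = (n:ℝ)⁻¹ * ∑ i ∈ Finset.range n, ((∫ ω, Y i ω ∂P) - f x) := by
        rw [hμn, Finset.sum_sub_distrib, mul_sub]
        have : (n:ℝ)⁻¹ * (∑ _i ∈ Finset.range n, f x) = f x := by
          rw [Finset.sum_const, Finset.card_range, nsmul_eq_mul]
          field_simp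
        rw [this]
      rw [hsplit, abs_mul, abs_inv, Nat.abs_cast]
      calc (n:ℝ)⁻¹ * |∑ i ∈ Finset.range n, ((∫ ω, Y i ω ∂P) - f x)|
          ≤ (n:ℝ)⁻¹ * ∑ i ∈ Finset.range n, (c h / α ^ 2) := by
            refine mul_le_mul_of_nonneg_left ?_ (by positivity)
            refine (Finset.abs_sum_le_sum_abs _ _).trans ?_
            exact Finset.sum_le_sum fun i _ => hmean h hh i
        _ = c h / α ^ 2 := by
            rw [Finset.sum_const, Finset.card_range, nsmul_eq_mul]
            field_simp
    -- decomposition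
    have hcent : (∫ ω, (A ω - μn) ∂P) = 0 := by
      rw [integral_sub hAint (integrable_const μn)]
      simp [hμndef]
    have hvar_eq : (∫ ω, (A ω - μn) ^ 2 ∂P) = variance A P := by
      rw [variance_eq_integral hAmem.aestronglyMeasurable.aemeasurable]
    have hAc2 : Integrable (fun ω => (A ω - μn) ^ 2) P := by
      have := (hAmem.sub (memLp_const μn)).integrable_sq
      simpa using this
    have hAc1 : Integrable (fun ω => A ω - μn) P := hAint.sub (integrable_const μn)
    have hexp : (∫ ω, (A ω - f x) ^ 2 ∂P)
        = (∫ ω, (A ω - μn) ^ 2 ∂P) + (2 * (μn - f x)) * (∫ ω, (A ω - μn) ∂P)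
          + (μn - f x) ^ 2 := by
      have h1 : ∀ ω, (A ω - f x) ^ 2
          = (A ω - μn) ^ 2 + ((2 * (μn - f x)) * (A ω - μn) + (μn - f x) ^ 2) := by
        intro ω; ring
      have hI1 : Integrable (fun ω => 2 * (μn - f x) * (A ω - μn)) P := hAc1.const_mul _
      have hI2 : Integrable (fun ω => 2 * (μn - f x) * (A ω - μn) + (μn - f x) ^ 2) P :=
        hI1.add (integrable_const _)
      simp_rw [h1]
      rw [integral_add hAc2 hI2, integral_add hI1 (integrable_const _), integral_const_mul,
        integral_const]
      simp [add_assoc]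
    have hfinal : (∫ ω, (A ω - f x) ^ 2 ∂P) ≤ (n:ℝ)⁻¹ + (c h / α ^ 2) ^ 2 := by
      rw [hexp, hcent, hvar_eq, mul_zero, add_zero]
      have h2 : (μn - f x) ^ 2 ≤ (c h / α ^ 2) ^ 2 := by
        rw [← sq_abs (μn - f x)]
        exact pow_le_pow_left₀ (abs_nonneg _) hμnb 2
      linarith [hvarA]
    exact hfinal
  -- squeeze
  have hHpos : Tendsto H atTop (𝓝[>] (0:ℝ)) :=
    tendsto_nhdsWithin_iff.2 ⟨hH0, Eventually.of_forall hH⟩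
  have hcH : Tendsto (fun n => c (H n)) atTop (𝓝 0) := by
    have h1 := hVx.comp hHpos
    have h2 : Tendsto (fun n => (EZ (H n) - x) ^ 2) atTop (𝓝 ((x - x) ^ 2)) :=
      ((hEx.comp hHpos).sub tendsto_const_nhds).pow 2
    have h3 := h1.add h2
    simpa using h3
  have hb : Tendsto (fun n : ℕ => (n:ℝ)⁻¹ + (c (H n) / α ^ 2) ^ 2) atTop (𝓝 0) := by
    have h1 : Tendsto (fun n : ℕ => (n:ℝ)⁻¹) atTop (𝓝 0) :=
      tendsto_inv_atTop_zero.comp tendsto_natCast_atTop_atTop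
    have h2 : Tendsto (fun n : ℕ => (c (H n) / α ^ 2) ^ 2) atTop (𝓝 (((0:ℝ) / α ^ 2) ^ 2)) :=
      (hcH.div_const _).pow 2
    have h3 := h1.add h2
    simpa using h3
  refine squeeze_zero'
    (Eventually.of_forall fun n => integral_nonneg fun ω => sq_nonneg _) ?_ hb
  filter_upwards [eventually_ge_atTop 1] with n hn
  exact hbound n hn
end

section
/- Fix x ∈ T and suppose that E(Z_{x,h}) → x and Var(Z_{x,h}) → 0 as h → 0. Then the non-normalized estimator f̃_n(x) converges almost surely to f(x) as n → ∞. -/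
open MeasureTheory ProbabilityTheory Filter Topology

set_option maxHeartbeats 1000000 in
theorem nonnormalized_estimator_as_consistency
    {Ω : Type*} [MeasurableSpace Ω] (P : Measure Ω) [IsProbabilityMeasure P]
    (T : Set ℝ) (hTc : T.Countable)
    (f : ℝ → ℝ) (hf0 : ∀ x, 0 ≤ f x) (hfT : ∀ x ∉ T, f x = 0) (hf1 : HasSum f 1)
    (S : ℝ → Set ℝ) (hSc : ∀ x ∈ T, (S x).Countable)
    (K : ℝ → ℝ → ℝ → ℝ)
    (hK0 : ∀ x ∈ T, ∀ h > (0:ℝ), ∀ z, 0 ≤ K x h z)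
    (hKS : ∀ x ∈ T, ∀ h > (0:ℝ), ∀ z ∉ S x, K x h z = 0)
    (hK1 : ∀ x ∈ T, ∀ h > (0:ℝ), HasSum (K x h) 1)
    (hKm : ∀ x h, Measurable (K x h))
    (hxS : ∀ x ∈ T, x ∈ S x)
    (α : ℝ) (hα : 0 < α)
    (hsep : ∀ x ∈ T, ∀ z ∈ (T ∪ S x) \ {x}, α ≤ |z - x|)
    (H : ℕ → ℝ) (hH : ∀ n, 0 < H n) (hH0 : Tendsto H atTop (𝓝 0))
    (X : ℕ → Ω → ℝ) (hXm : ∀ i, Measurable (X i))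
    (hXind : iIndepFun X P)
    (hXd : ∀ i, ∀ x : ℝ, P (X i ⁻¹' {x}) = ENNReal.ofReal (f x))
    (x : ℝ) (hx : x ∈ T)
    (EZ VZ : ℝ → ℝ)
    (hEZ : ∀ h > (0:ℝ), HasSum (fun z : ℝ => K x h z * z) (EZ h))
    (hVZ : ∀ h > (0:ℝ), HasSum (fun z : ℝ => K x h z * (z - EZ h) ^ 2) (VZ h))
    (hEx : Tendsto EZ (𝓝[>] (0:ℝ)) (𝓝 x))
    (hVx : Tendsto VZ (𝓝[>] (0:ℝ)) (𝓝 0))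
    :
    ∀ᵐ ω ∂P, Tendsto (fun n : ℕ => (n:ℝ)⁻¹ * ∑ i ∈ Finset.range n, K x (H n) (X i ω)) atTop (𝓝 (f x)) := by
  classical
  set c : ℝ := (α / 2) ^ 2 with hc
  have hc0 : 0 < c := by positivity
  set g : ℝ → ℝ := fun z => if z = x then 1 else 0 with hg
  -- Step A : Chebyshev-type deterministic bound
  have stepA : ∀ h > (0:ℝ), |EZ h - x| ≤ α / 2 →
      ∀ z ∈ T, |K x h z - g z| ≤ VZ h / c := by
    intro h hh hE z hz
    have hK := hK1 x hx h hh
    have hV := hVZ h hh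
    have hVnn : 0 ≤ VZ h := hV.nonneg fun w => mul_nonneg (hK0 x hx h hh w) (sq_nonneg _)
    have hsep2 : ∀ w, w ≠ x → w ∈ T ∪ S x → c ≤ (w - EZ h) ^ 2 := by
      intro w hw hwm
      have h1 : α ≤ |w - x| := hsep x hx w ⟨hwm, hw⟩
      have h3 : |(w - x) - (w - EZ h)| = |EZ h - x| := by
        rw [show (w - x) - (w - EZ h) = EZ h - x by ring]
      have h4 := abs_sub_abs_le_abs_sub (w - x) (w - EZ h)
      have h2 : α / 2 ≤ |w - EZ h| := by rw [h3] at h4; linarith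
      calc c = (α / 2) ^ 2 := rfl
        _ ≤ |w - EZ h| ^ 2 := by nlinarith [abs_nonneg (w - EZ h)]
        _ = (w - EZ h) ^ 2 := sq_abs _
    by_cases hzx : z = x
    · simp only [hg, if_pos hzx]
      have hle1 : K x h z ≤ 1 := le_hasSum hK z fun j _ => hK0 x hx h hh j
      -- sum over the complement of {z}
      have hK' : HasSum (Function.update (K x h) z 0) (0 - K x h z + 1) := hK.update z 0
      have hV' : HasSum (Function.update (fun w => K x h w * (w - EZ h) ^ 2) z 0)
          (0 - K x h z * (z - EZ h) ^ 2 + VZ h) := hV.update z 0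
      have hterm : ∀ w, c * Function.update (K x h) z 0 w ≤
          Function.update (fun w => K x h w * (w - EZ h) ^ 2) z 0 w := by
        intro w
        rcases eq_or_ne w z with rfl | hw
        · simp
        · rw [Function.update_of_ne hw, Function.update_of_ne hw]
          have hwx : w ≠ x := fun hcon => hw (hcon.trans hzx.symm)
          rcases eq_or_ne (K x h w) 0 with h0 | h0
          · simp [h0]
          · have hwS : w ∈ S x := by
              by_contra hws; exact h0 (hKS x hx h hh w hws)
            have := hsep2 w hwx (Or.inr hwS)
            nlinarith [hK0 x hx h hh w]
      have hmain : c * (0 - K x h z + 1) ≤ 0 - K x h z * (z - EZ h) ^ 2 + VZ h :=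
        hasSum_le hterm (hK'.mul_left c) hV'
      have hnn : 0 ≤ K x h z * (z - EZ h) ^ 2 := mul_nonneg (hK0 x hx h hh z) (sq_nonneg _)
      have habs : |K x h z - 1| = 1 - K x h z := by
        rw [abs_of_nonpos (by linarith)]; ring
      rw [habs, le_div_iff₀ hc0]
      nlinarith
    · simp only [hg, if_neg hzx, sub_zero]
      rw [abs_of_nonneg (hK0 x hx h hh z)]
      rcases eq_or_ne (K x h z) 0 with h0 | h0
      · rw [h0]; exact div_nonneg hVnn hc0.le
      · have hzS : z ∈ S x := by
          by_contra hzs; exact h0 (hKS x hx h hh z hzs)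
        have h1 : c ≤ (z - EZ h) ^ 2 := hsep2 z hzx (Or.inl hz)
        have h2 : K x h z * (z - EZ h) ^ 2 ≤ VZ h :=
          le_hasSum hV z fun j _ => mul_nonneg (hK0 x hx h hh j) (sq_nonneg _)
        rw [le_div_iff₀ hc0]
        nlinarith [hK0 x hx h hh z]
  -- Step B : eventual uniform bound
  have hHpos : Tendsto H atTop (𝓝[>] (0:ℝ)) :=
    tendsto_nhdsWithin_iff.2 ⟨hH0, Eventually.of_forall fun n => hH n⟩
  have hVn : Tendsto (fun n => VZ (H n)) atTop (𝓝 0) := hVx.comp hHpos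
  have hEn : Tendsto (fun n => EZ (H n)) atTop (𝓝 x) := hEx.comp hHpos
  have stepB : ∀ ε > (0:ℝ), ∀ᶠ n in atTop, ∀ z ∈ T, |K x (H n) z - g z| ≤ ε := by
    intro ε hε
    have h1 : ∀ᶠ y in 𝓝 x, |y - x| ≤ α / 2 := by
      have := Metric.closedBall_mem_nhds x (half_pos hα)
      filter_upwards [this] with y hy
      simpa [Real.dist_eq] using hy
    have h2 : ∀ᶠ n in atTop, |EZ (H n) - x| ≤ α / 2 := hEn.eventually h1
    have h3 : ∀ᶠ n in atTop, VZ (H n) < ε * c :=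
      hVn.eventually (eventually_lt_nhds (by positivity))
    filter_upwards [h2, h3] with n hn2 hn3 z hz
    have := stepA (H n) (hH n) hn2 z hz
    have h4 : VZ (H n) / c ≤ ε := by
      rw [div_le_iff₀ hc0]; nlinarith
    linarith
  -- Step C : a.e. all X i land in T
  have hTm : MeasurableSet T := hTc.measurableSet
  have hsupp : Function.support f ⊆ T := fun z hz => by
    by_contra h; exact hz (hfT z h)
  have hfT1 : HasSum (fun z : T => f z) 1 :=
    (hasSum_subtype_iff_of_support_subset hsupp).2 hf1
  have hPT : ∀ i, P (X i ⁻¹' T) = 1 := by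
    intro i
    have hU : X i ⁻¹' T = ⋃ z ∈ T, X i ⁻¹' {z} := by
      ext ω; simp
    rw [hU, measure_biUnion hTc
      (fun a _ b _ hab => Set.disjoint_left.2 fun ω h1 h2 => by
        simp only [Set.mem_preimage, Set.mem_singleton_iff] at h1 h2
        exact hab (h1 ▸ h2 ▸ rfl))
      (fun b _ => hXm i (measurableSet_singleton b))]
    have : ∀ z : T, P (X i ⁻¹' {(z : ℝ)}) = ENNReal.ofReal (f z) := fun z => hXd i z
    rw [tsum_congr this, ← ENNReal.ofReal_tsum_of_nonneg (f := fun z : T => f z) (fun z => hf0 z) hfT1.summable,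
      hfT1.tsum_eq, ENNReal.ofReal_one]
  have haeT : ∀ᵐ ω ∂P, ∀ i, X i ω ∈ T := by
    rw [ae_all_iff]
    intro i
    have : P ((X i ⁻¹' T)ᶜ) = 0 :=
      (prob_compl_eq_zero_iff (hXm i hTm)).2 (hPT i)
    exact this
  -- Step D : strong law of large numbers for the indicator variables
  have hgm : Measurable g := by
    apply Measurable.ite _ measurable_const measurable_const
    exact measurableSet_eq
  set Y : ℕ → Ω → ℝ := fun i ω => g (X i ω) with hY
  have hYm : ∀ i, Measurable (Y i) := fun i => hgm.comp (hXm i)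
  have hPpre : ∀ (A : Set ℝ), (A = ∅ ∨ A = {x} ∨ A = {x}ᶜ ∨ A = Set.univ) →
      ∀ i, P (X i ⁻¹' A) = P (X 0 ⁻¹' A) := by
    rintro A (rfl | rfl | rfl | rfl) i
    · simp
    · rw [hXd i x, hXd 0 x]
    · rw [show (X i ⁻¹' {x}ᶜ) = (X i ⁻¹' {x})ᶜ from rfl,
        show (X 0 ⁻¹' {x}ᶜ) = (X 0 ⁻¹' {x})ᶜ from rfl,
        measure_compl (hXm i (measurableSet_singleton x)) (measure_ne_top _ _),
        measure_compl (hXm 0 (measurableSet_singleton x)) (measure_ne_top _ _),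
        hXd i x, hXd 0 x]
    · simp
  have hident : ∀ i, IdentDistrib (Y i) (Y 0) P P := by
    intro i
    refine ⟨(hYm i).aemeasurable, (hYm 0).aemeasurable, ?_⟩
    refine Measure.ext fun s hs => ?_
    rw [Measure.map_apply (hYm i) hs, Measure.map_apply (hYm 0) hs]
    have hA : g ⁻¹' s = ∅ ∨ g ⁻¹' s = {x} ∨ g ⁻¹' s = {x}ᶜ ∨ g ⁻¹' s = Set.univ := by
      by_cases h1 : (1:ℝ) ∈ s <;> by_cases h0 : (0:ℝ) ∈ s
      · right; right; right
        ext z; simp only [Set.mem_preimage, Set.mem_univ, iff_true, hg]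
        split <;> assumption
      · right; left
        ext z; simp only [Set.mem_preimage, Set.mem_singleton_iff, hg]
        split <;> simp_all
      · right; right; left
        ext z
        simp only [Set.mem_preimage, Set.mem_compl_iff, Set.mem_singleton_iff, hg]
        split <;> simp_all
      · left
        ext z; simp only [Set.mem_preimage, Set.mem_empty_iff_false, iff_false, hg]
        split <;> assumption
    exact hPpre _ hA i
  have hindep : Pairwise (Function.onFun (IndepFun · · P) Y) := by
    intro i j hij
    exact (hXind.indepFun hij).comp hgm hgm
  have hint : Integrable (Y 0) P := by
    refine Integrable.mono' (integrable_const 1) (hYm 0).aestronglyMeasurable ?_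
    refine Eventually.of_forall fun ω => ?_
    simp only [hY, hg, Real.norm_eq_abs]
    split <;> simp
  have hYind : Y 0 = Set.indicator (X 0 ⁻¹' {x}) (fun _ => (1:ℝ)) := by
    ext ω
    simp only [hY, hg, Set.indicator_apply, Set.mem_preimage, Set.mem_singleton_iff]
  have hmean : P[Y 0] = f x := by
    rw [hYind, integral_indicator_const (1:ℝ) (hXm 0 (measurableSet_singleton x)),
      measureReal_def, hXd 0 x, smul_eq_mul, mul_one, ENNReal.toReal_ofReal (hf0 x)]
  have hslln := strong_law_ae_real Y hint hindep hident
  rw [hmean] at hslln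
  -- Final combination
  filter_upwards [haeT, hslln] with ω hωT hωY
  have hA : Tendsto (fun n : ℕ => (n:ℝ)⁻¹ * ∑ i ∈ Finset.range n, Y i ω) atTop (𝓝 (f x)) := by
    simpa [div_eq_inv_mul] using hωY
  have hD : Tendsto (fun n : ℕ =>
      ((n:ℝ)⁻¹ * ∑ i ∈ Finset.range n, K x (H n) (X i ω)) -
      ((n:ℝ)⁻¹ * ∑ i ∈ Finset.range n, Y i ω)) atTop (𝓝 0) := by
    rw [NormedAddCommGroup.tendsto_nhds_zero]
    intro ε hε
    filter_upwards [stepB (ε / 2) (half_pos hε)] with n hn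
    rcases Nat.eq_zero_or_pos n with rfl | hn0
    · simpa using hε
    have hnpos : (0:ℝ) < n := Nat.cast_pos.2 hn0
    have hsum : |∑ i ∈ Finset.range n, (K x (H n) (X i ω) - Y i ω)| ≤
        ∑ i ∈ Finset.range n, (ε / 2) := by
      refine (Finset.abs_sum_le_sum_abs _ _).trans (Finset.sum_le_sum fun i _ => ?_)
      exact hn (X i ω) (hωT i)
    rw [Finset.sum_const, Finset.card_range, nsmul_eq_mul] at hsum
    have heq : ((n:ℝ)⁻¹ * ∑ i ∈ Finset.range n, K x (H n) (X i ω)) -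
        ((n:ℝ)⁻¹ * ∑ i ∈ Finset.range n, Y i ω) =
        (n:ℝ)⁻¹ * ∑ i ∈ Finset.range n, (K x (H n) (X i ω) - Y i ω) := by
      rw [Finset.sum_sub_distrib, mul_sub]
    rw [Real.norm_eq_abs, heq, abs_mul, abs_of_nonneg (by positivity : (0:ℝ) ≤ (n:ℝ)⁻¹)]
    calc (n:ℝ)⁻¹ * |∑ i ∈ Finset.range n, (K x (H n) (X i ω) - Y i ω)|
        ≤ (n:ℝ)⁻¹ * ((n:ℝ) * (ε / 2)) := by
          exact mul_le_mul_of_nonneg_left hsum (by positivity)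
      _ = ε / 2 := by field_simp
      _ < ε := by linarith
  have := hD.add hA
  simpa using this
end

section
/- Under Assumptions (A1), sup_{x∈T} | Var[K_{x,h_n}(X_1)] − f(x)(1 − f(x)) | → 0 as n → ∞; that is, the variance of the kernel evaluated at one observation converges, uniformly in the target x ∈ T, to f(x)(1 − f(x)). -/
open MeasureTheory ProbabilityTheory Filter Topology

set_option maxHeartbeats 1000000 in

theorem kernel_variance_uniform_limit
    {Ω : Type*} [MeasurableSpace Ω] (P : Measure Ω) [IsProbabilityMeasure P]
    (T : Set ℝ) (hTc : T.Countable)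
    (f : ℝ → ℝ) (hf0 : ∀ x, 0 ≤ f x) (hfT : ∀ x ∉ T, f x = 0) (hf1 : HasSum f 1)
    (S : ℝ → Set ℝ) (hSc : ∀ x ∈ T, (S x).Countable)
    (K : ℝ → ℝ → ℝ → ℝ)
    (hK0 : ∀ x ∈ T, ∀ h > (0:ℝ), ∀ z, 0 ≤ K x h z)
    (hKS : ∀ x ∈ T, ∀ h > (0:ℝ), ∀ z ∉ S x, K x h z = 0)
    (hK1 : ∀ x ∈ T, ∀ h > (0:ℝ), HasSum (K x h) 1)
    (hKm : ∀ x h, Measurable (K x h))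
    (hxS : ∀ x ∈ T, x ∈ S x)
    (α : ℝ) (hα : 0 < α)
    (hsep : ∀ x ∈ T, ∀ z ∈ (T ∪ S x) \ {x}, α ≤ |z - x|)
    (H : ℕ → ℝ) (hH : ∀ n, 0 < H n) (hH0 : Tendsto H atTop (𝓝 0))
    (X1 : Ω → ℝ) (hX1m : Measurable X1)
    (hX1d : ∀ x : ℝ, P (X1 ⁻¹' {x}) = ENNReal.ofReal (f x))
    (EZ VZ : ℝ → ℝ → ℝ)
    (hEZ : ∀ x ∈ T, ∀ h > (0:ℝ), HasSum (fun z : ℝ => K x h z * z) (EZ x h))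
    (hVZ : ∀ x ∈ T, ∀ h > (0:ℝ), HasSum (fun z : ℝ => K x h z * (z - EZ x h) ^ 2) (VZ x h))
    (hA1E : ∀ ε > (0:ℝ), ∃ N : ℕ, ∀ n ≥ N, ∀ x ∈ T, |EZ x (H n) - x| ≤ ε)
    (hA1V : ∀ ε > (0:ℝ), ∃ N : ℕ, ∀ n ≥ N, ∀ x ∈ T, VZ x (H n) ≤ ε)
    :
    ∀ ε > (0:ℝ), ∃ N : ℕ, ∀ n ≥ N, ∀ x ∈ T,
      |(∫ ω, (K x (H n) (X1 ω) - ∫ ω', K x (H n) (X1 ω') ∂P) ^ 2 ∂P) - f x * (1 - f x)| ≤ ε := by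
  intro ε hε
  have hα2 : (0:ℝ) < (α/2)^2 := by positivity
  obtain ⟨N1, hN1⟩ := hA1E (α/2) (by positivity)
  obtain ⟨N2, hN2⟩ := hA1V ((α/2)^2 * (ε/4)) (by positivity)
  have hTmeas : MeasurableSet T := hTc.measurableSet
  haveI : Countable T := hTc.to_subtype
  have hsupp : Function.support f ⊆ T := fun x hx => by
    by_contra h; exact hx (hfT x h)
  have hsumT : HasSum (fun x : T => f x) 1 :=
    (hasSum_subtype_iff_of_support_subset hsupp).2 hf1
  have hPT : P (X1 ⁻¹' T) = 1 := by
    have hUnion : X1 ⁻¹' T = ⋃ x : T, X1 ⁻¹' {(x:ℝ)} := by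
      ext ω; simp
    rw [hUnion, measure_iUnion]
    · have h1 : ∀ x : T, P (X1 ⁻¹' {(x:ℝ)}) = ENNReal.ofReal (f x) := fun x => hX1d x
      simp_rw [h1]
      rw [← ENNReal.ofReal_tsum_of_nonneg (fun x : T => hf0 x) hsumT.summable,
        hsumT.tsum_eq, ENNReal.ofReal_one]
    · intro i j hij
      refine Disjoint.preimage _ ?_
      simp only [Set.disjoint_singleton_left, Set.mem_singleton_iff]
      exact fun hc => hij (Subtype.coe_injective hc)
    · exact fun i => hX1m (measurableSet_singleton _)
  have haeT : ∀ᵐ ω ∂P, X1 ω ∈ T := by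
    rw [ae_iff]
    have heq : {ω | ¬ X1 ω ∈ T} = (X1 ⁻¹' T)ᶜ := rfl
    rw [heq, measure_compl (hX1m hTmeas) (measure_ne_top _ _), hPT, measure_univ]
    simp
  refine ⟨max N1 N2, fun n hn x hx => ?_⟩
  have hh : 0 < H n := hH n
  set δ := ε/4 with hδdef
  have hδ : 0 < δ := by positivity
  set k := K x (H n) with hk_def
  have hk0 : ∀ z, 0 ≤ k z := hK0 x hx (H n) hh
  have hk1 : HasSum k 1 := hK1 x hx (H n) hh
  have hkle1 : ∀ z, k z ≤ 1 := fun z => le_hasSum hk1 z (fun j _ => hk0 j)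
  have hEc : |EZ x (H n) - x| ≤ α/2 := hN1 n (le_trans (le_max_left _ _) hn) x hx
  have hVc : VZ x (H n) ≤ (α/2)^2 * δ := hN2 n (le_trans (le_max_right _ _) hn) x hx
  have hconc : 1 - k x ≤ δ := by
    have hle : (0 - k x + 1) * ((α/2)^2) ≤ VZ x (H n) := by
      refine hasSum_le ?_ ((hk1.update x 0).mul_right ((α/2)^2)) (hVZ x hx (H n) hh)
      intro z
      by_cases hzx : z = x
      · subst hzx
        simp only [Function.update_self, zero_mul]
        exact mul_nonneg (hk0 _) (sq_nonneg _)
      · rw [Function.update_of_ne hzx]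
        by_cases hzS : z ∈ S x
        · have hsep' : α ≤ |z - x| := hsep x hx z ⟨Or.inr hzS, hzx⟩
          have htri : |z - x| ≤ |z - EZ x (H n)| + |EZ x (H n) - x| := by
            have hzz : z - x = (z - EZ x (H n)) + (EZ x (H n) - x) := by ring
            rw [hzz]; exact abs_add_le _ _
          have hsq : (α/2)^2 ≤ (z - EZ x (H n))^2 := by
            nlinarith [abs_nonneg (z - EZ x (H n)), sq_abs (z - EZ x (H n)), hα.le]
          exact mul_le_mul_of_nonneg_left hsq (hk0 z)
        · simp [hk_def, hKS x hx (H n) hh z hzS]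
    nlinarith [hα2]
  have hky : ∀ y ∈ T, y ≠ x → k y ≤ δ := by
    intro y hy hyx
    have hsum2 : k x + k y ≤ 1 := by
      have := sum_le_hasSum ({x, y} : Finset ℝ) (fun i _ => hk0 i) hk1
      rwa [Finset.sum_pair (Ne.symm hyx)] at this
    linarith
  have hWm : Measurable (fun ω => k (X1 ω)) := (hKm x (H n)).comp hX1m
  have hW0 : ∀ ω, 0 ≤ k (X1 ω) := fun ω => hk0 _
  have hW1 : ∀ ω, k (X1 ω) ≤ 1 := fun ω => hkle1 _
  have hWint : Integrable (fun ω => k (X1 ω)) P := by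
    refine (integrable_const (1:ℝ)).mono' hWm.aestronglyMeasurable (ae_of_all _ fun ω => ?_)
    rw [Real.norm_eq_abs, abs_of_nonneg (hW0 ω)]; exact hW1 ω
  have hW2int : Integrable (fun ω => k (X1 ω) ^ 2) P := by
    refine (integrable_const (1:ℝ)).mono' ((hWm.pow_const 2).aestronglyMeasurable)
      (ae_of_all _ fun ω => ?_)
    rw [Real.norm_eq_abs, abs_of_nonneg (by positivity)]
    nlinarith [hW0 ω, hW1 ω]
  set μW := ∫ ω', k (X1 ω') ∂P with hμW
  have hvar : ∫ ω, (k (X1 ω) - μW)^2 ∂P = (∫ ω, k (X1 ω) ^2 ∂P) - μW^2 := by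
    have hexp : ∀ ω, (k (X1 ω) - μW)^2 = k (X1 ω)^2 - (2*μW) * k (X1 ω) + μW^2 := fun ω => by ring
    simp_rw [hexp]
    have hint1 : Integrable (fun ω => k (X1 ω)^2 - (2*μW) * k (X1 ω)) P := hW2int.sub (hWint.const_mul _)
    rw [integral_add hint1 (integrable_const _),
        integral_sub hW2int (hWint.const_mul _), integral_const_mul, integral_const]
    simp only [measure_univ, probReal_univ, ENNReal.toReal_one, smul_eq_mul, one_mul, mul_one]
    rw [← hμW]; ring
  set A := X1 ⁻¹' {x} with hA
  have hAm : MeasurableSet A := hX1m (measurableSet_singleton x)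
  set B : Ω → ℝ := A.indicator (fun _ => (1:ℝ)) with hB
  have hBval : ∀ ω, B ω = if X1 ω = x then 1 else 0 := fun ω => by
    by_cases hc : X1 ω = x <;> simp [hB, hA, Set.indicator_apply, hc]
  have hBint : Integrable B P := (integrable_const 1).indicator hAm
  have hintB : ∫ ω, B ω ∂P = f x := by
    rw [hB, integral_indicator_const _ hAm]
    simp [hA, measureReal_def, hX1d x, ENNReal.toReal_ofReal (hf0 x)]
  have hBsq : ∀ ω, B ω ^ 2 = B ω := fun ω => by
    rw [hBval ω]; split <;> norm_num
  have hB2int : Integrable (fun ω => B ω ^ 2) P :=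
    hBint.congr (ae_of_all _ fun ω => (hBsq ω).symm)
  have hintB2 : ∫ ω, B ω ^ 2 ∂P = f x := by
    calc ∫ ω, B ω ^ 2 ∂P = ∫ ω, B ω ∂P := by simp_rw [hBsq]
      _ = f x := hintB
  have hfx1 : f x ≤ 1 := le_hasSum hf1 x fun j _ => hf0 j
  have haeWB : ∀ᵐ ω ∂P, |k (X1 ω) - B ω| ≤ δ := by
    filter_upwards [haeT] with ω hωT
    rw [hBval ω]
    by_cases hc : X1 ω = x
    · rw [if_pos hc]
      rw [hc, abs_le]
      constructor <;> [linarith; linarith [hkle1 x]]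
    · rw [if_neg hc]
      have hle : k (X1 ω) ≤ δ := hky (X1 ω) hωT hc
      rw [sub_zero, abs_of_nonneg (hW0 ω)]
      exact hle
  have haeWB2 : ∀ᵐ ω ∂P, |k (X1 ω)^2 - B ω^2| ≤ 2*δ := by
    filter_upwards [haeWB] with ω hω
    have hB01 : 0 ≤ B ω ∧ B ω ≤ 1 := by rw [hBval ω]; split <;> norm_num
    have heq : k (X1 ω)^2 - B ω^2 = (k (X1 ω) - B ω) * (k (X1 ω) + B ω) := by ring
    rw [heq, abs_mul]
    have h2 : |k (X1 ω) + B ω| ≤ 2 := by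
      rw [abs_of_nonneg (by linarith [hW0 ω, hB01.1])]
      linarith [hW1 ω, hB01.2]
    calc |k (X1 ω) - B ω| * |k (X1 ω) + B ω| ≤ δ * 2 :=
          mul_le_mul hω h2 (abs_nonneg _) (le_of_lt hδ)
      _ = 2*δ := by ring
  have hd1 : |μW - f x| ≤ δ := by
    rw [hμW, ← hintB, ← integral_sub hWint hBint]
    calc |∫ ω, (k (X1 ω) - B ω) ∂P| ≤ ∫ ω, |k (X1 ω) - B ω| ∂P := by
          simpa [Real.norm_eq_abs] using
            norm_integral_le_integral_norm (fun ω => k (X1 ω) - B ω) (μ := P)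
      _ ≤ ∫ _, δ ∂P := integral_mono_ae ((hWint.sub hBint).abs) (integrable_const δ) haeWB
      _ = δ := by simp [measure_univ]
  have hd2 : |(∫ ω, k (X1 ω) ^2 ∂P) - f x| ≤ 2*δ := by
    rw [← hintB2, ← integral_sub hW2int hB2int]
    calc |∫ ω, (k (X1 ω)^2 - B ω^2) ∂P| ≤ ∫ ω, |k (X1 ω)^2 - B ω^2| ∂P := by
          simpa [Real.norm_eq_abs] using
            norm_integral_le_integral_norm (fun ω => k (X1 ω)^2 - B ω^2) (μ := P)
      _ ≤ ∫ _, 2*δ ∂P := integral_mono_ae ((hW2int.sub hB2int).abs) (integrable_const _) haeWB2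
      _ = 2*δ := by simp [measure_univ]
  have hμ0 : 0 ≤ μW := integral_nonneg hW0
  have hμ1 : μW ≤ 1 := by
    rw [hμW]
    calc (∫ ω', k (X1 ω') ∂P) ≤ ∫ _, (1:ℝ) ∂P := integral_mono hWint (integrable_const 1) hW1
      _ = 1 := by simp
  have key : |μW^2 - (f x)^2| ≤ 2*δ := by
    have heq : μW^2 - (f x)^2 = (μW - f x)*(μW + f x) := by ring
    rw [heq, abs_mul]
    have h2 : |μW + f x| ≤ 2 := by
      rw [abs_of_nonneg (by linarith [hf0 x])]; linarith
    nlinarith [abs_nonneg (μW - f x)]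
  have hgoal : |((∫ ω, k (X1 ω) ^2 ∂P) - μW^2) - f x * (1 - f x)| ≤ ε := by
    rw [abs_le] at hd2 key ⊢
    constructor <;> nlinarith [hd2.1, hd2.2, key.1, key.2]
  rw [hvar]
  exact hgoal
end

section
/- Under Assumptions (A1), sup over pairs (x, y) ∈ T² with x ≠ y of | Cov(K_{x,h_n}(X_1), K_{y,h_n}(X_1)) + f(x) f(y) | → 0 as n → ∞; that is, the covariance of the kernels at two distinct targets converges, uniformly on {(x,y) ∈ T² : x ≠ y}, to −f(x) f(y). -/
open MeasureTheory ProbabilityTheory Filter Topology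

/-- Tail bound for a discrete pmf concentrated near `x`. -/
lemma covAux_tail (G : ℝ → ℝ) (hG0 : ∀ z, 0 ≤ G z) (hG1 : HasSum G 1)
    (m V x α : ℝ) (hα : 0 < α)
    (hV : HasSum (fun z => G z * (z - m) ^ 2) V)
    (hm : |m - x| ≤ α / 2)
    (hsupp : ∀ z, G z ≠ 0 → z = x ∨ α ≤ |z - x|) :
    1 - G x ≤ 4 / α ^ 2 * V ∧ ∀ z, z ≠ x → G z ≤ 1 - G x := by
  classical
  have hD : HasSum (fun z => if z = x then 0 else G z) (1 - G x) := by
    have := hG1.sub (hasSum_ite_eq x (G x))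
    have e : (fun z => if z = x then 0 else G z) = fun b => G b - if b = x then G x else 0 := by
      funext z
      by_cases hz : z = x <;> simp [hz]
    rw [e]; exact this
  have hterm : ∀ z, (if z = x then 0 else G z) ≤ 4 / α ^ 2 * (G z * (z - m) ^ 2) := by
    intro z
    by_cases hz : z = x
    · simp only [hz, if_pos rfl]
      exact mul_nonneg (by positivity) (mul_nonneg (hG0 _) (sq_nonneg _))
    · simp only [if_neg hz]
      by_cases hGz : G z = 0
      · rw [hGz]; positivity
      · rcases hsupp z hGz with h1 | h1
        · exact absurd h1 hz
        · have h2 : α / 2 ≤ |z - m| := by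
            have h3 := abs_sub_abs_le_abs_sub (z - x) (m - x)
            have h4 : (z - x) - (m - x) = z - m := by ring
            rw [h4] at h3
            linarith
          have h5 : (α / 2) ^ 2 ≤ (z - m) ^ 2 := by
            have := pow_le_pow_left₀ (by positivity) h2 2
            rwa [sq_abs] at this
          have h6 := hG0 z
          have h7 : 1 ≤ 4 / α ^ 2 * (z - m) ^ 2 := by
            rw [div_mul_eq_mul_div, le_div_iff₀ (by positivity)]
            nlinarith
          calc G z = G z * 1 := (mul_one _).symm
            _ ≤ G z * (4 / α ^ 2 * (z - m) ^ 2) := mul_le_mul_of_nonneg_left h7 h6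
            _ = 4 / α ^ 2 * (G z * (z - m) ^ 2) := by ring
  constructor
  · exact hasSum_le hterm hD (hV.mul_left (4 / α ^ 2))
  · intro z hz
    have := le_hasSum hD z (fun j _ => by by_cases hj : j = x <;> simp [hj, hG0 j])
    simpa [if_neg hz] using this

theorem kernel_covariance_uniform_limit
    {Ω : Type*} [MeasurableSpace Ω] (P : Measure Ω) [IsProbabilityMeasure P]
    (T : Set ℝ) (hTc : T.Countable)
    (f : ℝ → ℝ) (hf0 : ∀ x, 0 ≤ f x) (hfT : ∀ x ∉ T, f x = 0) (hf1 : HasSum f 1)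
    (S : ℝ → Set ℝ) (hSc : ∀ x ∈ T, (S x).Countable)
    (K : ℝ → ℝ → ℝ → ℝ)
    (hK0 : ∀ x ∈ T, ∀ h > (0:ℝ), ∀ z, 0 ≤ K x h z)
    (hKS : ∀ x ∈ T, ∀ h > (0:ℝ), ∀ z ∉ S x, K x h z = 0)
    (hK1 : ∀ x ∈ T, ∀ h > (0:ℝ), HasSum (K x h) 1)
    (hKm : ∀ x h, Measurable (K x h))
    (hxS : ∀ x ∈ T, x ∈ S x)
    (α : ℝ) (hα : 0 < α)
    (hsep : ∀ x ∈ T, ∀ z ∈ (T ∪ S x) \ {x}, α ≤ |z - x|)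
    (H : ℕ → ℝ) (hH : ∀ n, 0 < H n) (hH0 : Tendsto H atTop (𝓝 0))
    (X1 : Ω → ℝ) (hX1m : Measurable X1)
    (hX1d : ∀ x : ℝ, P (X1 ⁻¹' {x}) = ENNReal.ofReal (f x))
    (EZ VZ : ℝ → ℝ → ℝ)
    (hEZ : ∀ x ∈ T, ∀ h > (0:ℝ), HasSum (fun z : ℝ => K x h z * z) (EZ x h))
    (hVZ : ∀ x ∈ T, ∀ h > (0:ℝ), HasSum (fun z : ℝ => K x h z * (z - EZ x h) ^ 2) (VZ x h))
    (hA1E : ∀ ε > (0:ℝ), ∃ N : ℕ, ∀ n ≥ N, ∀ x ∈ T, |EZ x (H n) - x| ≤ ε)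
    (hA1V : ∀ ε > (0:ℝ), ∃ N : ℕ, ∀ n ≥ N, ∀ x ∈ T, VZ x (H n) ≤ ε)
    :
    ∀ ε > (0:ℝ), ∃ N : ℕ, ∀ n ≥ N, ∀ x ∈ T, ∀ y ∈ T, x ≠ y →
      |(∫ ω, (K x (H n) (X1 ω) - ∫ ω', K x (H n) (X1 ω') ∂P) *
             (K y (H n) (X1 ω) - ∫ ω', K y (H n) (X1 ω') ∂P) ∂P) + f x * f y| ≤ ε := by
  intro ε hε
  obtain ⟨N1, hN1⟩ := hA1E (α / 2) (by positivity)
  obtain ⟨N2, hN2⟩ := hA1V (ε * α ^ 2 / 16) (by positivity)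
  refine ⟨max N1 N2, fun n hn x hx y hy hxy => ?_⟩
  set h := H n with hh
  have hhpos : 0 < h := hH n
  -- generic facts for any point t ∈ T
  have key : ∀ t ∈ T,
      (1 - K t h t ≤ ε / 4) ∧ (∀ z, z ≠ t → K t h z ≤ 1 - K t h t) ∧ (0 ≤ 1 - K t h t) := by
    intro t ht
    have hsupp : ∀ z, K t h z ≠ 0 → z = t ∨ α ≤ |z - t| := by
      intro z hz
      by_cases hzt : z = t
      · exact Or.inl hzt
      · right
        have hzS : z ∈ S t := by
          by_contra hc
          exact hz (hKS t ht h hhpos z hc)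
        exact hsep t ht z ⟨Or.inr hzS, hzt⟩
    have hm : |EZ t h - t| ≤ α / 2 := hN1 n (le_trans (le_max_left _ _) hn) t ht
    obtain ⟨h1, h2⟩ := covAux_tail (K t h) (hK0 t ht h hhpos) (hK1 t ht h hhpos)
      (EZ t h) (VZ t h) t α hα (hVZ t ht h hhpos) hm hsupp
    have hVle : VZ t h ≤ ε * α ^ 2 / 16 := hN2 n (le_trans (le_max_right _ _) hn) t ht
    have hVnn : 0 ≤ VZ t h := by
      have h9 : (0:ℝ) ≤ 4 / α ^ 2 * VZ t h := by
        refine le_trans ?_ h1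
        have := le_hasSum (hK1 t ht h hhpos) t (fun j _ => hK0 t ht h hhpos j)
        linarith
      by_contra hc
      push_neg at hc
      have : 4 / α ^ 2 * VZ t h < 0 := mul_neg_of_pos_of_neg (by positivity) hc
      linarith
    refine ⟨?_, h2, ?_⟩
    · calc 1 - K t h t ≤ 4 / α ^ 2 * VZ t h := h1
        _ ≤ 4 / α ^ 2 * (ε * α ^ 2 / 16) := by
            apply mul_le_mul_of_nonneg_left hVle; positivity
        _ = ε / 4 := by field_simp; ring
    · have := le_hasSum (hK1 t ht h hhpos) t (fun j _ => hK0 t ht h hhpos j)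
      linarith
  -- notation
  set δx := 1 - K x h x with hδx
  set δy := 1 - K y h y with hδy
  obtain ⟨hδxε, hδxtail, hδx0⟩ := key x hx
  obtain ⟨hδyε, hδytail, hδy0⟩ := key y hy
  have hf_le_one : ∀ t : ℝ, f t ≤ 1 := fun t => le_hasSum hf1 t (fun j _ => hf0 j)
  have hK_le_one : ∀ t ∈ T, ∀ z, K t h z ≤ 1 := fun t ht z =>
    le_hasSum (hK1 t ht h hhpos) z (fun j _ => hK0 t ht h hhpos j)
  -- the random variables
  set u : Ω → ℝ := fun ω => K x h (X1 ω) with hu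
  set v : Ω → ℝ := fun ω => K y h (X1 ω) with hv
  set A : Set Ω := X1 ⁻¹' {x} with hA
  set B : Set Ω := X1 ⁻¹' {y} with hB
  have hAmeas : MeasurableSet A := hX1m (measurableSet_singleton x)
  have hBmeas : MeasurableSet B := hX1m (measurableSet_singleton y)
  set u₀ : Ω → ℝ := A.indicator (fun _ => (1:ℝ)) with hu₀
  set v₀ : Ω → ℝ := B.indicator (fun _ => (1:ℝ)) with hv₀
  have hum : Measurable u := (hKm x h).comp hX1m
  have hvm : Measurable v := (hKm y h).comp hX1m
  have hu01 : ∀ ω, 0 ≤ u ω ∧ u ω ≤ 1 := fun ω => ⟨hK0 x hx h hhpos _, hK_le_one x hx _⟩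
  have hv01 : ∀ ω, 0 ≤ v ω ∧ v ω ≤ 1 := fun ω => ⟨hK0 y hy h hhpos _, hK_le_one y hy _⟩
  have hui : Integrable u P := by
    refine ⟨hum.aestronglyMeasurable, ?_⟩
    refine (hasFiniteIntegral_const (1:ℝ)).mono' ?_
    filter_upwards with ω
    rw [Real.norm_eq_abs, abs_le]
    exact ⟨by linarith [(hu01 ω).1], (hu01 ω).2⟩
  have hvi : Integrable v P := by
    refine ⟨hvm.aestronglyMeasurable, ?_⟩
    refine (hasFiniteIntegral_const (1:ℝ)).mono' ?_
    filter_upwards with ω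
    rw [Real.norm_eq_abs, abs_le]
    exact ⟨by linarith [(hv01 ω).1], (hv01 ω).2⟩
  have hu₀i : Integrable u₀ P := by
    refine Integrable.indicator (integrable_const 1) hAmeas
  have hv₀i : Integrable v₀ P := by
    refine Integrable.indicator (integrable_const 1) hBmeas
  -- integrals of indicators
  have hintu₀ : ∫ ω, u₀ ω ∂P = f x := by
    rw [hu₀, integral_indicator_const (1:ℝ) hAmeas, smul_eq_mul, mul_one, hA, measureReal_def, hX1d x,
      ENNReal.toReal_ofReal (hf0 x)]
  have hintv₀ : ∫ ω, v₀ ω ∂P = f y := by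
    rw [hv₀, integral_indicator_const (1:ℝ) hBmeas, smul_eq_mul, mul_one, hB, measureReal_def, hX1d y,
      ENNReal.toReal_ofReal (hf0 y)]
  -- pointwise closeness
  have hupt : ∀ ω, |u ω - u₀ ω| ≤ δx := by
    intro ω
    by_cases hω : X1 ω = x
    · have : u₀ ω = 1 := by simp [hu₀, hA, Set.indicator, hω]
      rw [this]
      simp only [hu, hω]
      rw [abs_sub_comm, abs_of_nonneg (by linarith [hK_le_one x hx x])]
    · have : u₀ ω = 0 := by simp [hu₀, hA, Set.indicator, hω]
      rw [this, sub_zero, abs_of_nonneg (hK0 x hx h hhpos _)]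
      exact hδxtail _ hω
  have hvpt : ∀ ω, |v ω - v₀ ω| ≤ δy := by
    intro ω
    by_cases hω : X1 ω = y
    · have : v₀ ω = 1 := by simp [hv₀, hB, Set.indicator, hω]
      rw [this]
      simp only [hv, hω]
      rw [abs_sub_comm, abs_of_nonneg (by linarith [hK_le_one y hy y])]
    · have : v₀ ω = 0 := by simp [hv₀, hB, Set.indicator, hω]
      rw [this, sub_zero, abs_of_nonneg (hK0 y hy h hhpos _)]
      exact hδytail _ hω
  -- mean closeness
  set mu := ∫ ω, u ω ∂P with hmu
  set mv := ∫ ω, v ω ∂P with hmv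
  have hmuf : |mu - f x| ≤ δx := by
    have : mu - f x = ∫ ω, (u ω - u₀ ω) ∂P := by
      rw [integral_sub hui hu₀i, hintu₀]
    rw [this, ← Real.norm_eq_abs]
    calc ‖∫ ω, (u ω - u₀ ω) ∂P‖ ≤ δx * (P Set.univ).toReal := by
          apply norm_integral_le_of_norm_le_const
          filter_upwards with ω
          rw [Real.norm_eq_abs]; exact hupt ω
      _ = δx := by simp
  have hmvf : |mv - f y| ≤ δy := by
    have : mv - f y = ∫ ω, (v ω - v₀ ω) ∂P := by
      rw [integral_sub hvi hv₀i, hintv₀]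
    rw [this, ← Real.norm_eq_abs]
    calc ‖∫ ω, (v ω - v₀ ω) ∂P‖ ≤ δy * (P Set.univ).toReal := by
          apply norm_integral_le_of_norm_le_const
          filter_upwards with ω
          rw [Real.norm_eq_abs]; exact hvpt ω
      _ = δy := by simp
  -- bounds on means
  have hmu01 : 0 ≤ mu ∧ mu ≤ 1 := by
    constructor
    · exact integral_nonneg (fun ω => (hu01 ω).1)
    · calc mu ≤ ∫ _, (1:ℝ) ∂P := integral_mono hui (integrable_const 1) (fun ω => (hu01 ω).2)
        _ = 1 := by simp
  have hmv01 : 0 ≤ mv ∧ mv ≤ 1 := by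
    constructor
    · exact integral_nonneg (fun ω => (hv01 ω).1)
    · calc mv ≤ ∫ _, (1:ℝ) ∂P := integral_mono hvi (integrable_const 1) (fun ω => (hv01 ω).2)
        _ = 1 := by simp
  -- product integrand
  set W : Ω → ℝ := fun ω => (u ω - mu) * (v ω - mv) with hW
  set W₀ : Ω → ℝ := fun ω => (u₀ ω - f x) * (v₀ ω - f y) with hW₀
  have hu₀v₀ : ∀ ω, u₀ ω * v₀ ω = 0 := by
    intro ω
    by_cases hω : X1 ω = x
    · have hωB : ω ∉ B := by
        simp only [hB, Set.mem_preimage, Set.mem_singleton_iff, hω]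
        exact hxy
      have : v₀ ω = 0 := by rw [hv₀, Set.indicator_of_notMem hωB]
      rw [this, mul_zero]
    · have hωA : ω ∉ A := by
        simp only [hA, Set.mem_preimage, Set.mem_singleton_iff]
        exact hω
      have : u₀ ω = 0 := by rw [hu₀, Set.indicator_of_notMem hωA]
      rw [this, zero_mul]
  have hintW₀ : ∫ ω, W₀ ω ∂P = -(f x * f y) := by
    have hrw : ∀ ω, W₀ ω = f x * f y - f y * u₀ ω - f x * v₀ ω := by
      intro ω
      have h0 := hu₀v₀ ω
      simp only [hW₀]
      nlinarith [h0]
    have heq : ∫ ω, W₀ ω ∂P = ∫ ω, (f x * f y - f y * u₀ ω - f x * v₀ ω) ∂P := by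
      congr 1; funext ω; exact hrw ω
    have e1 : ∫ ω, f y * u₀ ω ∂P = f y * f x := by rw [integral_const_mul, hintu₀]
    have e2 : ∫ ω, f x * v₀ ω ∂P = f x * f y := by rw [integral_const_mul, hintv₀]
    have i0 : Integrable (fun _ : Ω => f x * f y) P := integrable_const _
    have i1 : Integrable (fun ω => f y * u₀ ω) P := hu₀i.const_mul _
    have i2 : Integrable (fun ω => f x * v₀ ω) P := hv₀i.const_mul _
    have i3 : Integrable (fun ω => f x * f y - f y * u₀ ω) P := i0.sub i1
    rw [heq, integral_sub i3 i2, integral_sub i0 i1, integral_const, e1, e2]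
    simp only [measureReal_def, measure_univ, ENNReal.toReal_one, smul_eq_mul, one_mul]
    ring
  -- integrability of W and W₀
  have hWi : Integrable W P := by
    refine ⟨((hum.sub measurable_const).mul (hvm.sub measurable_const)).aestronglyMeasurable, ?_⟩
    refine (hasFiniteIntegral_const ((1 + |mu|) * (1 + |mv|))).mono' ?_
    filter_upwards with ω
    rw [Real.norm_eq_abs, hW, abs_mul]
    have h1 : |u ω - mu| ≤ 1 + |mu| := by
      have h3 := le_abs_self mu; have h4 := neg_abs_le mu
      rw [abs_le]; constructor <;> linarith [(hu01 ω).1, (hu01 ω).2]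
    have h2 : |v ω - mv| ≤ 1 + |mv| := by
      have h3 := le_abs_self mv; have h4 := neg_abs_le mv
      rw [abs_le]; constructor <;> linarith [(hv01 ω).1, (hv01 ω).2]
    exact mul_le_mul h1 h2 (abs_nonneg _) (by positivity)
  have hW₀i : Integrable W₀ P := by
    have hmeas : Measurable W₀ := by
      apply Measurable.mul
      · exact ((measurable_const.indicator hAmeas).sub measurable_const)
      · exact ((measurable_const.indicator hBmeas).sub measurable_const)
    refine ⟨hmeas.aestronglyMeasurable, ?_⟩
    refine (hasFiniteIntegral_const ((1 + |f x|) * (1 + |f y|))).mono' ?_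
    filter_upwards with ω
    rw [Real.norm_eq_abs, hW₀, abs_mul]
    have hu₀01 : 0 ≤ u₀ ω ∧ u₀ ω ≤ 1 := by
      simp only [hu₀, Set.indicator]; split <;> norm_num
    have hv₀01 : 0 ≤ v₀ ω ∧ v₀ ω ≤ 1 := by
      simp only [hv₀, Set.indicator]; split <;> norm_num
    have h1 : |u₀ ω - f x| ≤ 1 + |f x| := by
      have h3 := le_abs_self (f x); have h4 := neg_abs_le (f x)
      rw [abs_le]; constructor <;> linarith [hu₀01.1, hu₀01.2]
    have h2 : |v₀ ω - f y| ≤ 1 + |f y| := by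
      have h3 := le_abs_self (f y); have h4 := neg_abs_le (f y)
      rw [abs_le]; constructor <;> linarith [hv₀01.1, hv₀01.2]
    exact mul_le_mul h1 h2 (abs_nonneg _) (by positivity)
  -- pointwise bound on W - W₀
  have hWpt : ∀ ω, |W ω - W₀ ω| ≤ 2 * δx + 2 * δy := by
    intro ω
    have hsplit : W ω - W₀ ω =
        ((u ω - mu) - (u₀ ω - f x)) * (v ω - mv)
          + (u₀ ω - f x) * ((v ω - mv) - (v₀ ω - f y)) := by
      simp only [hW, hW₀]; ring
    rw [hsplit]
    have hb1 : |(u ω - mu) - (u₀ ω - f x)| ≤ 2 * δx := by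
      have : (u ω - mu) - (u₀ ω - f x) = (u ω - u₀ ω) - (mu - f x) := by ring
      rw [this]
      calc |(u ω - u₀ ω) - (mu - f x)| ≤ |u ω - u₀ ω| + |mu - f x| := abs_sub _ _
        _ ≤ δx + δx := add_le_add (hupt ω) hmuf
        _ = 2 * δx := by ring
    have hb2 : |(v ω - mv) - (v₀ ω - f y)| ≤ 2 * δy := by
      have : (v ω - mv) - (v₀ ω - f y) = (v ω - v₀ ω) - (mv - f y) := by ring
      rw [this]
      calc |(v ω - v₀ ω) - (mv - f y)| ≤ |v ω - v₀ ω| + |mv - f y| := abs_sub _ _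
        _ ≤ δy + δy := add_le_add (hvpt ω) hmvf
        _ = 2 * δy := by ring
    have hb3 : |v ω - mv| ≤ 1 := by
      rw [abs_le]; exact ⟨by linarith [(hv01 ω).1, hmv01.2], by linarith [(hv01 ω).2, hmv01.1]⟩
    have hb4 : |u₀ ω - f x| ≤ 1 := by
      have hu₀01 : 0 ≤ u₀ ω ∧ u₀ ω ≤ 1 := by
        simp only [hu₀, Set.indicator]; split <;> norm_num
      rw [abs_le]
      exact ⟨by linarith [hu₀01.1, hf_le_one x], by linarith [hu₀01.2, hf0 x]⟩
    calc |((u ω - mu) - (u₀ ω - f x)) * (v ω - mv)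
          + (u₀ ω - f x) * ((v ω - mv) - (v₀ ω - f y))|
        ≤ |((u ω - mu) - (u₀ ω - f x)) * (v ω - mv)|
          + |(u₀ ω - f x) * ((v ω - mv) - (v₀ ω - f y))| := abs_add_le _ _
      _ = |(u ω - mu) - (u₀ ω - f x)| * |v ω - mv|
          + |u₀ ω - f x| * |(v ω - mv) - (v₀ ω - f y)| := by rw [abs_mul, abs_mul]
      _ ≤ 2 * δx * 1 + 1 * (2 * δy) := by
          apply add_le_add
          · exact mul_le_mul hb1 hb3 (abs_nonneg _) (by linarith)
          · exact mul_le_mul hb4 hb2 (abs_nonneg _) (by linarith)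
      _ = 2 * δx + 2 * δy := by ring
  -- conclusion
  have hgoal : (∫ ω, W ω ∂P) + f x * f y = ∫ ω, (W ω - W₀ ω) ∂P := by
    rw [integral_sub hWi hW₀i, hintW₀]; ring
  have : |(∫ ω, W ω ∂P) + f x * f y| ≤ 2 * δx + 2 * δy := by
    rw [hgoal, ← Real.norm_eq_abs]
    calc ‖∫ ω, (W ω - W₀ ω) ∂P‖ ≤ (2 * δx + 2 * δy) * (P Set.univ).toReal := by
          apply norm_integral_le_of_norm_le_const
          filter_upwards with ω
          rw [Real.norm_eq_abs]; exact hWpt ω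
      _ = 2 * δx + 2 * δy := by simp
  calc |(∫ ω, (K x (H n) (X1 ω) - ∫ ω', K x (H n) (X1 ω') ∂P) *
             (K y (H n) (X1 ω) - ∫ ω', K y (H n) (X1 ω') ∂P) ∂P) + f x * f y|
      = |(∫ ω, W ω ∂P) + f x * f y| := rfl
    _ ≤ 2 * δx + 2 * δy := this
    _ ≤ 2 * (ε / 4) + 2 * (ε / 4) := by
        apply add_le_add <;> [linarith [hδxε]; linarith [hδyε]]
    _ = ε := by ring
end

section
/- Under Assumptions (A1), the variance of the normalizing variable C_n converges to 0; moreover there exists N ∈ ℕ such that Var(C_n) ≤ 3/n for all n ≥ N. -/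
open MeasureTheory ProbabilityTheory Filter Topology

lemma aux_floor_close {α u w : ℝ} (hα : 0 < α) (h : ⌊u / α⌋ = ⌊w / α⌋) : |u - w| < α := by
  have h1 := Int.floor_le (u / α)
  have h2 := Int.lt_floor_add_one (u / α)
  have h3 := Int.floor_le (w / α)
  have h4 := Int.lt_floor_add_one (w / α)
  have hc : ((⌊u / α⌋ : ℤ) : ℝ) = ((⌊w / α⌋ : ℤ) : ℝ) := by exact_mod_cast h
  have hu : u = u / α * α := (div_mul_cancel₀ u hα.ne').symm
  have hw : w = w / α * α := (div_mul_cancel₀ w hα.ne').symm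
  rw [abs_lt]
  constructor <;> nlinarith [mul_lt_mul_of_pos_right h2 hα, mul_le_mul_of_nonneg_right h1 hα.le,
    mul_lt_mul_of_pos_right h4 hα, mul_le_mul_of_nonneg_right h3 hα.le]

lemma aux_tsum_inv_sq_le : ∑' k : ℕ, (1 : ℝ) / (k : ℝ) ^ 2 ≤ 2 := by
  rw [hasSum_zeta_two.tsum_eq]
  nlinarith [Real.pi_lt_d2, Real.pi_pos]

theorem variance_of_normalizing_constant
    {Ω : Type*} [MeasurableSpace Ω] (P : Measure Ω) [IsProbabilityMeasure P]
    (T : Set ℝ) (hTc : T.Countable)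
    (f : ℝ → ℝ) (hf0 : ∀ x, 0 ≤ f x) (hfT : ∀ x ∉ T, f x = 0) (hf1 : HasSum f 1)
    (S : ℝ → Set ℝ) (hSc : ∀ x ∈ T, (S x).Countable)
    (K : ℝ → ℝ → ℝ → ℝ)
    (hK0 : ∀ x ∈ T, ∀ h > (0:ℝ), ∀ z, 0 ≤ K x h z)
    (hKS : ∀ x ∈ T, ∀ h > (0:ℝ), ∀ z ∉ S x, K x h z = 0)
    (hK1 : ∀ x ∈ T, ∀ h > (0:ℝ), HasSum (K x h) 1)
    (hKm : ∀ x h, Measurable (K x h))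
    (hxS : ∀ x ∈ T, x ∈ S x)
    (α : ℝ) (hα : 0 < α)
    (hsep : ∀ x ∈ T, ∀ z ∈ (T ∪ S x) \ {x}, α ≤ |z - x|)
    (H : ℕ → ℝ) (hH : ∀ n, 0 < H n) (hH0 : Tendsto H atTop (𝓝 0))
    (X : ℕ → Ω → ℝ) (hXm : ∀ i, Measurable (X i))
    (hXind : iIndepFun X P)
    (hXd : ∀ i, ∀ x : ℝ, P (X i ⁻¹' {x}) = ENNReal.ofReal (f x))
    (EZ VZ : ℝ → ℝ → ℝ)
    (hEZ : ∀ x ∈ T, ∀ h > (0:ℝ), HasSum (fun z : ℝ => K x h z * z) (EZ x h))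
    (hVZ : ∀ x ∈ T, ∀ h > (0:ℝ), HasSum (fun z : ℝ => K x h z * (z - EZ x h) ^ 2) (VZ x h))
    (hA1E : ∀ ε > (0:ℝ), ∃ N : ℕ, ∀ n ≥ N, ∀ x ∈ T, |EZ x (H n) - x| ≤ ε)
    (hA1V : ∀ ε > (0:ℝ), ∃ N : ℕ, ∀ n ≥ N, ∀ x ∈ T, VZ x (H n) ≤ ε)
    :
    Tendsto
      (fun n : ℕ =>
        ∫ ω, ((∑' y : T, (n:ℝ)⁻¹ * ∑ i ∈ Finset.range n, K (y:ℝ) (H n) (X i ω)) - ∫ ω', (∑' y : T, (n:ℝ)⁻¹ * ∑ i ∈ Finset.range n, K (y:ℝ) (H n) (X i ω')) ∂P) ^ 2 ∂P)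
      atTop (𝓝 0) ∧
    ∃ N : ℕ, ∀ n ≥ N,
      (∫ ω, ((∑' y : T, (n:ℝ)⁻¹ * ∑ i ∈ Finset.range n, K (y:ℝ) (H n) (X i ω)) - ∫ ω', (∑' y : T, (n:ℝ)⁻¹ * ∑ i ∈ Finset.range n, K (y:ℝ) (H n) (X i ω')) ∂P) ^ 2 ∂P) ≤ 3 / n := by
  classical
  haveI : Countable T := hTc.to_subtype
  -- pairwise separation within T
  have hTsep : ∀ a b : ℝ, a ∈ T → b ∈ T → a ≠ b → α ≤ |a - b| := by
    intro a b ha hb hab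
    exact hsep b hb a ⟨Or.inl ha, by simpa using hab⟩
  obtain ⟨N₁, hN₁⟩ := hA1E (α / 4) (by positivity)
  obtain ⟨N₂, hN₂⟩ := hA1V (α ^ 2 / 128) (by positivity)
  set N : ℕ := max (max N₁ N₂) 1 with hN
  have key : ∀ n ≥ N,
      (∫ ω, ((∑' y : T, (n:ℝ)⁻¹ * ∑ i ∈ Finset.range n, K (y:ℝ) (H n) (X i ω)) - ∫ ω', (∑' y : T, (n:ℝ)⁻¹ * ∑ i ∈ Finset.range n, K (y:ℝ) (H n) (X i ω')) ∂P) ^ 2 ∂P) ≤ 3 / n := by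
    intro n hn
    have hn1 : 1 ≤ n := le_trans (le_max_right _ _) hn
    have hh : 0 < H n := hH n
    have hE : ∀ x ∈ T, |EZ x (H n) - x| ≤ α / 4 :=
      hN₁ n (le_trans (le_trans (le_max_left _ _) (le_max_left _ _)) hn)
    have hV : ∀ x ∈ T, VZ x (H n) ≤ α ^ 2 / 128 :=
      hN₂ n (le_trans (le_trans (le_max_right _ _) (le_max_left _ _)) hn)
    -- Chebyshev-type bound for off-diagonal kernel values
    have hcheb : ∀ y ∈ T, ∀ s : ℝ, s ≠ y → s ∈ S y →
        K y (H n) s ≤ 4 * (α ^ 2 / 128) / (s - y) ^ 2 := by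
      intro y hy s hsy hsS
      have h1 : K y (H n) s * (s - EZ y (H n)) ^ 2 ≤ VZ y (H n) :=
        le_hasSum (hVZ y hy (H n) hh) s fun z _ => mul_nonneg (hK0 y hy (H n) hh z) (sq_nonneg _)
      have h2 : α ≤ |s - y| := hsep y hy s ⟨Or.inr hsS, by simpa using hsy⟩
      have h3 : |EZ y (H n) - y| ≤ α / 4 := hE y hy
      have h4 : |s - y| ≤ |s - EZ y (H n)| + |EZ y (H n) - y| := abs_sub_le s (EZ y (H n)) y
      have h5 : (3 / 4 * |s - y|) ^ 2 ≤ (s - EZ y (H n)) ^ 2 := by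
        rw [← sq_abs (s - EZ y (H n))]
        apply pow_le_pow_left₀ (by positivity) (by linarith) 2
      have h6 : 0 < |s - y| := lt_of_lt_of_le hα h2
      have h7 : (s - y) ^ 2 = |s - y| ^ 2 := (sq_abs _).symm
      have h8 : 0 < (s - y) ^ 2 := by rw [h7]; positivity
      rw [le_div_iff₀ h8]
      have h9 := hV y hy
      have h10 := hK0 y hy (H n) hh s
      nlinarith [mul_le_mul_of_nonneg_left h5 h10]
    -- the total mass function
    set g : ℝ → ℝ := fun s => ∑' y : T, K (y : ℝ) (H n) s with hg
    have hgkey : ∀ s : ℝ, Summable (fun y : T => K (y : ℝ) (H n) s) ∧ g s ≤ 2 := by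
      intro s
      set e : T → ℕ := fun y =>
        if s < (y:ℝ) then 2 * (⌊((y:ℝ) - s) / α⌋).toNat
        else 2 * (⌊(s - (y:ℝ)) / α⌋).toNat + 1 with he
      set c : ℕ → ℝ := fun k => 4 * (α ^ 2 / 128) / (α * ((k / 2 : ℕ) : ℝ)) ^ 2 with hc
      set ind : T → ℝ := fun y => if (y:ℝ) = s then 1 else 0 with hind
      have hc0 : ∀ k, 0 ≤ c k := fun k => by positivity
      -- comparison function bound
      have hcle : ∀ k : ℕ, c k ≤ 1 / 2 * (1 / (k : ℝ) ^ 2) := by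
        intro k
        rcases Nat.lt_or_ge k 2 with hk | hk
        · interval_cases k
          · simp [hc]
          · norm_num [hc]
        · have hknat : k ≤ 4 * (k / 2) := by omega
          have hm : (k : ℝ) ≤ 4 * ((k / 2 : ℕ) : ℝ) := by exact_mod_cast hknat
          have hk2 : (2 : ℝ) ≤ (k : ℝ) := by exact_mod_cast hk
          have hm0 : (0 : ℝ) < ((k / 2 : ℕ) : ℝ) := by linarith
          have hstep : c k ≤ 4 * (α ^ 2 / 128) / (α * ((k : ℝ) / 4)) ^ 2 := by
            apply div_le_div_of_nonneg_left (by positivity)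
              (by positivity) ?_
            apply pow_le_pow_left₀ (by positivity)
            apply mul_le_mul_of_nonneg_left (by linarith) hα.le
          refine le_trans hstep (le_of_eq ?_)
          field_simp
          ring
      have hcsum : Summable c :=
        Summable.of_nonneg_of_le hc0 hcle
          (((Real.summable_one_div_nat_pow (p := 2)).mpr one_lt_two).mul_left _)
      -- injectivity of the packing map
      have he_inj : Function.Injective e := by
        intro y y' hyy'
        by_contra hne
        have hdist : α ≤ |(y:ℝ) - (y':ℝ)| := hTsep y y' y.2 y'.2 (Subtype.coe_injective.ne hne)
        by_cases h1 : s < (y:ℝ) <;> by_cases h2 : s < (y':ℝ) <;>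
          simp only [he, h1, h2, if_true, if_false] at hyy'
        · have hnn1 : 0 ≤ ⌊((y:ℝ) - s) / α⌋ :=
            Int.floor_nonneg.2 (div_nonneg (by linarith) hα.le)
          have hnn2 : 0 ≤ ⌊((y':ℝ) - s) / α⌋ :=
            Int.floor_nonneg.2 (div_nonneg (by linarith) hα.le)
          have hfl : ⌊((y:ℝ) - s) / α⌋ = ⌊((y':ℝ) - s) / α⌋ := by omega
          have hclose := aux_floor_close hα hfl
          rw [sub_sub_sub_cancel_right] at hclose
          linarith
        · omega
        · omega
        · have hnn1 : 0 ≤ ⌊(s - (y:ℝ)) / α⌋ :=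
            Int.floor_nonneg.2 (div_nonneg (by linarith [not_lt.1 h1]) hα.le)
          have hnn2 : 0 ≤ ⌊(s - (y':ℝ)) / α⌋ :=
            Int.floor_nonneg.2 (div_nonneg (by linarith [not_lt.1 h2]) hα.le)
          have hfl : ⌊(s - (y:ℝ)) / α⌋ = ⌊(s - (y':ℝ)) / α⌋ := by omega
          have hclose := aux_floor_close hα hfl
          rw [sub_sub_sub_cancel_left, abs_sub_comm] at hclose
          linarith
      -- pointwise comparison
      have hbd : ∀ y : T, K (y:ℝ) (H n) s ≤ c (e y) + ind y := by
        intro y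
        by_cases hys : (y:ℝ) = s
        · have hK1' : K (y:ℝ) (H n) ((y:ℝ)) ≤ 1 :=
            le_hasSum (hK1 (y:ℝ) y.2 (H n) hh) (y:ℝ) fun z _ => hK0 (y:ℝ) y.2 (H n) hh z
          have hindy : ind y = 1 := if_pos hys
          rw [hindy, ← hys]
          linarith [hc0 (e y)]
        · have hind0 : ind y = 0 := if_neg hys
          rw [hind0, add_zero]
          by_cases hsS : s ∈ S (y:ℝ)
          · have hsy : s ≠ (y:ℝ) := fun hh' => hys hh'.symm
            have hd := hcheb (y:ℝ) y.2 s hsy hsS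
            have hsep' : α ≤ |s - (y:ℝ)| := hsep (y:ℝ) y.2 s ⟨Or.inr hsS, by simpa using hsy⟩
            have hkey : α * ((e y / 2 : ℕ) : ℝ) ≤ |s - (y:ℝ)| ∧ (1:ℝ) ≤ ((e y / 2 : ℕ) : ℝ) := by
              rcases lt_or_gt_of_ne hsy with hlt | hlt
              · -- s < y
                have habs : |s - (y:ℝ)| = (y:ℝ) - s := by
                  rw [abs_sub_comm]; exact abs_of_pos (by linarith)
                have hys' : α ≤ (y:ℝ) - s := by rw [habs] at hsep'; exact hsep'
                have hq : e y / 2 = (⌊((y:ℝ) - s) / α⌋).toNat := by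
                  simp only [he, if_pos hlt]; omega
                have hnn : 0 ≤ ⌊((y:ℝ) - s) / α⌋ :=
                  Int.floor_nonneg.2 (div_nonneg (by linarith) hα.le)
                have h1q : 1 ≤ ⌊((y:ℝ) - s) / α⌋ := by
                  rw [Int.le_floor]
                  push_cast
                  rw [le_div_iff₀ hα]; linarith
                have hcast : (((⌊((y:ℝ) - s) / α⌋).toNat : ℕ) : ℝ) = ((⌊((y:ℝ) - s) / α⌋ : ℤ) : ℝ) := by
                  exact_mod_cast Int.toNat_of_nonneg hnn
                constructor
                · rw [hq, hcast, habs]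
                  have hfl := Int.floor_le (((y:ℝ) - s) / α)
                  have := mul_le_mul_of_nonneg_right hfl hα.le
                  rw [div_mul_cancel₀ _ hα.ne'] at this
                  linarith [this]
                · rw [hq, hcast]
                  exact_mod_cast h1q
              · -- y < s
                have habs : |s - (y:ℝ)| = s - (y:ℝ) := abs_of_pos (by linarith)
                have hys' : α ≤ s - (y:ℝ) := by rw [habs] at hsep'; exact hsep'
                have hq : e y / 2 = (⌊(s - (y:ℝ)) / α⌋).toNat := by
                  simp only [he, if_neg (not_lt.2 (le_of_lt hlt))]; omega
                have hnn : 0 ≤ ⌊(s - (y:ℝ)) / α⌋ :=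
                  Int.floor_nonneg.2 (div_nonneg (by linarith) hα.le)
                have h1q : 1 ≤ ⌊(s - (y:ℝ)) / α⌋ := by
                  rw [Int.le_floor]
                  push_cast
                  rw [le_div_iff₀ hα]; linarith
                have hcast : (((⌊(s - (y:ℝ)) / α⌋).toNat : ℕ) : ℝ) = ((⌊(s - (y:ℝ)) / α⌋ : ℤ) : ℝ) := by
                  exact_mod_cast Int.toNat_of_nonneg hnn
                constructor
                · rw [hq, hcast, habs]
                  have hfl := Int.floor_le ((s - (y:ℝ)) / α)
                  have := mul_le_mul_of_nonneg_right hfl hα.le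
                  rw [div_mul_cancel₀ _ hα.ne'] at this
                  linarith [this]
                · rw [hq, hcast]
                  exact_mod_cast h1q
            obtain ⟨hkey1, hkey2⟩ := hkey
            refine le_trans hd ?_
            have hq0 : (0:ℝ) < α * ((e y / 2 : ℕ) : ℝ) := by nlinarith
            apply div_le_div_of_nonneg_left (by positivity) (by positivity) ?_
            rw [← sq_abs (s - (y:ℝ))]
            exact pow_le_pow_left₀ hq0.le hkey1 2
          · rw [hKS (y:ℝ) y.2 (H n) hh s hsS]
            exact hc0 _
      have hindsum : Summable ind := by
        by_cases hsT : s ∈ T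
        · exact summable_of_ne_finset_zero (s := {(⟨s, hsT⟩ : T)})
            (fun y hy => if_neg fun h => hy (Finset.mem_singleton.2 (Subtype.ext h)))
        · have hz : ind = fun _ => 0 := funext fun y => if_neg fun h => hsT (by rw [← h]; exact y.2)
          rw [hz]; exact summable_zero
      have hcesum : Summable fun y : T => c (e y) := hcsum.comp_injective he_inj
      have hRHSsum : Summable (fun y : T => c (e y) + ind y) := hcesum.add hindsum
      have hKsum : Summable (fun y : T => K (y:ℝ) (H n) s) :=
        Summable.of_nonneg_of_le (fun y => hK0 (y:ℝ) y.2 (H n) hh s) hbd hRHSsum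
      refine ⟨hKsum, ?_⟩
      have h1 : g s ≤ ∑' y : T, (c (e y) + ind y) := Summable.tsum_le_tsum hbd hKsum hRHSsum
      rw [Summable.tsum_add hcesum hindsum] at h1
      have h2 : ∑' y : T, c (e y) ≤ ∑' k, c k :=
        Summable.tsum_le_tsum_of_inj e he_inj (fun k _ => hc0 k) (fun y => le_rfl) hcesum hcsum
      have h3 : ∑' k, c k ≤ 1 := by
        calc ∑' k, c k ≤ ∑' k : ℕ, 1 / 2 * (1 / (k:ℝ) ^ 2) :=
              Summable.tsum_le_tsum hcle hcsum
                (((Real.summable_one_div_nat_pow (p := 2)).mpr one_lt_two).mul_left _)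
          _ = 1 / 2 * ∑' k : ℕ, (1 / (k:ℝ) ^ 2) := tsum_mul_left
          _ ≤ 1 / 2 * 2 := by linarith [aux_tsum_inv_sq_le]
          _ = 1 := by norm_num
      have h4 : ∑' y : T, ind y ≤ 1 := by
        by_cases hsT : s ∈ T
        · rw [tsum_eq_single (⟨s, hsT⟩ : T) (fun y hy => if_neg fun h => hy (Subtype.ext h))]
          simp [hind]
        · have hz : ind = fun _ => 0 := funext fun y => if_neg fun h => hsT (by rw [← h]; exact y.2)
          rw [hz]
          simp
      linarith
    have hg0 : ∀ s, 0 ≤ g s := fun s =>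
      tsum_nonneg fun y => hK0 y y.2 (H n) hh s
    have hgm : Measurable g := by
      have hrw : g = fun s => (∑' y : T, ENNReal.ofReal (K (y:ℝ) (H n) s)).toReal := by
        funext s
        rw [ENNReal.tsum_toReal_eq fun y => ENNReal.ofReal_ne_top]
        exact tsum_congr fun y => (ENNReal.toReal_ofReal (hK0 (y:ℝ) y.2 (H n) hh s)).symm
      rw [hrw]
      exact (Measurable.ennreal_tsum fun y : T => (hKm (y:ℝ) (H n)).ennreal_ofReal).ennreal_toReal
    -- rewrite the random variable
    set Y : ℕ → Ω → ℝ := fun i => g ∘ X i with hY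
    have hswap : ∀ ω : Ω,
        (∑' y : T, (n:ℝ)⁻¹ * ∑ i ∈ Finset.range n, K (y:ℝ) (H n) (X i ω))
          = ((n:ℝ)⁻¹ • ∑ i ∈ Finset.range n, Y i) ω := by
      intro ω
      rw [tsum_mul_left]
      simp only [Pi.smul_apply, Finset.sum_apply, smul_eq_mul]
      congr 1
      exact Summable.tsum_finsetSum fun i _ => (hgkey (X i ω)).1
    have hYmeas : ∀ i, Measurable (Y i) := fun i => hgm.comp (hXm i)
    have hYmem : ∀ i, MemLp (Y i) 2 P := fun i =>
      memLp_of_bounded (ae_of_all _ fun ω => Set.mem_Icc.2 ⟨hg0 _, (hgkey _).2⟩)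
        (hYmeas i).aestronglyMeasurable 2
    have hCmem : MemLp ((n:ℝ)⁻¹ • ∑ i ∈ Finset.range n, Y i) 2 P := by
      have := memLp_finsetSum' (Finset.range n) (fun i _ => hYmem i) (μ := P)
      simpa [Pi.smul_def, smul_eq_mul] using this.const_mul (n:ℝ)⁻¹
    have hexpr :
        (∫ ω, ((∑' y : T, (n:ℝ)⁻¹ * ∑ i ∈ Finset.range n, K (y:ℝ) (H n) (X i ω)) - ∫ ω', (∑' y : T, (n:ℝ)⁻¹ * ∑ i ∈ Finset.range n, K (y:ℝ) (H n) (X i ω')) ∂P) ^ 2 ∂P)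
          = variance ((n:ℝ)⁻¹ • ∑ i ∈ Finset.range n, Y i) P := by
      simp only [hswap]
      rw [variance_eq_integral hCmem.aemeasurable]
    rw [hexpr]
    have hvar : variance ((n:ℝ)⁻¹ • ∑ i ∈ Finset.range n, Y i) P ≤ (n:ℝ)⁻¹ := by
      rw [variance_smul]
      rw [IndepFun.variance_sum (fun i _ => hYmem i)
        (fun i _ j _ hij => (hXind.indepFun hij).comp hgm hgm)]
      have hvy : ∀ i ∈ Finset.range n, variance (Y i) P ≤ 1 := by
        intro i _
        have hb := variance_le_sq_of_bounded (μ := P) (a := 0) (b := 2)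
          (ae_of_all _ fun ω => Set.mem_Icc.2 ⟨hg0 _, (hgkey _).2⟩) (hYmeas i).aemeasurable
        norm_num at hb
        exact hb
      have hsum : ∑ i ∈ Finset.range n, variance (Y i) P ≤ (n : ℝ) := by
        calc ∑ i ∈ Finset.range n, variance (Y i) P ≤ ∑ _i ∈ Finset.range n, (1:ℝ) :=
              Finset.sum_le_sum hvy
          _ = (n : ℝ) := by simp
      have hn0 : (0:ℝ) < (n:ℝ) := by exact_mod_cast hn1
      have hvpos : ∀ i ∈ Finset.range n, (0:ℝ) ≤ variance (Y i) P :=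
        fun i _ => variance_nonneg _ _
      calc ((n:ℝ)⁻¹) ^ 2 * ∑ i ∈ Finset.range n, variance (Y i) P
          ≤ ((n:ℝ)⁻¹) ^ 2 * (n:ℝ) := by
            apply mul_le_mul_of_nonneg_left hsum (by positivity)
        _ = (n:ℝ)⁻¹ := by field_simp
    refine le_trans hvar ?_
    rw [inv_eq_one_div, div_le_div_iff₀ (by positivity) (by positivity)]
    have : (1:ℝ) ≤ (n:ℝ) := by exact_mod_cast hn1
    nlinarith
  constructor
  · apply squeeze_zero' (Eventually.of_forall fun n => integral_nonneg fun ω => sq_nonneg _)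
      (eventually_atTop.2 ⟨N, key⟩) (tendsto_const_div_atTop_nhds_zero_nat 3)
  · exact ⟨N, key⟩
end
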